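/- arXiv:1009.0479 — 12 statements merged into one kernel-verified Lean document; each statement's English description precedes it below -/
import Mathlib

section
/- Let f and g be elements of k[X_1,…,X_N]. Assume that g is a residual normal crossing relative to a totally ordered subset (J_1, ≤_1) of the variables, and that the evaluation f̄ of f at X_j = 0 for all X_j ∈ J_1 is a residual normal crossing relative to a totally ordered subset (J_2, ≤_2) of the variables. Then J_1 and J_2 are disjoint, and the product f·g is a residual normal crossing relative to the union J_1 ∪ J_2 equipped with the total order ≤_{1,2} defined by: X_a ≤_{1,2} X_b if and only if (X_a, X_b ∈ J_1 and X_a ≤_1 X_b), or (X_a, X_b ∈ J_2 and X_a ≤_2 X_b), or (X_a ∈ J_1 and X_b ∈ J_2). -/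
open MvPolynomial

/-- Evaluation of a multivariate polynomial at `X j = 0` (all other variables kept). -/
noncomputable def setZero {σ : Type*} [DecidableEq σ] {k : Type*} [Field k] (j : σ) :
    MvPolynomial σ k →ₐ[k] MvPolynomial σ k :=
  aeval (fun i => if i = j then 0 else X i)

/-- `IsRNC g J` : `g` is a residual normal crossing relative to the totally ordered
subset of variables given by the (nodup) list `J`, listed in increasing order. -/
def IsRNC {σ : Type*} [DecidableEq σ] {k : Type*} [Field k] :
    MvPolynomial σ k → List σ → Prop
  | g, [] => ∃ c : k, c ≠ 0 ∧ g = C c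
  | g, j :: J => ∃ h : MvPolynomial σ k, g = X j * h ∧ IsRNC (setZero j h) J

lemma isRNC_ne_zero {σ : Type*} [DecidableEq σ] {k : Type*} [Field k] :
    ∀ (J : List σ) (p : MvPolynomial σ k), IsRNC p J → p ≠ 0
  | [], p, ⟨c, hc, hp⟩ => by simp [hp, hc]
  | j :: J, p, ⟨h, hp, hr⟩ => by
    have hh : h ≠ 0 := fun h0 => isRNC_ne_zero J _ hr (by simp [h0])
    simp [hp, X_ne_zero, hh]

lemma isRNC_mul_C {σ : Type*} [DecidableEq σ] {k : Type*} [Field k] :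
    ∀ (J : List σ) (p : MvPolynomial σ k) (c : k), IsRNC p J → c ≠ 0 →
      IsRNC (p * C c) J
  | [], p, c, ⟨c', hc', hp⟩, hc =>
    ⟨c' * c, mul_ne_zero hc' hc, by simp [hp, map_mul]⟩
  | j :: J, p, c, ⟨h, hp, hr⟩, hc => by
    refine ⟨h * C c, by rw [hp]; ring, ?_⟩
    have : setZero j (h * C c) = setZero j h * C c := by
      rw [map_mul]; simp [AlgHom.commutes]
    rw [this]
    exact isRNC_mul_C J _ c hr hc

lemma setZero_comm {σ : Type*} [DecidableEq σ] {k : Type*} [Field k] (i j : σ)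
    (p : MvPolynomial σ k) :
    setZero i (setZero j p) = setZero j (setZero i p) := by
  have : (setZero (k := k) i).comp (setZero j) = (setZero j).comp (setZero i) := by
    apply algHom_ext
    intro a
    simp only [AlgHom.comp_apply, setZero, aeval_X]
    split_ifs <;> simp [*]
  exact AlgHom.congr_fun this p

lemma isRNC_not_setZero_fixed {σ : Type*} [DecidableEq σ] {k : Type*} [Field k] (j : σ) :
    ∀ (J : List σ) (p : MvPolynomial σ k), IsRNC p J → j ∈ J → setZero j p = p → False
  | i :: J, p, ⟨h, hp, hr⟩, hj, hfix => by
    rcases List.mem_cons.mp hj with rfl | hj'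
    · apply isRNC_ne_zero (j :: J) p (show IsRNC p (j :: J) from ⟨h, hp, hr⟩)
      rw [← hfix, hp, map_mul]
      simp [setZero]
    · by_cases hij : i = j
      · subst hij
        apply isRNC_ne_zero (i :: J) p (show IsRNC p (i :: J) from ⟨h, hp, hr⟩)
        rw [← hfix, hp, map_mul]
        simp [setZero]
      · have hh : setZero j h = h := by
          have : X i * setZero j h = X i * h := by
            have := hfix
            rw [hp, map_mul] at this
            simpa [setZero, hij] using this
          exact mul_left_cancel₀ (X_ne_zero i) this
        apply isRNC_not_setZero_fixed j J (setZero i h) hr hj'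
        rw [setZero_comm, hh]

theorem stmt0 {σ : Type*} [DecidableEq σ] {k : Type*} [Field k]
    (f g : MvPolynomial σ k) (J1 J2 : List σ) (hJ1 : J1.Nodup) (hJ2 : J2.Nodup)
    (hg : IsRNC g J1)
    (hf : IsRNC (aeval (fun i => if i ∈ J1 then (0 : MvPolynomial σ k) else X i) f) J2) :
    J1.Disjoint J2 ∧ IsRNC (f * g) (J1 ++ J2) := by
  induction J1 generalizing f g with
  | nil =>
    obtain ⟨c, hc, hgc⟩ := hg
    have hff : (aeval (fun i => if i ∈ ([] : List σ) then (0 : MvPolynomial σ k) else X i)) f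
        = f := by
      simp only [List.not_mem_nil, if_false]
      exact aeval_X_left_apply f
    rw [hff] at hf
    exact ⟨by simp [List.Disjoint], by simpa [hgc] using isRNC_mul_C J2 f c hf hc⟩
  | cons j J1' IH =>
    obtain ⟨h, hgh, hr⟩ := hg
    have hj : j ∉ J1' := (List.nodup_cons.mp hJ1).1
    have hN : J1'.Nodup := (List.nodup_cons.mp hJ1).2
    -- rewrite the evaluation of f
    have hcomp : (aeval (fun i => if i ∈ J1' then (0 : MvPolynomial σ k) else X i)).comp
        (setZero (k := k) j)
        = aeval (fun i => if i ∈ j :: J1' then (0 : MvPolynomial σ k) else X i) := by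
      apply algHom_ext
      intro a
      simp only [AlgHom.comp_apply, setZero, aeval_X, List.mem_cons]
      split_ifs <;> simp_all [aeval_X]
    have hfeval : aeval (fun i => if i ∈ J1' then (0 : MvPolynomial σ k) else X i)
        (setZero j f)
        = aeval (fun i => if i ∈ j :: J1' then (0 : MvPolynomial σ k) else X i) f :=
      AlgHom.congr_fun hcomp f
    have hf' : IsRNC (aeval (fun i => if i ∈ J1' then (0 : MvPolynomial σ k) else X i)
        (setZero j f)) J2 := by rw [hfeval]; exact hf
    obtain ⟨hdisj', hrnc'⟩ := IH (setZero j f) (setZero j h) hN hr hf'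
    -- j ∉ J2
    have hjJ2 : j ∉ J2 := by
      intro hj2
      apply isRNC_not_setZero_fixed j J2 _ hf hj2
      have : (setZero (k := k) j).comp
          (aeval (fun i => if i ∈ j :: J1' then (0 : MvPolynomial σ k) else X i))
          = aeval (fun i => if i ∈ j :: J1' then (0 : MvPolynomial σ k) else X i) := by
        apply algHom_ext
        intro a
        simp only [AlgHom.comp_apply, aeval_X]
        split_ifs with ha
        · simp
        · have : a ≠ j := fun h => ha (h ▸ (List.mem_cons_self : j ∈ j :: J1'))
          simp [setZero, this]
      exact AlgHom.congr_fun this f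
    constructor
    · intro a ha hb
      rcases List.mem_cons.mp ha with rfl | ha'
      · exact hjJ2 hb
      · exact hdisj' ha' hb
    · refine ⟨f * h, by rw [hgh]; ring, ?_⟩
      rw [map_mul]
      exact hrnc'
end

section
/- Let g ∈ k[X_1,…,X_N] be a residual normal crossing relative to a totally ordered subset (J_1, ≤) of the variables. Assume X_j ∉ J_1, let f ∈ k[X_1,…,X_N], and let h = g(X_1,…,X_{j−1}, f, X_{j+1},…,X_N) denote the polynomial obtained from g by substituting f for the variable X_j. Then h is also a residual normal crossing relative to (J_1, ≤). -/
open MvPolynomial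

theorem stmt1 {σ : Type*} [DecidableEq σ] {k : Type*} [Field k]
    (g f : MvPolynomial σ k) (J1 : List σ) (hJ1 : J1.Nodup)
    (j : σ) (hj : j ∉ J1) (hg : IsRNC g J1) :
    IsRNC (aeval (fun i => if i = j then f else X i) g) J1 := by
  induction J1 generalizing g f with
  | nil =>
    obtain ⟨c, hc, rfl⟩ := hg
    exact ⟨c, hc, by simp⟩
  | cons i J ih =>
    obtain ⟨h, rfl, hh⟩ := hg
    have hji : j ≠ i := fun e => hj (e ▸ List.mem_cons_self (a := i) (l := J))
    refine ⟨aeval (fun m => if m = j then f else X m) h, by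
      simp [map_mul, if_neg (Ne.symm hji)], ?_⟩
    have key : setZero i (aeval (fun m => if m = j then f else X m) h)
        = aeval (fun m => if m = j then setZero i f else X m) (setZero i h) := by
      rw [show setZero i (aeval (fun m => if m = j then f else X m) h)
          = ((setZero i).comp (aeval (fun m => if m = j then f else X m))) h from rfl,
        show aeval (fun m => if m = j then setZero i f else X m) (setZero i h)
          = ((aeval (fun m => if m = j then setZero i f else X m)).comp (setZero i)) h from rfl]
      congr 1
      apply MvPolynomial.algHom_ext
      intro m
      simp only [AlgHom.comp_apply, aeval_X, setZero]
      by_cases hmj : m = j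
      · subst hmj
        simp [if_neg hji]
      · by_cases hmi : m = i <;> simp [hmj, hmi, if_neg (Ne.symm hji)]
    rw [key]
    exact ih (setZero i h) (setZero i f) (List.nodup_cons.mp hJ1).2
      (fun hm => hj (List.mem_cons_of_mem _ hm)) hh
end

section
/- Let g ∈ k[X_1,…,X_N] be a residual normal crossing relative to a totally ordered subset (J_1, ≤) of the variables, and let d be a positive integer. Then the monomial ∏_{X_j ∈ J_1} X_j^d appears with nonzero coefficient in g^d. -/
open MvPolynomial

lemma coeff_setZero {σ : Type*} [DecidableEq σ] {k : Type*} [Field k] (j : σ)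
    (f : MvPolynomial σ k) :
    ∀ m : σ →₀ ℕ, m j = 0 → MvPolynomial.coeff m (setZero j f) = MvPolynomial.coeff m f := by
  induction f using MvPolynomial.induction_on with
  | C a =>
    intro m hm
    simp [setZero]
  | add p q hp hq =>
    intro m hm
    simp only [map_add, MvPolynomial.coeff_add, hp m hm, hq m hm]
  | mul_X p i hp =>
    intro m hm
    rw [map_mul]
    have hx : setZero (k := k) j (MvPolynomial.X i) = if i = j then 0 else MvPolynomial.X i :=
      by simp [setZero]
    rw [hx]
    by_cases hij : i = j
    · subst hij
      simp only [if_pos rfl, mul_zero]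
      rw [MvPolynomial.coeff_mul_X']
      simp only [Finsupp.mem_support_iff, hm, ne_eq, not_true_eq_false, if_neg,
        not_not, MvPolynomial.coeff_zero]
      simp [hm]
    · rw [if_neg hij]
      rw [MvPolynomial.coeff_mul_X', MvPolynomial.coeff_mul_X']
      by_cases hmem : i ∈ m.support
      · rw [if_pos hmem, if_pos hmem, hp]
        simp [Finsupp.single_apply, Ne.symm hij, hm]
      · rw [if_neg hmem, if_neg hmem]

theorem stmt2 {σ : Type*} [DecidableEq σ] {k : Type*} [Field k]
    (g : MvPolynomial σ k) (J1 : List σ) (hJ1 : J1.Nodup)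
    (hg : IsRNC g J1) (d : ℕ) (hd : 0 < d) :
    MvPolynomial.coeff (∑ j ∈ J1.toFinset, Finsupp.single j d) (g ^ d) ≠ 0 := by
  induction J1 generalizing g with
  | nil =>
    obtain ⟨c, hc, rfl⟩ := hg
    simp only [List.toFinset_nil, Finset.sum_empty, ← map_pow, MvPolynomial.coeff_C]
    simpa using pow_ne_zero d hc
  | cons j J ih =>
    obtain ⟨h, rfl, hrnc⟩ := hg
    have hj : j ∉ J := (List.nodup_cons.mp hJ1).1
    have hJ : J.Nodup := (List.nodup_cons.mp hJ1).2
    rw [List.toFinset_cons, Finset.sum_insert (by simpa using hj)]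
    rw [mul_pow]
    have hXd : (MvPolynomial.X j : MvPolynomial σ k) ^ d
        = MvPolynomial.monomial (Finsupp.single j d) 1 := by
      simp [MvPolynomial.X_pow_eq_monomial]
    rw [hXd, MvPolynomial.coeff_monomial_mul, one_mul]
    set m : σ →₀ ℕ := ∑ i ∈ J.toFinset, Finsupp.single i d with hm
    have hmj : m j = 0 := by
      rw [hm]
      rw [Finsupp.finset_sum_apply]
      refine Finset.sum_eq_zero fun i hi => ?_
      rw [Finsupp.single_apply, if_neg]
      rintro rfl
      exact hj (List.mem_toFinset.mp hi)
    rw [← coeff_setZero j _ m hmj, map_pow]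
    exact ih _ hJ hrnc
end

section
/- For each 1 ≤ r ≤ n, the polynomial 𝔣_r is a residual normal crossing relative to the subset {Z_{i,j} : 1 ≤ j < i ≤ n, i + j ≤ r + 1} of the variables, equipped with the order: Z_{i,j} ≤ Z_{i',j'} iff i+j < i'+j', or i+j = i'+j' and i ≤ i'. -/
open MvPolynomial

/-- The `(i,j)` entry (1-based indices) of the generic lower unitriangular matrix `Z`,
as a polynomial in the variables `Z_{i,j}`, `j < i` (indexed by the pair `(i,j)`). -/
noncomputable def Zent (k : Type*) [Field k] (i j : ℕ) : MvPolynomial (ℕ × ℕ) k :=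
  if i = j then 1 else if j < i then X (i, j) else 0

/-- The minor `v_a` of the generic lower unitriangular matrix with rows the (1-based)
sequence `a` and columns `1, …, s`. -/
noncomputable def vminor (k : Type*) [Field k] {s : ℕ} (a : Fin s → ℕ) :
    MvPolynomial (ℕ × ℕ) k :=
  (Matrix.of fun p q : Fin s => Zent k (a p) ((q : ℕ) + 1)).det

/-- The polynomial `𝔣_r = ∏_{s=1}^{r} v_{(⌊s/2⌋+1, …, s)}`. -/
noncomputable def fRNC (k : Type*) [Field k] (r : ℕ) : MvPolynomial (ℕ × ℕ) k :=
  ∏ s ∈ Finset.Icc 1 r, vminor k (fun p : Fin (s - s / 2) => s / 2 + 1 + (p : ℕ))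

/-- The polynomial `𝔤_r = σ(𝔣_r)`, where `σ` is the variable substitution
`Z_{i,j} ↦ Z_{n+1-j, n+1-i}`. -/
noncomputable def gRNC (k : Type*) [Field k] (n r : ℕ) : MvPolynomial (ℕ × ℕ) k :=
  rename (fun p : ℕ × ℕ => (n + 1 - p.2, n + 1 - p.1)) (fRNC k r)

/-- The (strict part of the) order on the variables `Z_{i,j}` :
`Z_{i,j} < Z_{i',j'}` iff `i+j < i'+j'`, or `i+j = i'+j'` and `i < i'`. -/
def zord : ℕ × ℕ → ℕ × ℕ → Prop :=
  fun p q => p.1 + p.2 < q.1 + q.2 ∨ (p.1 + p.2 = q.1 + q.2 ∧ p.1 < q.1)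

/-! ### Auxiliary definitions -/

/-- The algebra map killing all variables `Z_{i,j}` with `i + j ≤ t`. -/
noncomputable def Phi (k : Type*) [Field k] (t : ℕ) :
    MvPolynomial (ℕ × ℕ) k →ₐ[k] MvPolynomial (ℕ × ℕ) k :=
  aeval (fun p : ℕ × ℕ => if p.1 + p.2 ≤ t then 0 else X p)

/-- The list of variables on the antidiagonal `i + j = t` with `j < i`, by increasing `i`. -/
def Adiag (t : ℕ) : List (ℕ × ℕ) :=
  (List.range (t - 1 - t / 2)).map fun d => (t / 2 + 1 + d, t - (t / 2 + 1 + d))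

/-- The tail of the variable list: antidiagonals `t+1, …, r+1`. -/
def LLst (r t : ℕ) : List (ℕ × ℕ) :=
  ((List.range (r + 1 - t)).map fun u => Adiag (t + 1 + u)).flatten

/-- Successively evaluate at `X p = 0` for all `p` in a list. -/
noncomputable def szAll {σ : Type*} [DecidableEq σ] {k : Type*} [Field k] (M : List σ) :
    MvPolynomial σ k →ₐ[k] MvPolynomial σ k :=
  M.foldr (fun p f => f.comp (setZero p)) (AlgHom.id k _)

lemma szAll_cons {σ : Type*} [DecidableEq σ] {k : Type*} [Field k] (p : σ) (M : List σ)
    (x : MvPolynomial σ k) : szAll (p :: M) x = szAll M (setZero p x) := rfl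

lemma setZero_X {σ : Type*} [DecidableEq σ] {k : Type*} [Field k] (j q : σ) :
    setZero (k := k) j (X q) = if q = j then 0 else X q := by
  simp [setZero]

lemma szAll_X {σ : Type*} [DecidableEq σ] {k : Type*} [Field k] (M : List σ) (q : σ) :
    szAll (k := k) M (X q) = if q ∈ M then 0 else X q := by
  induction M with
  | nil => simp [szAll]
  | cons p M ih =>
    rw [szAll_cons, setZero_X]
    by_cases h : q = p
    · subst h; simp
    · rw [if_neg h, ih]
      simp [List.mem_cons, h]

lemma Phi_X {k : Type*} [Field k] (t : ℕ) (p : ℕ × ℕ) :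
    Phi k t (X p) = if p.1 + p.2 ≤ t then 0 else X p := by
  simp [Phi]

lemma Phi_X' {k : Type*} [Field k] (t i j : ℕ) :
    Phi k t (X (i, j)) = if i + j ≤ t then 0 else X (i, j) := by
  simp [Phi]

/-! ### List lemmas -/

lemma mem_Adiag (t : ℕ) (p : ℕ × ℕ) :
    p ∈ Adiag t ↔ 1 ≤ p.2 ∧ p.2 < p.1 ∧ p.1 + p.2 = t := by
  obtain ⟨a, b⟩ := p
  simp only [Adiag, List.mem_map, List.mem_range, Prod.mk.injEq]
  constructor
  · rintro ⟨d, hd, rfl, rfl⟩; omega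
  · rintro ⟨h1, h2, h3⟩
    exact ⟨a - (t / 2 + 1), by omega, by omega, by omega⟩

lemma nodup_Adiag (t : ℕ) : (Adiag t).Nodup := by
  refine List.Nodup.map ?_ List.nodup_range
  intro d₁ d₂ h
  have := congrArg Prod.fst h
  simp only at this
  omega

lemma pairwise_Adiag (t : ℕ) : (Adiag t).Pairwise zord := by
  refine List.Pairwise.map _ (fun a b hab => ?_) List.pairwise_lt_range
  simp only [zord]
  omega

lemma mem_LLst (r t : ℕ) (p : ℕ × ℕ) :
    p ∈ LLst r t ↔ 1 ≤ p.2 ∧ p.2 < p.1 ∧ t + 1 ≤ p.1 + p.2 ∧ p.1 + p.2 ≤ r + 1 := by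
  simp only [LLst, List.mem_flatten, List.mem_map]
  constructor
  · rintro ⟨L, ⟨u, hu, rfl⟩, hp⟩
    rw [mem_Adiag] at hp
    simp only [List.mem_range] at hu
    omega
  · rintro ⟨h1, h2, h3, h4⟩
    refine ⟨Adiag (p.1 + p.2), ⟨p.1 + p.2 - (t + 1), ?_, ?_⟩, (mem_Adiag _ _).2 ⟨h1, h2, rfl⟩⟩
    · simp only [List.mem_range]; omega
    · congr 1; omega

lemma pairwise_LLst (r t : ℕ) : (LLst r t).Pairwise zord := by
  rw [LLst, List.pairwise_flatten]
  constructor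
  · intro L hL
    obtain ⟨u, -, rfl⟩ := List.mem_map.1 hL
    exact pairwise_Adiag _
  · refine List.Pairwise.map _ (fun a b hab => ?_) List.pairwise_lt_range
    intro x hx y hy
    rw [mem_Adiag] at hx hy
    simp only [zord]
    omega

lemma LLst_succ (r t : ℕ) (h : t ≤ r) : LLst r t = Adiag (t + 1) ++ LLst r (t + 1) := by
  have h1 : r + 1 - t = (r - t) + 1 := by omega
  have h2 : r + 1 - (t + 1) = r - t := by omega
  rw [LLst, LLst, h1, h2, List.range_succ_eq_map, List.map_cons, List.map_map,
    List.flatten_cons]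
  refine congrArg₂ (· ++ ·) rfl (congrArg List.flatten (List.map_congr_left fun u _ => ?_))
  simp only [Function.comp_apply]
  congr 1
  omega

/-! ### Pushing algebra maps through the minors -/

lemma algHom_vminor {k : Type*} [Field k]
    (φ : MvPolynomial (ℕ × ℕ) k →ₐ[k] MvPolynomial (ℕ × ℕ) k) {s : ℕ} (a : Fin s → ℕ) :
    φ (vminor k a) = (Matrix.of fun p q : Fin s => φ (Zent k (a p) ((q : ℕ) + 1))).det := by
  rw [vminor, AlgHom.map_det]
  rfl

lemma Phi_zent_le_two {k : Type*} [Field k] (i j : ℕ) (hj : 1 ≤ j) :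
    Phi k 2 (Zent k i j) = Zent k i j := by
  unfold Zent
  split_ifs with h1 h2
  · exact map_one _
  · rw [Phi_X', if_neg (by omega)]
  · exact map_zero _

lemma phi2_vminor {k : Type*} [Field k] (s : ℕ) :
    Phi k 2 (vminor k fun p : Fin (s - s / 2) => s / 2 + 1 + (p : ℕ))
      = vminor k fun p : Fin (s - s / 2) => s / 2 + 1 + (p : ℕ) := by
  rw [algHom_vminor, vminor]
  congr 1
  refine Matrix.ext fun p q => ?_
  simp only [Matrix.of_apply]
  exact Phi_zent_le_two (k := k) _ ((q : ℕ) + 1) (Nat.le_add_left 1 _)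

lemma szAll_phi_zent {k : Type*} [Field k] (t i j : ℕ) (hj : 1 ≤ j) :
    szAll (Adiag (t + 1)) (Phi k t (Zent k i j)) = Phi k (t + 1) (Zent k i j) := by
  unfold Zent
  split_ifs with h1 h2
  · rw [map_one, map_one, map_one]
  · rw [Phi_X', Phi_X']
    by_cases hle : i + j ≤ t
    · rw [if_pos hle, if_pos (by omega), map_zero]
    · rw [if_neg hle, szAll_X]
      by_cases heq : i + j = t + 1
      · rw [if_pos ((mem_Adiag _ _).2 ⟨hj, h2, heq⟩), if_pos (by omega)]
      · rw [if_neg (fun hmem => by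
            have := (mem_Adiag _ _).1 hmem
            simp only at this
            omega), if_neg (by omega)]
  · rw [map_zero, map_zero, map_zero]

lemma lemD {k : Type*} [Field k] (t s : ℕ) :
    szAll (Adiag (t + 1))
        (Phi k t (vminor k fun p : Fin (s - s / 2) => s / 2 + 1 + (p : ℕ)))
      = Phi k (t + 1) (vminor k fun p : Fin (s - s / 2) => s / 2 + 1 + (p : ℕ)) := by
  rw [algHom_vminor, AlgHom.map_det, algHom_vminor]
  congr 1
  refine Matrix.ext fun p q => ?_
  simp only [AlgHom.mapMatrix_apply, Matrix.map_apply, Matrix.of_apply]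
  exact szAll_phi_zent (k := k) t _ ((q : ℕ) + 1) (Nat.le_add_left 1 _)

/-! ### Products over ranges -/

lemma listprod_range_map {M : Type*} [CommMonoid M] (f : ℕ → M) (n : ℕ) :
    ((List.range n).map f).prod = ∏ i ∈ Finset.range n, f i := by
  induction n with
  | zero => simp
  | succ n ih =>
    rw [List.range_succ, List.map_append, List.prod_append, Finset.prod_range_succ, ih]
    simp

/-! ### The key determinant computation -/

lemma lemA {k : Type*} [Field k] (t : ℕ) :
    ∃ c : k, c ≠ 0 ∧
      Phi k t (vminor k fun p : Fin (t - t / 2) => t / 2 + 1 + (p : ℕ))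
        = C c * ((Adiag (t + 1)).map X).prod := by
  set m := t - t / 2 with hm
  set Bu : Matrix (Fin m) (Fin m) (MvPolynomial (ℕ × ℕ) k) :=
    Matrix.of fun p q : Fin m =>
      Phi k t (Zent k (t / 2 + 1 + (m - 1 - (p : ℕ))) ((q : ℕ) + 1)) with hBu
  -- Step 1 : the evaluated minor is the row-reversal of `Bu`
  have hsub : (Matrix.of fun p q : Fin m =>
      Phi k t (Zent k (t / 2 + 1 + (p : ℕ)) ((q : ℕ) + 1))) = Bu.submatrix Fin.revPerm id := by
    ext p q
    have hp := p.isLt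
    simp only [Matrix.submatrix_apply, Matrix.of_apply, id_eq, Fin.revPerm_apply, Fin.val_rev,
      hBu]
    congr 3
    omega
  -- Step 2 : `Bu` is upper triangular
  have htri : Bu.BlockTriangular id := by
    intro p q hlt
    have hp := p.isLt
    have hq := q.isLt
    have hlt' : (q : ℕ) < (p : ℕ) := hlt
    simp only [hBu, Matrix.of_apply]
    rw [show Zent k (t / 2 + 1 + (m - 1 - (p : ℕ))) ((q : ℕ) + 1)
        = X (t / 2 + 1 + (m - 1 - (p : ℕ)), (q : ℕ) + 1) from by
      unfold Zent; rw [if_neg (by omega), if_pos (by omega)]]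
    rw [Phi_X', if_pos (by omega)]
  have hdiag : Bu.det = ∏ p : Fin m, Bu p p := Matrix.det_of_upperTriangular htri
  -- Step 3 : the diagonal product is the antidiagonal monomial
  have hprod : ∏ p : Fin m, Bu p p = ((Adiag (t + 1)).map X).prod := by
    have hL : ((Adiag (t + 1)).map X).prod
        = ∏ d ∈ Finset.range (t + 1 - 1 - (t + 1) / 2),
            (X ((t + 1) / 2 + 1 + d, t + 1 - ((t + 1) / 2 + 1 + d)) :
              MvPolynomial (ℕ × ℕ) k) := by
      rw [Adiag, List.map_map, listprod_range_map]
      exact Finset.prod_congr rfl fun d _ => rfl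
    rw [hL]
    have hFin : ∏ p : Fin m, Bu p p
        = ∏ a ∈ Finset.range m,
            Phi k t (Zent k (t / 2 + 1 + (m - 1 - a)) (a + 1)) := by
      rw [← Fin.prod_univ_eq_prod_range (fun a => Phi k t (Zent k (t / 2 + 1 + (m - 1 - a)) (a + 1))) m]
      exact Finset.prod_congr rfl fun p _ => rfl
    rw [hFin]
    rcases Nat.even_or_odd t with ⟨w, hw⟩ | ⟨w, hw⟩
    · -- t = w + w
      rw [show m = w by omega, show t + 1 - 1 - (t + 1) / 2 = w by omega]
      conv_rhs => rw [← Finset.prod_range_reflect]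
      refine Finset.prod_congr rfl fun i hi => ?_
      rw [Finset.mem_range] at hi
      rw [show Zent k (t / 2 + 1 + (w - 1 - i)) (i + 1)
          = X (t / 2 + 1 + (w - 1 - i), i + 1) from by
        unfold Zent; rw [if_neg (by omega), if_pos (by omega)]]
      rw [Phi_X', if_neg (by omega)]
      congr 1
      simp only [Prod.mk.injEq]
      omega
    · -- t = 2 * w + 1
      rw [show m = w + 1 by omega, show t + 1 - 1 - (t + 1) / 2 = w by omega,
        Finset.prod_range_succ]
      rw [show Zent k (t / 2 + 1 + (w + 1 - 1 - w)) (w + 1) = 1 from by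
        unfold Zent; rw [if_pos (by omega)]]
      rw [map_one, mul_one]
      conv_rhs => rw [← Finset.prod_range_reflect]
      refine Finset.prod_congr rfl fun i hi => ?_
      rw [Finset.mem_range] at hi
      rw [show Zent k (t / 2 + 1 + (w + 1 - 1 - i)) (i + 1)
          = X (t / 2 + 1 + (w + 1 - 1 - i), i + 1) from by
        unfold Zent; rw [if_neg (by omega), if_pos (by omega)]]
      rw [Phi_X', if_neg (by omega)]
      congr 1
      simp only [Prod.mk.injEq]
      omega
  -- Step 4 : assemble, dealing with the sign
  rcases Int.units_eq_one_or (Equiv.Perm.sign (Fin.revPerm : Equiv.Perm (Fin m))) with h1 | h1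
  · refine ⟨1, one_ne_zero, ?_⟩
    rw [algHom_vminor, hsub, Matrix.det_permute, hdiag, hprod, h1]
    simp
  · refine ⟨-1, neg_ne_zero.mpr one_ne_zero, ?_⟩
    rw [algHom_vminor, hsub, Matrix.det_permute, hdiag, hprod, h1]
    simp

/-! ### Peeling a monomial -/

lemma lemC {σ : Type*} [DecidableEq σ] {k : Type*} [Field k] :
    ∀ (M : List σ) (Q : MvPolynomial σ k) (L : List σ), M.Nodup →
      IsRNC (szAll M Q) L → IsRNC ((M.map X).prod * Q) (M ++ L) := by
  intro M
  induction M with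
  | nil =>
    intro Q L _ h
    rw [List.map_nil, List.prod_nil, one_mul, List.nil_append]
    exact h
  | cons p M ih =>
    intro Q L hnd h
    refine ⟨(M.map X).prod * Q, by rw [List.map_cons, List.prod_cons, mul_assoc], ?_⟩
    have hmap : (M.map X).map (setZero (k := k) p) = M.map X := by
      rw [List.map_map]
      refine List.map_congr_left fun q hq => ?_
      simp only [Function.comp_apply, setZero_X]
      rw [if_neg]
      rintro rfl
      exact (List.nodup_cons.1 hnd).1 hq
    rw [map_mul, map_list_prod, hmap]
    exact ih (setZero p Q) L (List.nodup_cons.1 hnd).2 h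

/-! ### The main induction -/

lemma mainRNC {k : Type*} [Field k] (r : ℕ) :
    ∀ d t : ℕ, t + d = r + 1 → 2 ≤ t → ∀ c : k, c ≠ 0 →
      IsRNC (C c * ∏ s ∈ Finset.Icc t r,
          Phi k t (vminor k fun p : Fin (s - s / 2) => s / 2 + 1 + (p : ℕ))) (LLst r t) := by
  intro d
  induction d with
  | zero =>
    intro t ht _ c hc
    have h1 : Finset.Icc t r = ∅ := Finset.Icc_eq_empty (by omega)
    have h2 : LLst r t = [] := by
      rw [LLst, show r + 1 - t = 0 by omega]
      rfl
    rw [h1, h2, Finset.prod_empty, mul_one]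
    exact ⟨c, hc, rfl⟩
  | succ d ih =>
    intro t ht h2t c hc
    have htr : t ≤ r := by omega
    obtain ⟨ε, hε, hA⟩ := lemA (k := k) t
    rw [LLst_succ r t htr, ← Finset.Ico_add_one_right_eq_Icc,
        Finset.prod_eq_prod_Ico_succ_bot (by omega : t < r + 1), hA]
    have hrw : C c * (C ε * ((Adiag (t + 1)).map X).prod *
          ∏ s ∈ Finset.Ico (t + 1) (r + 1),
            Phi k t (vminor k fun p : Fin (s - s / 2) => s / 2 + 1 + (p : ℕ)))
        = ((Adiag (t + 1)).map X).prod * (C (c * ε) *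
          ∏ s ∈ Finset.Ico (t + 1) (r + 1),
            Phi k t (vminor k fun p : Fin (s - s / 2) => s / 2 + 1 + (p : ℕ))) := by
      rw [map_mul]; ring
    rw [hrw]
    apply lemC _ _ _ (nodup_Adiag _)
    rw [map_mul]
    have hC : szAll (Adiag (t + 1)) (C (c * ε) : MvPolynomial (ℕ × ℕ) k) = C (c * ε) := by
      have h := (szAll (k := k) (Adiag (t + 1))).commutes (c * ε)
      simpa [algebraMap_eq] using h
    rw [hC, map_prod]
    rw [Finset.prod_congr rfl fun s _ => lemD (k := k) t s, Finset.Ico_add_one_right_eq_Icc]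
    exact ih (t + 1) (by omega) (by omega) (c * ε) (mul_ne_zero hc hε)

lemma vminor_one {k : Type*} [Field k] :
    vminor k (fun p : Fin (1 - 1 / 2) => 1 / 2 + 1 + (p : ℕ)) = 1 := by
  have h : (1 : ℕ) - 1 / 2 = 1 := rfl
  rw [vminor, Matrix.det_fin_one]
  show Zent k (1 / 2 + 1 + ((0 : Fin 1) : ℕ)) (((0 : Fin 1) : ℕ) + 1) = 1
  norm_num [Zent]

theorem stmt3 (k : Type*) [Field k] (n r : ℕ) (hr1 : 1 ≤ r) (hrn : r ≤ n)
    (l : List (ℕ × ℕ))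
    (hmem : ∀ p : ℕ × ℕ, p ∈ l ↔ 1 ≤ p.2 ∧ p.2 < p.1 ∧ p.1 ≤ n ∧ p.1 + p.2 ≤ r + 1)
    (hsort : l.Pairwise zord) :
    IsRNC (fRNC k r) l := by
  haveI : IsAntisymm (ℕ × ℕ) zord :=
    ⟨fun a b h1 h2 => by exfalso; simp only [zord] at h1 h2; omega⟩
  have hne : ∀ {a b : ℕ × ℕ}, zord a b → a ≠ b := by
    intro a b h hab
    subst hab
    simp only [zord] at h
    omega
  have nd1 : l.Nodup := hsort.imp fun h => hne h
  have nd2 : (LLst r 2).Nodup := (pairwise_LLst r 2).imp fun h => hne h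
  have hpm : List.Perm l (LLst r 2) := by
    rw [List.perm_ext_iff_of_nodup nd1 nd2]
    intro p
    rw [hmem p, mem_LLst]
    omega
  have hl : l = LLst r 2 := List.Perm.eq_of_pairwise (fun a b _ _ h1 h2 => by exfalso; simp only [zord] at h1 h2; omega) hsort (pairwise_LLst r 2) hpm
  have hf : fRNC k r = C (1 : k) * ∏ s ∈ Finset.Icc 2 r,
      Phi k 2 (vminor k fun p : Fin (s - s / 2) => s / 2 + 1 + (p : ℕ)) := by
    rw [C_1, one_mul, fRNC, ← Finset.Ico_add_one_right_eq_Icc,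
      Finset.prod_eq_prod_Ico_succ_bot (by omega : 1 < r + 1), vminor_one, one_mul,
      Finset.Ico_add_one_right_eq_Icc]
    exact Finset.prod_congr rfl fun s _ => (phi2_vminor s).symm
  rw [hl, hf]
  exact mainRNC r (r - 1) 2 (by omega) (by omega) 1 one_ne_zero
end

section
/- For 1 ≤ r ≤ n, the evaluation of the minor v_{(⌊r/2⌋+1, ⌊r/2⌋+2, …, r)} at Z_{i,j} = 0 for all pairs (i,j) with 1 ≤ j < i ≤ n and i + j ≤ r equals, up to sign, the monomial ∏_{1 ≤ j < i ≤ n, i+j = r+1} Z_{i,j}. -/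
open MvPolynomial

theorem stmt4 (k : Type*) [Field k] (n r : ℕ) (hr1 : 1 ≤ r) (hrn : r ≤ n) :
    (aeval (fun p : ℕ × ℕ =>
        if 1 ≤ p.2 ∧ p.2 < p.1 ∧ p.1 ≤ n ∧ p.1 + p.2 ≤ r then (0 : MvPolynomial (ℕ × ℕ) k)
        else X p))
      (vminor k (fun p : Fin (r - r / 2) => r / 2 + 1 + (p : ℕ))) =
        ∏ p ∈ (Finset.range (n + 1) ×ˢ Finset.range (n + 1)).filter
          (fun p => 1 ≤ p.2 ∧ p.2 < p.1 ∧ p.1 ≤ n ∧ p.1 + p.2 = r + 1), X p ∨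
    (aeval (fun p : ℕ × ℕ =>
        if 1 ≤ p.2 ∧ p.2 < p.1 ∧ p.1 ≤ n ∧ p.1 + p.2 ≤ r then (0 : MvPolynomial (ℕ × ℕ) k)
        else X p))
      (vminor k (fun p : Fin (r - r / 2) => r / 2 + 1 + (p : ℕ))) =
        -∏ p ∈ (Finset.range (n + 1) ×ˢ Finset.range (n + 1)).filter
          (fun p => 1 ≤ p.2 ∧ p.2 < p.1 ∧ p.1 ≤ n ∧ p.1 + p.2 = r + 1), X p := by
  set φ : ℕ × ℕ → MvPolynomial (ℕ × ℕ) k := fun p : ℕ × ℕ =>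
    if 1 ≤ p.2 ∧ p.2 < p.1 ∧ p.1 ≤ n ∧ p.1 + p.2 ≤ r then (0 : MvPolynomial (ℕ × ℕ) k)
    else X p with hφ
  set m := r - r / 2 with hmdef
  have hm2 : r / 2 + m = r := by omega
  have hm1 : 1 ≤ m := by omega
  have hmle : m ≤ r / 2 + 1 := by omega
  have hZX : ∀ i j : ℕ, j < i → Zent k i j = X (i, j) := by
    intro i j h
    rw [Zent, if_neg (by omega), if_pos h]
  have hφ0 : ∀ i j : ℕ, 1 ≤ j → j < i → i ≤ n → i + j ≤ r → φ (i, j) = 0 := by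
    intro i j h1 h2 h3 h4
    simp only [hφ]
    exact if_pos ⟨h1, h2, h3, h4⟩
  have hφX : ∀ i j : ℕ, r + 1 ≤ i + j → φ (i, j) = X (i, j) := by
    intro i j h
    simp only [hφ]
    exact if_neg (by omega)
  set M : Matrix (Fin m) (Fin m) (MvPolynomial (ℕ × ℕ) k) :=
    (Matrix.of fun p q : Fin m => Zent k (r / 2 + 1 + (p : ℕ)) ((q : ℕ) + 1)).map (aeval φ)
    with hMdef
  have hdet : (aeval φ) (vminor k (fun p : Fin m => r / 2 + 1 + (p : ℕ))) = M.det := by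
    rw [hMdef, vminor]
    exact AlgHom.map_det _ _
  set L : Matrix (Fin m) (Fin m) (MvPolynomial (ℕ × ℕ) k) := M.submatrix id Fin.rev with hLdef
  have hLpq : ∀ p q : Fin m,
      L p q = (aeval φ) (Zent k (r / 2 + 1 + (p : ℕ)) ((m - ((q : ℕ) + 1)) + 1)) := by
    intro p q
    rw [hLdef, hMdef]
    rfl
  have hL0 : ∀ p q : Fin m, (p : ℕ) < (q : ℕ) → L p q = 0 := by
    intro p q h
    have hq := q.isLt
    have hp := p.isLt
    rw [hLpq, hZX _ _ (by omega), aeval_X, hφ0 _ _ (by omega) (by omega) (by omega) (by omega)]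
  have hdiag : ∀ p : Fin m, L p p = Zent k (r / 2 + 1 + (p : ℕ)) (m - (p : ℕ)) := by
    intro p
    have hp := p.isLt
    have hj : (m - ((p : ℕ) + 1)) + 1 = m - (p : ℕ) := by omega
    rw [hLpq, hj]
    by_cases hc : r / 2 + 1 + (p : ℕ) = m - (p : ℕ)
    · rw [show Zent k (r / 2 + 1 + (p : ℕ)) (m - (p : ℕ)) = 1 from if_pos hc, map_one]
    · have hlt : m - (p : ℕ) < r / 2 + 1 + (p : ℕ) := by omega
      rw [hZX _ _ hlt, aeval_X, hφX _ _ (by omega)]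
  have hLdet : L.det = ∏ j ∈ Finset.range (r / 2), X ((r - j, j + 1) : ℕ × ℕ) := by
    rw [Matrix.det_of_lowerTriangular L (fun i j hij => hL0 i j hij)]
    calc ∏ i : Fin m, L i i
        = ∏ i : Fin m, Zent k (r / 2 + 1 + (i : ℕ)) (m - (i : ℕ)) :=
          Finset.prod_congr rfl (fun i _ => hdiag i)
      _ = ∏ j ∈ Finset.range m, Zent k (r / 2 + 1 + j) (m - j) :=
          Fin.prod_univ_eq_prod_range (fun j => Zent k (r / 2 + 1 + j) (m - j)) m
      _ = ∏ j ∈ Finset.range (r / 2), Zent k (r - j) (j + 1) := by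
          rcases Nat.even_or_odd r with he | ho
          · rw [Nat.even_iff] at he
            have hmr : m = r / 2 := by omega
            rw [hmr, ← Finset.prod_range_reflect (fun j => Zent k (r - j) (j + 1)) (r / 2)]
            refine Finset.prod_congr rfl (fun j hj => ?_)
            have hj' := Finset.mem_range.mp hj
            congr 1 <;> omega
          · rw [Nat.odd_iff] at ho
            have hmr : m = r / 2 + 1 := by omega
            rw [hmr, Finset.prod_range_succ',
              show Zent k (r / 2 + 1 + 0) (r / 2 + 1 - 0) = 1 from if_pos (by omega), mul_one,
              ← Finset.prod_range_reflect (fun j => Zent k (r - j) (j + 1)) (r / 2)]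
            refine Finset.prod_congr rfl (fun j hj => ?_)
            have hj' := Finset.mem_range.mp hj
            congr 1 <;> omega
      _ = ∏ j ∈ Finset.range (r / 2), X ((r - j, j + 1) : ℕ × ℕ) :=
          Finset.prod_congr rfl (fun j hj => hZX _ _ (by
            have := Finset.mem_range.mp hj; omega))
  have hSet : (Finset.range (n + 1) ×ˢ Finset.range (n + 1)).filter
      (fun p : ℕ × ℕ => 1 ≤ p.2 ∧ p.2 < p.1 ∧ p.1 ≤ n ∧ p.1 + p.2 = r + 1)
      = (Finset.range (r / 2)).image (fun j => ((r - j, j + 1) : ℕ × ℕ)) := by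
    ext ⟨a, b⟩
    simp only [Finset.mem_filter, Finset.mem_image, Finset.mem_product, Finset.mem_range,
      Prod.mk.injEq]
    constructor
    · rintro ⟨⟨ha, hb⟩, h1, h2, h3, h4⟩
      exact ⟨b - 1, by omega, by omega, by omega⟩
    · rintro ⟨j, hj, h1, h2⟩
      exact ⟨⟨by omega, by omega⟩, by omega, by omega, by omega, by omega⟩
  have hprod : ∏ p ∈ (Finset.range (n + 1) ×ˢ Finset.range (n + 1)).filter
      (fun p : ℕ × ℕ => 1 ≤ p.2 ∧ p.2 < p.1 ∧ p.1 ≤ n ∧ p.1 + p.2 = r + 1),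
        (X p : MvPolynomial (ℕ × ℕ) k)
      = ∏ j ∈ Finset.range (r / 2), X ((r - j, j + 1) : ℕ × ℕ) := by
    rw [hSet]
    have hinj : ∀ x ∈ Finset.range (r / 2), ∀ y ∈ Finset.range (r / 2),
        ((r - x, x + 1) : ℕ × ℕ) = (r - y, y + 1) → x = y := by
      intro x hx y hy hxy
      rw [Prod.mk.injEq] at hxy
      omega
    exact Finset.prod_image hinj
  have hML : M = L.submatrix id ⇑(Fin.revPerm : Equiv.Perm (Fin m)) := by
    ext p q
    simp only [hLdef, Matrix.submatrix_apply, id_eq, Fin.revPerm_apply, Fin.rev_rev]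
  have hfinal : (aeval φ) (vminor k (fun p : Fin m => r / 2 + 1 + (p : ℕ)))
      = (Equiv.Perm.sign (Fin.revPerm : Equiv.Perm (Fin m)) : ℤ) •
        ∏ p ∈ (Finset.range (n + 1) ×ˢ Finset.range (n + 1)).filter
          (fun p : ℕ × ℕ => 1 ≤ p.2 ∧ p.2 < p.1 ∧ p.1 ≤ n ∧ p.1 + p.2 = r + 1), X p := by
    rw [hdet, hML, Matrix.det_permute', hLdet, ← hprod, zsmul_eq_mul]
  rcases Int.units_eq_one_or (Equiv.Perm.sign (Fin.revPerm : Equiv.Perm (Fin m))) with hs | hs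
  · left
    rw [hfinal, hs]
    simp
  · right
    rw [hfinal, hs]
    simp
end

section
/- For each 1 ≤ r ≤ n, the polynomial 𝔤_r = σ(𝔣_r) is a residual normal crossing relative to the subset {Z_{i,j} : 1 ≤ j < i ≤ n, i + j ≥ 2n + 1 − r} of the variables, equipped with the reverse of the order: Z_{i,j} ≤ Z_{i',j'} iff i+j < i'+j', or i+j = i'+j' and i ≤ i'. -/
open MvPolynomial

namespace RNCaux

open Matrix Finset

variable {k : Type*} [Field k]

/-! ### Auxiliary definitions -/

noncomputable def prodX (k : Type*) [Field k] (L : List (ℕ × ℕ)) : MvPolynomial (ℕ × ℕ) k :=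
  (L.map X).prod

def rmlf (n s u : ℕ) : ℕ × ℕ := (n - u, n + 1 - s + u)

/-- The remaining part of the `s`-th antidiagonal after `t` peels. -/
def rml (n s t : ℕ) : List (ℕ × ℕ) := (List.range' t (s / 2 - t)).map (rmlf n s)

noncomputable def Bent (k : Type*) [Field k] (n s t i j : ℕ) : MvPolynomial (ℕ × ℕ) k :=
  if 2 * n + 1 - s < i + j ∨ (i + j = 2 * n + 1 - s ∧ n - t < i) then 0 else Zent k i j

/-- The matrix of the `s'`-th minor with the variables processed before position `(s,t)`
set to zero. -/
noncomputable def Bm (k : Type*) [Field k] (n s' s t : ℕ) :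
    Matrix (Fin (s' - s' / 2)) (Fin (s' - s' / 2)) (MvPolynomial (ℕ × ℕ) k) :=
  Matrix.of fun p q => Bent k n s t (n + 1 - (s' - s' / 2) + (p : ℕ)) (n + 1 - s' + (q : ℕ))

/-- The matrix of the `s`-th minor after applying `σ`. -/
noncomputable def Am (k : Type*) [Field k] (n s : ℕ) :
    Matrix (Fin (s - s / 2)) (Fin (s - s / 2)) (MvPolynomial (ℕ × ℕ) k) :=
  Matrix.of fun p q => Zent k (n + 1 - (s - s / 2) + (p : ℕ)) (n + 1 - s + (q : ℕ))

/-! ### Basic facts about `setZero` -/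

lemma setZero_C {σ : Type*} [DecidableEq σ] (j : σ) (c : k) :
    setZero j (C c : MvPolynomial σ k) = C c := by
  simp [setZero, MvPolynomial.algebraMap_eq]

lemma setZero_X {σ : Type*} [DecidableEq σ] (j i : σ) :
    setZero j (X i : MvPolynomial σ k) = if i = j then 0 else X i :=
  aeval_X _ _

lemma prodX_nil : prodX k ([] : List (ℕ × ℕ)) = 1 := rfl

lemma prodX_cons (v : ℕ × ℕ) (L : List (ℕ × ℕ)) :
    prodX k (v :: L) = X v * prodX k L := by
  simp [prodX]

/-! ### Determinant of an anti-triangular matrix -/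

lemma det_antitri {R : Type*} [CommRing R] {m : ℕ} (M : Matrix (Fin m) (Fin m) R)
    (h : ∀ p q : Fin m, m ≤ (p : ℕ) + (q : ℕ) → M p q = 0) :
    M.det = ∏ p, M p p.rev ∨ M.det = -∏ p, M p p.rev := by
  have h2 : (M.submatrix id (Fin.revPerm : Equiv.Perm (Fin m))).det = ∏ p, M p p.rev := by
    rw [Matrix.det_of_upperTriangular]
    · rfl
    · intro p q hqp
      have hq := q.isLt
      have hp := p.isLt
      apply h
      simp only [id, Fin.revPerm_apply, Fin.val_rev] at hqp ⊢
      omega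
  have h1 := Matrix.det_permute' (Fin.revPerm : Equiv.Perm (Fin m)) M
  rcases Int.units_eq_one_or (Equiv.Perm.sign (Fin.revPerm : Equiv.Perm (Fin m))) with hs | hs <;>
    rw [hs] at h1 <;> rw [h2] at h1
  · left; simpa using h1.symm
  · right
    simp only [Units.val_neg, Units.val_one, Int.cast_neg, Int.cast_one, neg_mul, one_mul] at h1
    rw [h1]; ring


/-! ### Entry-level lemmas -/

lemma setZero_Bent {n s t : ℕ} (h2 : 2 ≤ s) (hsn : s ≤ n) (ht : t < s / 2) (i j : ℕ) :
    setZero (rmlf n s t) (Bent k n s t i j) = Bent k n s (t + 1) i j := by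
  unfold Bent
  by_cases h1 : 2 * n + 1 - s < i + j ∨ (i + j = 2 * n + 1 - s ∧ n - t < i)
  · rw [if_pos h1, if_pos (by omega), map_zero]
  · rw [if_neg h1]
    by_cases hn : 2 * n + 1 - s < i + j ∨ (i + j = 2 * n + 1 - s ∧ n - (t + 1) < i)
    · have hi : i = n - t := by omega
      have hj : j = n + 1 - s + t := by omega
      rw [if_pos hn]
      subst hi hj
      unfold Zent
      rw [if_neg (by omega), if_pos (by omega), setZero_X,
        if_pos (show ((n - t : ℕ), n + 1 - s + t) = rmlf n s t from rfl)]
    · rw [if_neg hn]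
      unfold Zent
      by_cases hij : i = j
      · rw [if_pos hij]; exact _root_.map_one _
      · rw [if_neg hij]
        by_cases hji : j < i
        · rw [if_pos hji, setZero_X, if_neg]
          intro he
          rw [Prod.ext_iff] at he
          simp only [rmlf] at he
          omega
        · rw [if_neg hji, map_zero]

lemma Bm_setZero {n s t : ℕ} (h2 : 2 ≤ s) (hsn : s ≤ n) (ht : t < s / 2) (s' : ℕ) :
    (setZero (k := k) (rmlf n s t)).toRingHom.mapMatrix (Bm k n s' s t) = Bm k n s' s (t + 1) := by
  refine Matrix.ext fun p q => ?_
  simp only [RingHom.mapMatrix_apply, Matrix.map_apply, Bm, Matrix.of_apply,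
    AlgHom.toRingHom_eq_coe, RingHom.coe_coe]
  exact setZero_Bent (k := k) h2 hsn ht _ _

lemma mem_rml {n s t : ℕ} {p : ℕ × ℕ} :
    p ∈ rml n s t ↔ ∃ u, t ≤ u ∧ u < s / 2 ∧ p = rmlf n s u := by
  unfold rml
  simp only [List.mem_map, List.mem_range'_1]
  constructor
  · rintro ⟨u, ⟨hu1, hu2⟩, rfl⟩; exact ⟨u, hu1, by omega, rfl⟩
  · rintro ⟨u, hu1, hu2, rfl⟩; exact ⟨u, ⟨hu1, by omega⟩, rfl⟩

lemma setZero_prodX_rml {n s t : ℕ} (hsn : s ≤ n) (ht : t < s / 2) :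
    setZero (rmlf n s t) (prodX k (rml n s (t + 1))) = prodX k (rml n s (t + 1)) := by
  unfold prodX
  rw [map_list_prod, List.map_map]
  congr 1
  apply List.map_congr_left
  intro u hu
  rw [mem_rml] at hu
  obtain ⟨u', hu1, hu2, rfl⟩ := hu
  simp only [Function.comp_apply, setZero_X]
  rw [if_neg]
  intro he
  rw [Prod.ext_iff] at he
  simp only [rmlf] at he
  omega

lemma rml_cons {n s t : ℕ} (ht : t < s / 2) :
    rml n s t = rmlf n s t :: rml n s (t + 1) := by
  unfold rml
  rw [show s / 2 - t = (s / 2 - (t + 1)) + 1 by omega, List.range'_succ, List.map_cons]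

lemma rml_nil {n s : ℕ} : rml n s (s / 2) = [] := by
  unfold rml
  rw [Nat.sub_self]
  rfl

/-! ### Boundary lemmas -/

lemma Bm_boundary {n s s' : ℕ} (h2 : 2 ≤ s) (hss' : s + 1 ≤ s') (hs'n : s' ≤ n) :
    Bm k n s' s (s / 2) = Bm k n s' (s + 1) 0 := by
  ext p q
  have hp := p.isLt
  have hq := q.isLt
  simp only [Bm, Bent, Matrix.of_apply]
  by_cases h : 2 * n + 1 - s < (n + 1 - (s' - s' / 2) + (p : ℕ)) + (n + 1 - s' + (q : ℕ)) ∨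
      ((n + 1 - (s' - s' / 2) + (p : ℕ)) + (n + 1 - s' + (q : ℕ)) = 2 * n + 1 - s ∧
        n - (s / 2) < n + 1 - (s' - s' / 2) + (p : ℕ))
  · rw [if_pos h, if_pos (by omega)]
  · rw [if_neg h, if_neg (by omega)]

lemma prodX_rml_eq {n s0 : ℕ} :
    prodX k (rml n s0 0) = ∏ x ∈ Finset.range (s0 / 2), X (n - x, n + 1 - s0 + x) := by
  unfold prodX rml
  simp only [Nat.sub_zero]
  rw [show List.range' 0 (s0 / 2) = List.range (s0 / 2) from List.range_eq_range'.symm]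
  generalize s0 / 2 = d
  induction d with
  | zero => rfl
  | succ d ih =>
    rw [List.range_succ, List.map_append, List.map_append, List.prod_append,
      Finset.prod_range_succ, ih]
    simp [rmlf]

lemma det_Bm_diag {n s : ℕ} (h2 : 2 ≤ s) (hsn : s + 1 ≤ n) :
    (Bm k n (s + 1) (s + 1) 0).det = prodX k (rml n (s + 1) 0) ∨
    (Bm k n (s + 1) (s + 1) 0).det = -prodX k (rml n (s + 1) 0) := by
  have hanti : ∀ p q : Fin ((s + 1) - (s + 1) / 2), (s + 1) - (s + 1) / 2 ≤ (p : ℕ) + (q : ℕ) →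
      Bm k n (s + 1) (s + 1) 0 p q = 0 := by
    intro p q h
    have hp := p.isLt
    have hq := q.isLt
    simp only [Bm, Bent, Matrix.of_apply]
    rw [if_pos (by omega)]
  have key : ∏ p : Fin ((s + 1) - (s + 1) / 2), (Bm k n (s + 1) (s + 1) 0) p p.rev
      = prodX k (rml n (s + 1) 0) := by
    have e1 : ∀ p : Fin ((s + 1) - (s + 1) / 2), (Bm k n (s + 1) (s + 1) 0) p p.rev
        = (fun x : ℕ => Zent k (n - ((s + 1) - (s + 1) / 2 - 1 - x))
            (n - s + ((s + 1) - (s + 1) / 2 - 1 - x))) (p : ℕ) := by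
      intro p
      have hp := p.isLt
      simp only [Bm, Bent, Matrix.of_apply, Fin.val_rev]
      rw [if_neg (by omega)]
      congr 1 <;> omega
    calc ∏ p : Fin ((s + 1) - (s + 1) / 2), (Bm k n (s + 1) (s + 1) 0) p p.rev
        = ∏ x ∈ Finset.range ((s + 1) - (s + 1) / 2),
            Zent k (n - ((s + 1) - (s + 1) / 2 - 1 - x))
              (n - s + ((s + 1) - (s + 1) / 2 - 1 - x)) := by
          rw [← Fin.prod_univ_eq_prod_range (fun x : ℕ =>
            Zent k (n - ((s + 1) - (s + 1) / 2 - 1 - x))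
              (n - s + ((s + 1) - (s + 1) / 2 - 1 - x))) ((s + 1) - (s + 1) / 2)]
          exact Finset.prod_congr rfl fun p _ => e1 p
      _ = ∏ x ∈ Finset.range ((s + 1) - (s + 1) / 2), Zent k (n - x) (n - s + x) :=
          Finset.prod_range_reflect (fun x => Zent k (n - x) (n - s + x)) _
      _ = prodX k (rml n (s + 1) 0) := by
          rw [prodX_rml_eq]
          rcases Nat.even_or_odd s with hpar | hpar
          · obtain ⟨c, hc⟩ := hpar
            rw [show (s + 1) - (s + 1) / 2 = (s + 1) / 2 + 1 from by omega,
              Finset.prod_range_succ]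
            have hlast : Zent k (n - ((s + 1) / 2)) (n - s + (s + 1) / 2) = 1 := by
              unfold Zent
              rw [if_pos (by omega)]
            rw [hlast, mul_one]
            apply Finset.prod_congr rfl
            intro x hx
            rw [Finset.mem_range] at hx
            unfold Zent
            rw [if_neg (by omega), if_pos (by omega),
              show n + 1 - (s + 1) + x = n - s + x from by omega]
          · obtain ⟨c, hc⟩ := hpar
            rw [show (s + 1) - (s + 1) / 2 = (s + 1) / 2 from by omega]
            apply Finset.prod_congr rfl
            intro x hx
            rw [Finset.mem_range] at hx
            unfold Zent
            rw [if_neg (by omega), if_pos (by omega),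
              show n + 1 - (s + 1) + x = n - s + x from by omega]
  rcases det_antitri _ hanti with h | h
  · left; rw [h, key]
  · right; rw [h, key]


/-! ### The peeling step and the main induction -/

lemma peel {n r s t : ℕ} (h2 : 2 ≤ s) (hsr : s ≤ r) (hrn : r ≤ n) (ht : t < s / 2)
    (c : k) (hc : c ≠ 0)
    (IH : ∀ c' : k, c' ≠ 0 →
      IsRNC (C c' * prodX k (rml n s (t + 1)) *
          ∏ s' ∈ Finset.Ico (s + 1) (r + 1), (Bm k n s' s (t + 1)).det)
        (rml n s (t + 1) ++ (List.range' (s + 1) (r - s)).flatMap (fun s' => rml n s' 0))) :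
    IsRNC (C c * prodX k (rml n s t) *
        ∏ s' ∈ Finset.Ico (s + 1) (r + 1), (Bm k n s' s t).det)
      (rml n s t ++ (List.range' (s + 1) (r - s)).flatMap (fun s' => rml n s' 0)) := by
  rw [rml_cons ht, List.cons_append]
  show ∃ h, _ ∧ _
  refine ⟨C c * prodX k (rml n s (t + 1)) *
      ∏ s' ∈ Finset.Ico (s + 1) (r + 1), (Bm k n s' s t).det, ?_, ?_⟩
  · rw [prodX_cons]; ring
  · have hsz : setZero (rmlf n s t)
        (C c * prodX k (rml n s (t + 1)) *
          ∏ s' ∈ Finset.Ico (s + 1) (r + 1), (Bm k n s' s t).det)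
        = C c * prodX k (rml n s (t + 1)) *
          ∏ s' ∈ Finset.Ico (s + 1) (r + 1), (Bm k n s' s (t + 1)).det := by
      rw [_root_.map_mul, _root_.map_mul, setZero_C, setZero_prodX_rml (by omega) ht, map_prod]
      congr 1
      refine Finset.prod_congr rfl fun s' _ => ?_
      calc setZero (rmlf n s t) (Bm k n s' s t).det
          = (setZero (k := k) (rmlf n s t)).toRingHom (Bm k n s' s t).det := rfl
        _ = ((setZero (k := k) (rmlf n s t)).toRingHom.mapMatrix (Bm k n s' s t)).det :=
            RingHom.map_det _ _
        _ = (Bm k n s' s (t + 1)).det := by rw [Bm_setZero h2 (by omega) ht]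
    rw [hsz]
    exact IH c hc

lemma mainAux {n r : ℕ} (hrn : r ≤ n) :
    ∀ d s, 2 ≤ s → s + d = r → ∀ m t, t + m = s / 2 → ∀ c : k, c ≠ 0 →
    IsRNC (C c * prodX k (rml n s t) *
        ∏ s' ∈ Finset.Ico (s + 1) (r + 1), (Bm k n s' s t).det)
      (rml n s t ++ (List.range' (s + 1) (r - s)).flatMap (fun s' => rml n s' 0)) := by
  intro d
  induction d with
  | zero =>
    intro s hs2 hsr m
    induction m with
    | zero =>
      intro t ht c hc
      have et : t = s / 2 := by omega
      subst et
      have hsr' : s = r := by omega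
      subst hsr'
      rw [rml_nil, Finset.Ico_self, Finset.prod_empty, Nat.sub_self]
      show IsRNC (C c * prodX k [] * 1) ([] ++ [])
      rw [prodX_nil, mul_one, mul_one]
      exact ⟨c, hc, rfl⟩
    | succ m ihm =>
      intro t ht c hc
      exact peel hs2 (by omega) hrn (by omega) c hc (fun c' hc' => ihm (t + 1) (by omega) c' hc')
  | succ d ihd =>
    intro s hs2 hsr m
    induction m with
    | zero =>
      intro t ht c hc
      have et : t = s / 2 := by omega
      subst et
      have hslt : s + 1 ≤ r := by omega
      have hstep : ∀ s' ∈ Finset.Ico (s + 1) (r + 1),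
          (Bm k n s' s (s / 2)).det = (Bm k n s' (s + 1) 0).det := by
        intro s' hs'
        rw [Finset.mem_Ico] at hs'
        rw [Bm_boundary hs2 hs'.1 (by omega)]
      rw [Finset.prod_congr rfl hstep, Finset.prod_eq_prod_Ico_succ_bot (by omega), rml_nil,
        show List.range' (s + 1) (r - s) = (s + 1) :: List.range' (s + 2) (r - (s + 1)) from by
          rw [show r - s = (r - (s + 1)) + 1 from by omega, List.range'_succ]]
      simp only [List.nil_append, List.flatMap_cons]
      rcases det_Bm_diag (k := k) (n := n) hs2 (by omega) with h | h <;> rw [h]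
      · rw [show C c * prodX k [] * (prodX k (rml n (s + 1) 0) *
            ∏ s' ∈ Finset.Ico (s + 1 + 1) (r + 1), (Bm k n s' (s + 1) 0).det)
          = C c * prodX k (rml n (s + 1) 0) *
            ∏ s' ∈ Finset.Ico (s + 2) (r + 1), (Bm k n s' (s + 1) 0).det from by
          rw [prodX_nil]; ring_nf]
        exact ihd (s + 1) (by omega) (by omega) ((s + 1) / 2) 0 (by omega) c hc
      · rw [show C c * prodX k [] * (-prodX k (rml n (s + 1) 0) *
            ∏ s' ∈ Finset.Ico (s + 1 + 1) (r + 1), (Bm k n s' (s + 1) 0).det)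
          = C (-c) * prodX k (rml n (s + 1) 0) *
            ∏ s' ∈ Finset.Ico (s + 2) (r + 1), (Bm k n s' (s + 1) 0).det from by
          rw [prodX_nil, map_neg]; ring_nf]
        exact ihd (s + 1) (by omega) (by omega) ((s + 1) / 2) 0 (by omega) (-c)
          (neg_ne_zero.mpr hc)
    | succ m ihm =>
      intro t ht c hc
      exact peel hs2 (by omega) hrn (by omega) c hc (fun c' hc' => ihm (t + 1) (by omega) c' hc')


/-! ### Identification of `gRNC` with the initial state -/

lemma rename_Zent {n i j : ℕ} (hi1 : 1 ≤ i) (hin : i ≤ n) (hj1 : 1 ≤ j) (hjn : j ≤ n) :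
    rename (fun p : ℕ × ℕ => (n + 1 - p.2, n + 1 - p.1)) (Zent k i j)
      = Zent k (n + 1 - j) (n + 1 - i) := by
  unfold Zent
  by_cases hij : i = j
  · rw [if_pos hij, if_pos (by omega)]
    exact _root_.map_one _
  · rw [if_neg hij]
    by_cases hji : j < i
    · rw [if_pos hji, if_neg (by omega), if_pos (by omega), rename_X]
    · rw [if_neg hji, if_neg (by omega), if_neg (by omega)]
      exact _root_.map_zero _

lemma rename_vminor {n s : ℕ} (h1 : 1 ≤ s) (hsn : s ≤ n) :
    rename (fun p : ℕ × ℕ => (n + 1 - p.2, n + 1 - p.1))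
        (vminor k (fun p : Fin (s - s / 2) => s / 2 + 1 + (p : ℕ)))
      = (Am k n s).det := by
  unfold vminor
  calc rename (fun p : ℕ × ℕ => (n + 1 - p.2, n + 1 - p.1))
        ((Matrix.of fun p q : Fin (s - s / 2) => Zent k (s / 2 + 1 + (p : ℕ)) ((q : ℕ) + 1)).det)
      = ((rename (fun p : ℕ × ℕ => (n + 1 - p.2, n + 1 - p.1))).toRingHom.mapMatrix
          (Matrix.of fun p q : Fin (s - s / 2) =>
            Zent k (s / 2 + 1 + (p : ℕ)) ((q : ℕ) + 1))).det := RingHom.map_det _ _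
    _ = (((Am k n s).transpose).submatrix (Fin.revPerm : Equiv.Perm (Fin (s - s / 2)))
          (Fin.revPerm : Equiv.Perm (Fin (s - s / 2)))).det := by
        congr 1
        refine Matrix.ext fun p q => ?_
        have hp := p.isLt
        have hq := q.isLt
        simp only [RingHom.mapMatrix_apply, Matrix.map_apply, Matrix.of_apply,
          AlgHom.toRingHom_eq_coe, RingHom.coe_coe, Matrix.submatrix_apply,
          Matrix.transpose_apply, Am, Fin.revPerm_apply, Fin.val_rev]
        rw [rename_Zent (by omega) (by omega) (by omega) (by omega)]
        congr 1 <;> omega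
    _ = (Am k n s).det := by
        rw [Matrix.det_submatrix_equiv_self, Matrix.det_transpose]

lemma det_Am_one {n : ℕ} (hn : 1 ≤ n) : (Am k n 1).det = 1 := by
  rw [show (Am k n 1) = (Matrix.of fun _ _ : Fin 1 => (1 : MvPolynomial (ℕ × ℕ) k)) from ?_]
  · rw [Matrix.det_fin_one]; rfl
  · refine Matrix.ext fun p q => ?_
    have hp := p.isLt
    have hq := q.isLt
    simp only [Am, Matrix.of_apply, Zent]
    rw [if_pos (by omega)]

lemma det_Am_two {n : ℕ} (hn : 2 ≤ n) : (Am k n 2).det = prodX k (rml n 2 0) := by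
  have hl : rml n 2 0 = [rmlf n 2 0] := rfl
  have hf : rmlf n 2 0 = (n, n - 1) := by
    unfold rmlf; simp only [Prod.mk.injEq]; omega
  rw [Matrix.det_fin_one, hl, hf, prodX_cons, prodX_nil, mul_one]
  simp only [Am, Matrix.of_apply, Zent, Fin.val_zero]
  rw [if_neg (by omega), if_pos (by omega)]
  congr 1

lemma Am_eq_Bm {n s : ℕ} (h3 : 3 ≤ s) (hsn : s ≤ n) : Am k n s = Bm k n s 2 0 := by
  refine Matrix.ext fun p q => ?_
  have hp := p.isLt
  have hq := q.isLt
  simp only [Am, Bm, Bent, Matrix.of_apply]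
  rw [if_neg (by omega)]

lemma gRNC_eq {n r : ℕ} (h2 : 2 ≤ r) (hrn : r ≤ n) :
    gRNC k n r = C (1 : k) * prodX k (rml n 2 0) *
      ∏ s' ∈ Finset.Ico (2 + 1) (r + 1), (Bm k n s' 2 0).det := by
  unfold gRNC fRNC
  rw [map_prod]
  have e1 : ∀ s ∈ Finset.Icc 1 r,
      rename (fun p : ℕ × ℕ => (n + 1 - p.2, n + 1 - p.1))
        (vminor k (fun p : Fin (s - s / 2) => s / 2 + 1 + (p : ℕ))) = (Am k n s).det := by
    intro s hs
    rw [Finset.mem_Icc] at hs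
    exact rename_vminor hs.1 (by omega)
  have e2 : ∀ s' ∈ Finset.Ico (2 + 1) (r + 1), (Am k n s').det = (Bm k n s' 2 0).det := by
    intro s' hs'
    rw [Finset.mem_Ico] at hs'
    rw [Am_eq_Bm (by omega) (by omega)]
  rw [Finset.prod_congr rfl e1, ← Finset.Ico_add_one_right_eq_Icc,
    Finset.prod_eq_prod_Ico_succ_bot (by omega), Finset.prod_eq_prod_Ico_succ_bot (by omega),
    det_Am_one (by omega), det_Am_two (by omega), Finset.prod_congr rfl e2, MvPolynomial.C_1]
  ring


/-! ### The canonical list -/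

lemma pairwise_rml {n s : ℕ} (hsn : s ≤ n) :
    List.Pairwise (fun p q => zord q p) (rml n s 0) := by
  unfold rml
  rw [List.pairwise_map]
  refine (List.pairwise_lt_range' (s := 0) (n := s / 2)).imp_of_mem ?_
  intro a b ha hb hab
  rw [List.mem_range'_1] at ha hb
  unfold zord rmlf
  right
  constructor <;> [skip; skip] <;> simp only [] <;> omega

lemma sorted_blocks {n : ℕ} :
    ∀ m s, 2 ≤ s → s + m ≤ n + 1 →
    List.Pairwise (fun p q => zord q p)
      ((List.range' s m).flatMap (fun s' => rml n s' 0)) := by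
  intro m
  induction m with
  | zero => intro s _ _; simp
  | succ m ih =>
    intro s hs2 hsn
    rw [List.range'_succ, List.flatMap_cons, List.pairwise_append]
    refine ⟨pairwise_rml (by omega), ih (s + 1) (by omega) (by omega), ?_⟩
    intro a ha b hb
    rw [mem_rml] at ha
    obtain ⟨u, _, hu2, rfl⟩ := ha
    rw [List.mem_flatMap] at hb
    obtain ⟨s', hs', hb⟩ := hb
    rw [List.mem_range'_1] at hs'
    rw [mem_rml] at hb
    obtain ⟨u', _, hu2', rfl⟩ := hb
    unfold zord rmlf
    left
    simp only []
    omega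

lemma mem_canon {n r : ℕ} (h2 : 2 ≤ r) (hrn : r ≤ n) {p : ℕ × ℕ} :
    p ∈ (List.range' 2 (r - 1)).flatMap (fun s' => rml n s' 0) ↔
      (1 ≤ p.2 ∧ p.2 < p.1 ∧ p.1 ≤ n ∧ 2 * n + 1 - r ≤ p.1 + p.2) := by
  rw [List.mem_flatMap]
  constructor
  · rintro ⟨s, hs, hp⟩
    rw [List.mem_range'_1] at hs
    rw [mem_rml] at hp
    obtain ⟨u, _, hu2, rfl⟩ := hp
    unfold rmlf
    simp only []
    omega
  · rintro ⟨h1, h2', h3, h4⟩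
    refine ⟨2 * n + 1 - p.1 - p.2, ?_, ?_⟩
    · rw [List.mem_range'_1]; omega
    · rw [mem_rml]
      refine ⟨n - p.1, by omega, by omega, ?_⟩
      unfold rmlf
      rw [Prod.ext_iff]
      constructor <;> simp only [] <;> omega

end RNCaux

theorem stmt5 (k : Type*) [Field k] (n r : ℕ) (hr1 : 1 ≤ r) (hrn : r ≤ n)
    (l : List (ℕ × ℕ))
    (hmem : ∀ p : ℕ × ℕ, p ∈ l ↔
      1 ≤ p.2 ∧ p.2 < p.1 ∧ p.1 ≤ n ∧ 2 * n + 1 - r ≤ p.1 + p.2)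
    (hsort : l.Pairwise (fun p q => zord q p)) :
    IsRNC (gRNC k n r) l := by
  open RNCaux in
  rcases eq_or_lt_of_le hr1 with h1 | h2r
  · -- r = 1 : the list is empty and `gRNC` is the constant 1
    have hr : r = 1 := h1.symm
    subst hr
    have hl : l = [] := by
      rw [List.eq_nil_iff_forall_not_mem]
      intro p hp
      rw [hmem] at hp
      omega
    subst hl
    refine ⟨1, one_ne_zero, ?_⟩
    unfold gRNC fRNC
    have hv : vminor k (fun p : Fin (1 - 1 / 2) => 1 / 2 + 1 + (p : ℕ)) = 1 := by
      unfold vminor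
      rw [Matrix.det_fin_one, Matrix.of_apply]
      unfold Zent
      rw [if_pos (by decide)]
    rw [Finset.Icc_self, Finset.prod_singleton, hv, _root_.map_one]
    exact MvPolynomial.C_1.symm
  · -- r ≥ 2
    have h2 : 2 ≤ r := h2r
    haveI : IsAntisymm (ℕ × ℕ) (fun p q => zord q p) := ⟨by
      intro a b hab hba
      exfalso
      unfold zord at hab hba
      omega⟩
    have hzne : ∀ a b : ℕ × ℕ, zord b a → a ≠ b := by
      intro a b hab he
      subst he
      unfold zord at hab
      omega
    have hnodup1 : l.Nodup := hsort.imp fun {a b} h => hzne a b h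
    have hcs : List.Pairwise (fun p q => zord q p)
        ((List.range' 2 (r - 1)).flatMap (fun s' => RNCaux.rml n s' 0)) :=
      RNCaux.sorted_blocks (r - 1) 2 (le_refl 2) (by omega)
    have hnodup2 : ((List.range' 2 (r - 1)).flatMap (fun s' => RNCaux.rml n s' 0)).Nodup :=
      hcs.imp fun {a b} h => hzne a b h
    have hperm : l.Perm ((List.range' 2 (r - 1)).flatMap (fun s' => RNCaux.rml n s' 0)) :=
      (List.perm_ext_iff_of_nodup hnodup1 hnodup2).2 fun a => by
        rw [hmem, RNCaux.mem_canon h2 hrn]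
    have hleq : l = (List.range' 2 (r - 1)).flatMap (fun s' => RNCaux.rml n s' 0) :=
      List.Perm.eq_of_pairwise' hsort hcs hperm
    rw [hleq,
      show (List.range' 2 (r - 1)).flatMap (fun s' => RNCaux.rml n s' 0)
        = RNCaux.rml n 2 0 ++ (List.range' (2 + 1) (r - 2)).flatMap (fun s' => RNCaux.rml n s' 0)
        from by rw [show r - 1 = (r - 2) + 1 from by omega, List.range'_succ, List.flatMap_cons],
      RNCaux.gRNC_eq h2 hrn]
    exact RNCaux.mainAux hrn (r - 2) 2 (le_refl 2) (by omega) 1 0 (by omega) 1 one_ne_zero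
end

section
/- There exists a total order on the full set of variables {Z_{i,j} : 1 ≤ j < i ≤ n} such that the product 𝔣_n · 𝔤_{n−1} is a residual normal crossing relative to this totally ordered set of all the variables. -/
open MvPolynomial

section RNCproof



def vlt : ℕ × ℕ → ℕ × ℕ → Prop := fun p q => p.1 < q.1 ∨ (p.1 = q.1 ∧ p.2 < q.2)

lemma vlt_asymm {p q : ℕ × ℕ} (h1 : vlt p q) (h2 : vlt q p) : False := by
  unfold vlt at *; omega

lemma vlt_trans {p q r : ℕ × ℕ} (h1 : vlt p q) (h2 : vlt q r) : vlt p r := by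
  unfold vlt at *; omega

lemma vlt_total {p q : ℕ × ℕ} (h : p ≠ q) : vlt p q ∨ vlt q p := by
  rcases p with ⟨a, b⟩; rcases q with ⟨c, d⟩
  have : a ≠ c ∨ b ≠ d := by
    by_contra hc; push_neg at hc; exact h (by simp [hc.1, hc.2])
  unfold vlt; simp only []; omega

def mlt (x y : (ℕ × ℕ) →₀ ℕ) : Prop :=
  ∃ a, (∀ b, vlt b a → x b = y b) ∧ x a < y a

lemma mlt_irrefl (x : (ℕ × ℕ) →₀ ℕ) : ¬ mlt x x := by
  rintro ⟨a, -, h⟩; omega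

lemma mlt_add_left (z : (ℕ × ℕ) →₀ ℕ) {x y} (h : mlt x y) : mlt (z + x) (z + y) := by
  obtain ⟨a, hpre, ha⟩ := h
  exact ⟨a, fun b hb => by simp [Finsupp.add_apply, hpre b hb], by simp [Finsupp.add_apply]; omega⟩

lemma mlt_add_right (z : (ℕ × ℕ) →₀ ℕ) {x y} (h : mlt x y) : mlt (x + z) (y + z) := by
  obtain ⟨a, hpre, ha⟩ := h
  exact ⟨a, fun b hb => by simp [Finsupp.add_apply, hpre b hb], by simp [Finsupp.add_apply]; omega⟩

lemma mlt_add {x y z w : (ℕ × ℕ) →₀ ℕ} (h1 : mlt x y) (h2 : mlt z w) : mlt (x + z) (y + w) := by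
  obtain ⟨a1, hp1, ha1⟩ := h1
  obtain ⟨a2, hp2, ha2⟩ := h2
  rcases eq_or_ne a1 a2 with rfl | hne
  · refine ⟨a1, fun b hb => by simp [Finsupp.add_apply, hp1 b hb, hp2 b hb], ?_⟩
    simp [Finsupp.add_apply]; omega
  · rcases vlt_total hne with hv | hv
    · refine ⟨a1, fun b hb => by
        simp [Finsupp.add_apply, hp1 b hb, hp2 b (vlt_trans hb hv)], ?_⟩
      have := hp2 a1 hv
      simp [Finsupp.add_apply]; omega
    · refine ⟨a2, fun b hb => by
        simp [Finsupp.add_apply, hp2 b hb, hp1 b (vlt_trans hb hv)], ?_⟩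
      have := hp1 a2 hv
      simp [Finsupp.add_apply]; omega

variable {k : Type*} [Field k]

def Good (S : Set (ℕ × ℕ)) (f : MvPolynomial (ℕ × ℕ) k) (m0 : (ℕ × ℕ) →₀ ℕ) : Prop :=
  f.coeff m0 ≠ 0 ∧ (∀ m ∈ f.support, m ≠ m0 → mlt m0 m) ∧
    ∀ m ∈ f.support, ∀ a ∈ m.support, a ∈ S

lemma Good.one (S : Set (ℕ × ℕ)) : Good S (1 : MvPolynomial (ℕ × ℕ) k) 0 := by
  refine ⟨by simp, ?_, ?_⟩
  · intro m hm hne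
    rw [MvPolynomial.mem_support_iff] at hm
    rcases eq_or_ne m 0 with rfl | h
    · exact absurd rfl hne
    · simp [MvPolynomial.coeff_one, Ne.symm h] at hm
  · intro m hm
    rw [MvPolynomial.mem_support_iff] at hm
    rcases eq_or_ne m 0 with rfl | h
    · simp
    · simp [MvPolynomial.coeff_one, Ne.symm h] at hm

lemma mem_support_mul {f g : MvPolynomial (ℕ × ℕ) k} {m} (hm : m ∈ (f * g).support) :
    ∃ a b, (a ∈ f.support ∧ b ∈ g.support ∧ m = a + b) := by
  rw [MvPolynomial.mem_support_iff, MvPolynomial.coeff_mul] at hm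
  obtain ⟨⟨a, b⟩, hab, hne⟩ := Finset.exists_ne_zero_of_sum_ne_zero hm
  refine ⟨a, b, MvPolynomial.mem_support_iff.mpr (fun h => hne (by simp [h])),
    MvPolynomial.mem_support_iff.mpr (fun h => hne (by simp [h])),
    (Finset.HasAntidiagonal.mem_antidiagonal.mp hab).symm⟩

set_option maxHeartbeats 1000000 in
lemma Good.mul {S : Set (ℕ × ℕ)} {f g : MvPolynomial (ℕ × ℕ) k} {m0 m1}
    (hf : Good S f m0) (hg : Good S g m1) : Good S (f * g) (m0 + m1) := by
  have key : ∀ a b : (ℕ × ℕ) →₀ ℕ, a ∈ f.support → b ∈ g.support →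
      (a, b) ≠ (m0, m1) → mlt (m0 + m1) (a + b) := by
    intro a b ha hb hne
    rcases eq_or_ne a m0 with rfl | ha0
    · have hb1 : b ≠ m1 := fun h => hne (by rw [h])
      exact mlt_add_left a (hg.2.1 b hb hb1)
    · rcases eq_or_ne b m1 with rfl | hb1
      · exact mlt_add_right b (hf.2.1 a ha ha0)
      · exact mlt_add (hf.2.1 a ha ha0) (hg.2.1 b hb hb1)
  refine ⟨?_, ?_, ?_⟩
  · have h1 : MvPolynomial.coeff (m0 + m1) (f * g) =
        MvPolynomial.coeff m0 f * MvPolynomial.coeff m1 g := by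
      rw [MvPolynomial.coeff_mul]
      refine Finset.sum_eq_single_of_mem (m0, m1) (Finset.HasAntidiagonal.mem_antidiagonal.mpr rfl) ?_
      rintro ⟨a, b⟩ hab hne
      by_contra hc
      have ha : a ∈ f.support := MvPolynomial.mem_support_iff.mpr
        (fun h => hc (by simp [h]))
      have hb : b ∈ g.support := MvPolynomial.mem_support_iff.mpr
        (fun h => hc (by simp [h]))
      have hsum : a + b = m0 + m1 := Finset.HasAntidiagonal.mem_antidiagonal.mp hab
      have := key a b ha hb hne
      rw [hsum] at this
      exact mlt_irrefl _ this
    rw [h1]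
    exact mul_ne_zero hf.1 hg.1
  · intro m hm hne
    obtain ⟨a, b, ha, hb, rfl⟩ := mem_support_mul hm
    exact key a b ha hb (fun h => hne (by rw [Prod.mk.injEq] at h; rw [h.1, h.2]))
  · intro m hm x hx
    obtain ⟨a, b, ha, hb, rfl⟩ := mem_support_mul hm
    rcases Finset.mem_union.mp (Finsupp.support_add hx) with h | h
    · exact hf.2.2 a ha x h
    · exact hg.2.2 b hb x h

lemma Good.prod {S : Set (ℕ × ℕ)} {ι : Type*} (t : Finset ι)
    (F : ι → MvPolynomial (ℕ × ℕ) k) (M : ι → (ℕ × ℕ) →₀ ℕ)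
    (h : ∀ i ∈ t, Good S (F i) (M i)) :
    Good S (∏ i ∈ t, F i) (∑ i ∈ t, M i) := by
  classical
  induction t using Finset.induction_on with
  | empty => simpa using Good.one S
  | insert a s hx ih =>
    rw [Finset.prod_insert hx, Finset.sum_insert hx]
    exact (h a (Finset.mem_insert_self a s)).mul
      (ih fun i hi => h i (Finset.mem_insert_of_mem hi))


lemma setZero_monomial (j : ℕ × ℕ) (m : (ℕ × ℕ) →₀ ℕ) (c : k) :
    setZero j (monomial m c) = if m j = 0 then monomial m c else 0 := by
  rw [setZero, aeval_monomial]
  by_cases h : m j = 0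
  · rw [if_pos h]
    have hprod : (m.prod fun n e => (if n = j then 0 else X n : MvPolynomial (ℕ × ℕ) k) ^ e)
        = m.prod fun n e => (X n : MvPolynomial (ℕ × ℕ) k) ^ e := by
      apply Finsupp.prod_congr
      intro x hx
      have hxj : x ≠ j := fun hxj => (Finsupp.mem_support_iff.mp (hxj ▸ hx)) h
      rw [if_neg hxj]
    rw [hprod, MvPolynomial.algebraMap_eq, ← monomial_eq]
  · rw [if_neg h]
    have hj : j ∈ m.support := Finsupp.mem_support_iff.mpr h
    rw [Finsupp.prod, Finset.prod_eq_zero hj (by simp [h]), mul_zero]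

lemma setZero_coeff (j : ℕ × ℕ) (p : MvPolynomial (ℕ × ℕ) k) (u : (ℕ × ℕ) →₀ ℕ) :
    MvPolynomial.coeff u (setZero j p) = if u j = 0 then MvPolynomial.coeff u p else 0 := by
  conv_lhs => rw [p.as_sum]
  rw [map_sum, MvPolynomial.coeff_sum]
  simp_rw [setZero_monomial]
  by_cases hu : u j = 0
  · rw [if_pos hu]
    rw [Finset.sum_eq_single u]
    · rcases eq_or_ne (u j) 0 with h | h
      · rw [if_pos h, MvPolynomial.coeff_monomial, if_pos rfl]
      · exact absurd hu h
    · intro m hm hne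
      by_cases h : m j = 0
      · rw [if_pos h, MvPolynomial.coeff_monomial, if_neg hne]
      · rw [if_neg h, MvPolynomial.coeff_zero]
    · intro hnotin
      rw [if_pos hu, MvPolynomial.coeff_monomial, if_pos rfl]
      exact MvPolynomial.notMem_support_iff.mp hnotin
  · rw [if_neg hu]
    apply Finset.sum_eq_zero
    intro m hm
    by_cases h : m j = 0
    · rw [if_pos h, MvPolynomial.coeff_monomial, if_neg (fun he => hu (by rw [← he]; exact h))]
    · rw [if_neg h, MvPolynomial.coeff_zero]

noncomputable def ind (J : List (ℕ × ℕ)) : (ℕ × ℕ) →₀ ℕ :=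
  (J.map fun a => Finsupp.single a 1).sum

@[simp] lemma ind_nil : ind [] = 0 := rfl

@[simp] lemma ind_cons (j : ℕ × ℕ) (J : List (ℕ × ℕ)) :
    ind (j :: J) = Finsupp.single j 1 + ind J := by simp [ind]

lemma ind_apply_of_not_mem {J : List (ℕ × ℕ)} {a} (h : a ∉ J) : ind J a = 0 := by
  induction J with
  | nil => rfl
  | cons j J ih =>
    have h1 : a ≠ j := fun he => h (he ▸ (List.mem_cons_self : j ∈ j :: J))
    have h2 : a ∉ J := fun he => h (List.mem_cons_of_mem _ he)
    simp [Finsupp.single_apply, Ne.symm h1, ih h2]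

lemma ind_apply_of_mem {J : List (ℕ × ℕ)} (hnd : J.Nodup) {a} (h : a ∈ J) : ind J a = 1 := by
  induction J with
  | nil => simp at h
  | cons j J ih =>
    rcases List.mem_cons.mp h with rfl | hmem
    · simp [Finsupp.single_apply, ind_apply_of_not_mem (List.nodup_cons.mp hnd).1]
    · have haj : a ≠ j := fun he => (List.nodup_cons.mp hnd).1 (he ▸ hmem)
      simp [Finsupp.single_apply, Ne.symm haj,
        ih (List.nodup_cons.mp hnd).2 hmem]

lemma rnc_of_good (J : List (ℕ × ℕ)) :
    ∀ f : MvPolynomial (ℕ × ℕ) k, J.Nodup → J.Pairwise vlt →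
    MvPolynomial.coeff (ind J) f ≠ 0 →
    (∀ m ∈ f.support, m ≠ ind J → mlt (ind J) m) →
    (∀ m ∈ f.support, ∀ a ∈ m.support, a ∈ J) →
    IsRNC f J := by
  induction J with
  | nil =>
    intro f _ _ h1 _ h3
    refine ⟨MvPolynomial.coeff 0 f, by simpa using h1, ?_⟩
    apply MvPolynomial.ext
    intro m
    rcases eq_or_ne m 0 with rfl | hne
    · simp [MvPolynomial.coeff_C]
    · rw [MvPolynomial.coeff_C, if_neg (Ne.symm hne)]
      by_contra hc
      have hm : m ∈ f.support := MvPolynomial.mem_support_iff.mpr hc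
      have : m.support = ∅ := by
        by_contra hs
        obtain ⟨a, ha⟩ := Finset.nonempty_iff_ne_empty.mpr hs
        simpa using h3 m hm a ha
      exact hne (Finsupp.support_eq_empty.mp this)
  | cons j J IH =>
    intro f hnd hsort h1 h2 h3
    have hjJ : j ∉ J := (List.nodup_cons.mp hnd).1
    have hndJ : J.Nodup := (List.nodup_cons.mp hnd).2
    have hsJ : J.Pairwise vlt := (List.pairwise_cons.mp hsort).2
    have hjlt : ∀ a ∈ J, vlt j a := (List.pairwise_cons.mp hsort).1
    have hindJj : ind J j = 0 := ind_apply_of_not_mem hjJ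
    have hindj : ind (j :: J) j = 1 := by
      simp [Finsupp.single_apply, hindJj]
    -- every monomial of f is divisible by X j
    have hdvd : ∀ m ∈ f.support, m j ≠ 0 := by
      intro m hm
      rcases eq_or_ne m (ind (j :: J)) with rfl | hne
      · rw [hindj]; omega
      · obtain ⟨a, hpre, ha⟩ := h2 m hm hne
        intro hmj
        rcases eq_or_ne a j with rfl | haj
        · rw [hindj, hmj] at ha; omega
        · rcases vlt_total haj with hv | hv
          · have ham : a ∈ m.support := Finsupp.mem_support_iff.mpr (by omega)
            rcases List.mem_cons.mp (h3 m hm a ham) with rfl | hmem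
            · exact haj rfl
            · exact vlt_asymm hv (hjlt a hmem)
          · have := hpre j hv
            rw [hindj, hmj] at this
            omega
    classical
    -- the quotient by X j
    set h : MvPolynomial (ℕ × ℕ) k :=
      ∑ m ∈ f.support, MvPolynomial.monomial (m - Finsupp.single j 1) (MvPolynomial.coeff m f)
      with hh
    have hsle : ∀ m ∈ f.support, Finsupp.single j 1 ≤ m := by
      intro m hm
      rw [Finsupp.single_le_iff]
      exact Nat.one_le_iff_ne_zero.mpr (hdvd m hm)
    have hcoeff : ∀ u : (ℕ × ℕ) →₀ ℕ,
        MvPolynomial.coeff u h = MvPolynomial.coeff (u + Finsupp.single j 1) f := by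
      intro u
      rw [hh, MvPolynomial.coeff_sum]
      rw [Finset.sum_eq_single (u + Finsupp.single j 1)]
      · rw [add_tsub_cancel_right, MvPolynomial.coeff_monomial, if_pos rfl]
      · intro m hm hne
        rw [MvPolynomial.coeff_monomial]
        refine if_neg (fun he => hne ?_)
        rw [← he, tsub_add_cancel_of_le (hsle m hm)]
      · intro hnotin
        rw [add_tsub_cancel_right, MvPolynomial.coeff_monomial, if_pos rfl]
        exact MvPolynomial.notMem_support_iff.mp hnotin
    have hfXh : f = X j * h := by
      apply MvPolynomial.ext
      intro u
      rw [MvPolynomial.coeff_X_mul']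
      by_cases hju : j ∈ u.support
      · rw [if_pos hju, hcoeff, tsub_add_cancel_of_le
          (Finsupp.single_le_iff.mpr (Nat.one_le_iff_ne_zero.mpr (Finsupp.mem_support_iff.mp hju)))]
      · rw [if_neg hju]
        by_contra hc
        exact hju (Finsupp.mem_support_iff.mpr
          (hdvd u (MvPolynomial.mem_support_iff.mpr (fun h0 => hc (by rw [h0])))))
    refine ⟨h, hfXh, ?_⟩
    apply IH (setZero j h) hndJ hsJ
    · rw [setZero_coeff, if_pos hindJj, hcoeff]
      have : ind J + Finsupp.single j 1 = ind (j :: J) := by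
        rw [ind_cons, add_comm]
      rw [this]
      exact h1
    · intro m hm hne
      rw [MvPolynomial.mem_support_iff, setZero_coeff] at hm
      by_cases hmj : m j = 0
      · rw [if_pos hmj] at hm
        have hmem : m + Finsupp.single j 1 ∈ f.support := by
          rw [MvPolynomial.mem_support_iff, ← hcoeff]
          exact hm
        have hne' : m + Finsupp.single j 1 ≠ ind (j :: J) := by
          intro he
          apply hne
          have : ind (j :: J) = ind J + Finsupp.single j 1 := by rw [ind_cons, add_comm]
          rw [this] at he
          exact add_right_cancel he
        obtain ⟨a, hpre, ha⟩ := h2 _ hmem hne'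
        have hindcons : ind (j :: J) = ind J + Finsupp.single j 1 := by
          rw [ind_cons, add_comm]
        rw [hindcons] at ha hpre
        have haj : a ≠ j := by
          intro rfl'
          subst rfl'
          simp [Finsupp.add_apply, Finsupp.single_apply, hindJj, hmj] at ha
        refine ⟨a, ?_, ?_⟩
        · intro b hb
          have := hpre b hb
          simpa [Finsupp.add_apply] using this
        · simpa [Finsupp.add_apply, Finsupp.single_apply, Ne.symm haj] using ha
      · rw [if_neg hmj] at hm
        exact absurd rfl hm
    · intro m hm a ham
      rw [MvPolynomial.mem_support_iff, setZero_coeff] at hm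
      by_cases hmj : m j = 0
      · rw [if_pos hmj] at hm
        have hmem : m + Finsupp.single j 1 ∈ f.support := by
          rw [MvPolynomial.mem_support_iff, ← hcoeff]
          exact hm
        have ham' : a ∈ (m + Finsupp.single j 1).support := by
          rw [Finsupp.mem_support_iff] at ham ⊢
          simp [Finsupp.add_apply]
          omega
        rcases List.mem_cons.mp (h3 _ hmem a ham') with rfl | hmem2
        · exact absurd hmj (Finsupp.mem_support_iff.mp ham)
        · exact hmem2
      · rw [if_neg hmj] at hm
        exact absurd rfl hm

open scoped Classical in
noncomputable def monR {s : ℕ} (R Cc : Fin s → ℕ) (τ : Equiv.Perm (Fin s)) : (ℕ × ℕ) →₀ ℕ :=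
  ∑ p : Fin s, if R p = Cc (τ p) then 0 else Finsupp.single (R p, Cc (τ p)) 1

def rev {s : ℕ} (p : Fin s) : Fin s := ⟨s - 1 - (p : ℕ), by have := p.isLt; omega⟩

def revPerm (s : ℕ) : Equiv.Perm (Fin s) :=
  ⟨rev, rev, fun p => Fin.ext (by simp only [rev]; have := p.isLt; omega),
    fun p => Fin.ext (by simp only [rev]; have := p.isLt; omega)⟩

open scoped Classical in
lemma monR_apply {s : ℕ} {R Cc : Fin s → ℕ} (hR : Function.Injective R)
    (τ : Equiv.Perm (Fin s)) (r c : ℕ) :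
    monR R Cc τ (r, c) =
      if ∃ p, R p = r ∧ Cc (τ p) = c ∧ R p ≠ Cc (τ p) then 1 else 0 := by
  rw [monR, Finsupp.finset_sum_apply]
  have hterm : ∀ p : Fin s,
      ((if R p = Cc (τ p) then 0 else Finsupp.single (R p, Cc (τ p)) 1) : (ℕ × ℕ) →₀ ℕ) (r, c)
      = if R p = r ∧ Cc (τ p) = c ∧ R p ≠ Cc (τ p) then 1 else 0 := by
    intro p
    by_cases heq : R p = Cc (τ p)
    · rw [if_pos heq, if_neg (by tauto)]
      rfl
    · rw [if_neg heq, Finsupp.single_apply]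
      by_cases h2 : R p = r ∧ Cc (τ p) = c
      · rw [if_pos (Prod.ext h2.1 h2.2), if_pos ⟨h2.1, h2.2, heq⟩]
      · rw [if_neg (fun he => h2 ⟨congrArg Prod.fst he, congrArg Prod.snd he⟩),
          if_neg (by tauto)]
  rw [Finset.sum_congr rfl (fun p _ => hterm p)]
  by_cases hex : ∃ p, R p = r ∧ Cc (τ p) = c ∧ R p ≠ Cc (τ p)
  · obtain ⟨p0, hp0⟩ := hex
    rw [if_pos ⟨p0, hp0⟩]
    rw [Finset.sum_eq_single p0]
    · rw [if_pos hp0]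
    · intro q _ hq
      refine if_neg (fun hc => hq (hR ?_))
      rw [hc.1, hp0.1]
    · intro habs; exact absurd (Finset.mem_univ p0) habs
  · rw [if_neg hex]
    apply Finset.sum_eq_zero
    intro p _
    exact if_neg (fun hc => hex ⟨p, hc⟩)

lemma zent_eq_monomial (i j : ℕ) (hji : j ≤ i) :
    Zent k i j = MvPolynomial.monomial
      (if i = j then 0 else Finsupp.single (i, j) 1) (1 : k) := by
  by_cases h : i = j
  · rw [Zent, if_pos h, if_pos h, MvPolynomial.monomial_zero', map_one]
  · rw [Zent, if_neg h, if_neg h, if_pos (by omega)]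
    rfl

lemma prod_monomial_one {ι : Type*} (t : Finset ι) (d : ι → ((ℕ × ℕ) →₀ ℕ)) :
    (∏ i ∈ t, MvPolynomial.monomial (d i) (1 : k)) =
      MvPolynomial.monomial (∑ i ∈ t, d i) 1 := by
  classical
  induction t using Finset.cons_induction with
  | empty => simp [MvPolynomial.monomial_zero']
  | cons a s ha ih => rw [Finset.prod_cons, Finset.sum_cons, ih, MvPolynomial.monomial_mul, one_mul]

lemma det_zent_eq {s : ℕ} (R Cc : Fin s → ℕ) (hle : ∀ p q, Cc q ≤ R p) :
    (Matrix.of fun p q : Fin s => Zent k (R p) (Cc q)).det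
      = ∑ τ : Equiv.Perm (Fin s),
          MvPolynomial.monomial (monR R Cc τ) (((Equiv.Perm.sign τ : ℤ) : k)) := by
  rw [← Matrix.det_transpose, Matrix.det_apply']
  apply Finset.sum_congr rfl
  intro τ _
  simp only [Matrix.transpose_apply, Matrix.of_apply]
  rw [Finset.prod_congr rfl (fun p _ => zent_eq_monomial (R p) (Cc (τ p)) (hle p (τ p)))]
  rw [prod_monomial_one, ← map_intCast (MvPolynomial.C : k →+* MvPolynomial (ℕ × ℕ) k),
    MvPolynomial.C_mul_monomial, mul_one]
  rfl

open scoped Classical in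
lemma ite_one_zero_eq_one {c : Prop} [Decidable c] (h : (if c then (1:ℕ) else 0) = 1) : c := by
  by_cases hc : c
  · exact hc
  · rw [if_neg hc] at h; omega

lemma monR_inj {s : ℕ} {R Cc : Fin s → ℕ} (hR : Function.Injective R)
    (hC : Function.Injective Cc)
    (heq : ∀ p q : Fin s, Cc q = R p → (p : ℕ) = 0 ∧ (q : ℕ) = s - 1)
    {τ τ' : Equiv.Perm (Fin s)} (h : monR R Cc τ = monR R Cc τ') : τ = τ' := by
  apply Equiv.ext
  intro p
  by_cases h1 : R p = Cc (τ p)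
  · by_cases h2 : R p = Cc (τ' p)
    · have e1 := heq p (τ p) h1.symm
      have e2 := heq p (τ' p) h2.symm
      exact Fin.ext (by omega)
    · have hv' : monR R Cc τ' ((R p, Cc (τ' p)) : ℕ × ℕ) = 1 := by
        rw [monR_apply hR]
        exact if_pos ⟨p, rfl, rfl, h2⟩
      rw [← h, monR_apply hR] at hv'
      obtain ⟨p', e1, e2, e3⟩ := ite_one_zero_eq_one hv'
      have hpp : p' = p := hR e1
      subst hpp
      exact absurd h1 e3
  · have hv : monR R Cc τ' ((R p, Cc (τ p)) : ℕ × ℕ) = 1 := by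
      rw [← h, monR_apply hR]
      exact if_pos ⟨p, rfl, rfl, h1⟩
    rw [monR_apply hR] at hv
    obtain ⟨p', e1, e2, e3⟩ := ite_one_zero_eq_one hv
    have hpp : p' = p := hR e1
    subst hpp
    exact (hC e2).symm

lemma monR_mlt {s : ℕ} {R Cc : Fin s → ℕ} (hR : StrictMono R) (hC : StrictMono Cc)
    (heq : ∀ p q : Fin s, Cc q = R p → (p : ℕ) = 0 ∧ (q : ℕ) = s - 1)
    {τ : Equiv.Perm (Fin s)} (hτ : τ ≠ revPerm s) :
    mlt (monR R Cc (revPerm s)) (monR R Cc τ) := by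
  classical
  have hRi : Function.Injective R := hR.injective
  have hCi : Function.Injective Cc := hC.injective
  set diffs : Finset (Fin s) := Finset.univ.filter (fun p => τ p ≠ revPerm s p) with hdiffs
  have hne : diffs.Nonempty := by
    rw [hdiffs, Finset.filter_nonempty_iff]
    by_contra hc
    push_neg at hc
    exact hτ (Equiv.ext (fun p => by
      by_cases hp : τ p = revPerm s p
      · exact hp
      · exact absurd hp (by simpa using hc p (Finset.mem_univ p))))
  set p0 : Fin s := diffs.min' hne with hp0
  have hp0mem : τ p0 ≠ revPerm s p0 := by
    have h := Finset.min'_mem diffs hne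
    rw [Finset.mem_filter] at h
    exact h.2
  have hmin : ∀ p : Fin s, p < p0 → τ p = revPerm s p := by
    intro p hp
    by_contra hc
    have hmem : p ∈ diffs := by rw [Finset.mem_filter]; exact ⟨Finset.mem_univ p, hc⟩
    exact absurd (Finset.min'_le diffs p hmem) (not_le.mpr hp)
  set v : Fin s := τ p0 with hvdef
  have hrevval : ((revPerm s p0 : Fin s) : ℕ) = s - 1 - (p0 : ℕ) := rfl
  have hvne : (v : ℕ) ≠ s - 1 - (p0 : ℕ) := fun hc => hp0mem (Fin.ext (by rw [hrevval]; exact hc))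
  have hvlt : (v : ℕ) < s - 1 - (p0 : ℕ) := by
    by_contra hc
    push_neg at hc
    have h1 := p0.isLt
    have h2 := v.isLt
    set p' : Fin s := ⟨s - 1 - (v : ℕ), by omega⟩ with hp'
    have hp'lt : p' < p0 := by
      rw [Fin.lt_def]
      show s - 1 - (v : ℕ) < (p0 : ℕ)
      omega
    have hτp' : τ p' = v := by
      apply Fin.ext
      rw [hmin p' hp'lt]
      show s - 1 - (s - 1 - (v : ℕ)) = (v : ℕ)
      omega
    have : p' = p0 := τ.injective (by rw [hτp', hvdef])
    have : (p' : ℕ) = (p0 : ℕ) := congrArg Fin.val this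
    simp only [hp'] at this
    omega
  refine ⟨((R p0, Cc v) : ℕ × ℕ), ?_, ?_⟩
  · rintro ⟨r, c⟩ hb
    rw [monR_apply hRi, monR_apply hRi]
    have hb' : r < R p0 ∨ (r = R p0 ∧ c < Cc v) := hb
    have hCvlt : Cc v < Cc (revPerm s p0) := hC (by rw [Fin.lt_def, hrevval]; exact hvlt)
    have hiff : (∃ p, R p = r ∧ Cc ((revPerm s) p) = c ∧ R p ≠ Cc ((revPerm s) p)) ↔
        (∃ p, R p = r ∧ Cc (τ p) = c ∧ R p ≠ Cc (τ p)) := by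
      constructor
      · rintro ⟨p, rfl, hc2, hc3⟩
        rcases hb' with hlt | ⟨heqr, hclt⟩
        · have hplt : p < p0 := hR.lt_iff_lt.mp hlt
          exact ⟨p, rfl, by rw [hmin p hplt]; exact hc2, by rw [hmin p hplt]; exact hc3⟩
        · exfalso
          have hpp : p = p0 := hRi heqr
          subst hpp
          rw [hc2] at hCvlt
          omega
      · rintro ⟨p, rfl, hc2, hc3⟩
        rcases hb' with hlt | ⟨heqr, hclt⟩
        · have hplt : p < p0 := hR.lt_iff_lt.mp hlt
          exact ⟨p, rfl, by rw [← hmin p hplt]; exact hc2, by rw [← hmin p hplt]; exact hc3⟩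
        · exfalso
          have hpp : p = p0 := hRi heqr
          subst hpp
          rw [← hvdef] at hc2
          omega
    rw [if_congr hiff rfl rfl]
  · rw [monR_apply hRi, monR_apply hRi]
    have h0 : ¬ (∃ p, R p = R p0 ∧ Cc ((revPerm s) p) = Cc v ∧ R p ≠ Cc ((revPerm s) p)) := by
      rintro ⟨p, h1, h2, h3⟩
      have hpp : p = p0 := hRi h1
      subst hpp
      have := hCi h2
      have := congrArg Fin.val this
      rw [hrevval] at this
      omega
    have h1 : (∃ p, R p = R p0 ∧ Cc (τ p) = Cc v ∧ R p ≠ Cc (τ p)) := by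
      refine ⟨p0, rfl, rfl, fun hc => ?_⟩
      obtain ⟨e1, e2⟩ := heq p0 (τ p0) hc.symm
      rw [← hvdef] at e2
      omega
    rw [if_neg h0, if_pos h1]
    omega

lemma sign_cast_ne_zero {s : ℕ} (τ : Equiv.Perm (Fin s)) :
    (((Equiv.Perm.sign τ : ℤ) : k)) ≠ 0 := by
  rcases Int.units_eq_one_or (Equiv.Perm.sign τ) with h | h <;> rw [h] <;> simp

lemma good_det {n : ℕ} (s : ℕ) (R Cc : Fin s → ℕ)
    (hR : StrictMono R) (hC : StrictMono Cc)
    (hle : ∀ p q, Cc q ≤ R p)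
    (heq : ∀ p q : Fin s, Cc q = R p → (p : ℕ) = 0 ∧ (q : ℕ) = s - 1)
    (hRn : ∀ p, R p ≤ n) (hC1 : ∀ q, 1 ≤ Cc q) :
    Good {a : ℕ × ℕ | 1 ≤ a.2 ∧ a.2 < a.1 ∧ a.1 ≤ n}
      ((Matrix.of fun p q : Fin s => Zent k (R p) (Cc q)).det)
      (monR R Cc (revPerm s)) := by
  classical
  have hRi : Function.Injective R := hR.injective
  have hCi : Function.Injective Cc := hC.injective
  rw [det_zent_eq R Cc hle]
  have hsupp : ∀ m, m ∈ (∑ τ : Equiv.Perm (Fin s),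
      MvPolynomial.monomial (monR R Cc τ) (((Equiv.Perm.sign τ : ℤ) : k))).support →
      ∃ τ, m = monR R Cc τ := by
    intro m hm
    rw [MvPolynomial.mem_support_iff, MvPolynomial.coeff_sum] at hm
    obtain ⟨τ, _, hτ⟩ := Finset.exists_ne_zero_of_sum_ne_zero hm
    rw [MvPolynomial.coeff_monomial] at hτ
    by_cases hc : monR R Cc τ = m
    · exact ⟨τ, hc.symm⟩
    · rw [if_neg hc] at hτ
      exact absurd rfl hτ
  refine ⟨?_, ?_, ?_⟩
  · have hval : MvPolynomial.coeff (monR R Cc (revPerm s)) (∑ τ : Equiv.Perm (Fin s),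
        MvPolynomial.monomial (monR R Cc τ) (((Equiv.Perm.sign τ : ℤ) : k)))
        = ((Equiv.Perm.sign (revPerm s) : ℤ) : k) := by
      rw [MvPolynomial.coeff_sum]
      rw [Finset.sum_eq_single_of_mem (revPerm s) (Finset.mem_univ _)]
      · rw [MvPolynomial.coeff_monomial, if_pos rfl]
      · intro τ _ hτ
        rw [MvPolynomial.coeff_monomial]
        refine if_neg (fun hc => hτ (monR_inj hRi hCi heq hc))
    rw [hval]
    exact sign_cast_ne_zero (revPerm s)
  · intro m hm hne
    obtain ⟨τ, rfl⟩ := hsupp m hm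
    have hτ : τ ≠ revPerm s := fun hc => hne (by rw [hc])
    exact monR_mlt hR hC heq hτ
  · intro m hm a ha
    obtain ⟨τ, rfl⟩ := hsupp m hm
    rcases a with ⟨r, c⟩
    have hval : monR R Cc τ (r, c) ≠ 0 := Finsupp.mem_support_iff.mp ha
    rw [monR_apply hRi] at hval
    by_cases hex : ∃ p, R p = r ∧ Cc (τ p) = c ∧ R p ≠ Cc (τ p)
    · obtain ⟨p, rfl, hc2, hc3⟩ := hex
      subst hc2
      refine ⟨hC1 _, ?_, hRn p⟩
      have := hle p (τ p)
      omega
    · rw [if_neg hex] at hval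
      exact absurd rfl hval

lemma rename_zent (n i j : ℕ) (hji : j ≤ i) (hin : i ≤ n) :
    rename (fun p : ℕ × ℕ => (n + 1 - p.2, n + 1 - p.1)) (Zent k i j)
      = Zent k (n + 1 - j) (n + 1 - i) := by
  by_cases h : i = j
  · subst h
    rw [Zent, if_pos rfl, Zent, if_pos rfl, map_one]
  · have hlt : j < i := by omega
    rw [Zent, if_neg h, if_pos hlt, rename_X, Zent, if_neg (by omega), if_pos (by omega)]

def Rf (s : ℕ) : Fin (s - s / 2) → ℕ := fun p => s / 2 + 1 + (p : ℕ)
def Cf (s : ℕ) : Fin (s - s / 2) → ℕ := fun q => (q : ℕ) + 1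
def Rg (n s : ℕ) : Fin (s - s / 2) → ℕ := fun p => n - (s - s / 2) + 1 + (p : ℕ)
def Cg (n s : ℕ) : Fin (s - s / 2) → ℕ := fun q => n - s + 1 + (q : ℕ)

lemma good_f (n s : ℕ) (hs : 1 ≤ s) (hsn : s ≤ n) :
    Good {a : ℕ × ℕ | 1 ≤ a.2 ∧ a.2 < a.1 ∧ a.1 ≤ n}
      (vminor k (fun p : Fin (s - s / 2) => s / 2 + 1 + (p : ℕ)))
      (monR (Rf s) (Cf s) (revPerm (s - s / 2))) := by
  have h := good_det (k := k) (n := n) (s - s / 2) (Rf s) (Cf s)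
    (fun a b hab => by simp only [Rf]; omega)
    (fun a b hab => by simp only [Cf]; omega)
    (fun p q => by have h1 := p.isLt; have h2 := q.isLt; simp only [Rf, Cf]; omega)
    (fun p q hpq => by
      have h1 := p.isLt; have h2 := q.isLt
      simp only [Rf, Cf] at hpq ⊢
      omega)
    (fun p => by have h1 := p.isLt; simp only [Rf]; omega)
    (fun q => by simp only [Cf]; omega)
  exact h

lemma g_factor_eq (n s : ℕ) (hs : 1 ≤ s) (hsn : s ≤ n - 1) (hn : 2 ≤ n) :
    rename (fun p : ℕ × ℕ => (n + 1 - p.2, n + 1 - p.1))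
      (vminor k (fun p : Fin (s - s / 2) => s / 2 + 1 + (p : ℕ)))
    = (Matrix.of fun p q : Fin (s - s / 2) => Zent k (Rg n s p) (Cg n s q)).det := by
  rw [vminor, AlgHom.map_det]
  show ((Matrix.of fun p q : Fin (s - s / 2) =>
      Zent k (s / 2 + 1 + (p : ℕ)) ((q : ℕ) + 1)).map
        (rename fun p : ℕ × ℕ => (n + 1 - p.2, n + 1 - p.1))).det = _
  have hmap : (Matrix.of fun p q : Fin (s - s / 2) =>
        Zent k (s / 2 + 1 + (p : ℕ)) ((q : ℕ) + 1)).map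
          (rename fun p : ℕ × ℕ => (n + 1 - p.2, n + 1 - p.1))
      = Matrix.transpose ((Matrix.of fun p q : Fin (s - s / 2) =>
          Zent k (Rg n s p) (Cg n s q)).submatrix
          (revPerm (s - s / 2)) (revPerm (s - s / 2))) := by
    ext p q
    have h1 := p.isLt
    have h2 := q.isLt
    rw [Matrix.map_apply, Matrix.of_apply, rename_zent n _ _ (by omega) (by omega)]
    rw [Matrix.transpose_apply, Matrix.submatrix_apply, Matrix.of_apply]
    have hv1 : ((revPerm (s - s / 2) q : Fin (s - s / 2)) : ℕ) = s - s / 2 - 1 - (q : ℕ) := rfl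
    have hv2 : ((revPerm (s - s / 2) p : Fin (s - s / 2)) : ℕ) = s - s / 2 - 1 - (p : ℕ) := rfl
    have e1 : n + 1 - ((q : ℕ) + 1) = Rg n s (revPerm (s - s / 2) q) := by
      simp only [Rg, hv1]; omega
    have e2 : n + 1 - (s / 2 + 1 + (p : ℕ)) = Cg n s (revPerm (s - s / 2) p) := by
      simp only [Cg, hv2]; omega
    rw [e1, e2]
  rw [hmap, Matrix.det_transpose, Matrix.det_submatrix_equiv_self]

lemma good_g (n s : ℕ) (hs : 1 ≤ s) (hsn : s ≤ n - 1) (hn : 2 ≤ n) :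
    Good {a : ℕ × ℕ | 1 ≤ a.2 ∧ a.2 < a.1 ∧ a.1 ≤ n}
      (rename (fun p : ℕ × ℕ => (n + 1 - p.2, n + 1 - p.1))
        (vminor k (fun p : Fin (s - s / 2) => s / 2 + 1 + (p : ℕ))))
      (monR (Rg n s) (Cg n s) (revPerm (s - s / 2))) := by
  rw [g_factor_eq n s hs hsn hn]
  exact good_det (k := k) (n := n) (s - s / 2) (Rg n s) (Cg n s)
    (fun a b hab => by simp only [Rg]; omega)
    (fun a b hab => by simp only [Cg]; omega)
    (fun p q => by have h1 := p.isLt; have h2 := q.isLt; simp only [Rg, Cg]; omega)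
    (fun p q hpq => by
      have h1 := p.isLt; have h2 := q.isLt
      simp only [Rg, Cg] at hpq ⊢
      omega)
    (fun p => by have h1 := p.isLt; simp only [Rg]; omega)
    (fun q => by have h1 := q.isLt; simp only [Cg]; omega)

lemma good_F (n : ℕ) (hn : 2 ≤ n) :
    Good {a : ℕ × ℕ | 1 ≤ a.2 ∧ a.2 < a.1 ∧ a.1 ≤ n}
      (fRNC k n * gRNC k n (n - 1))
      ((∑ s ∈ Finset.Icc 1 n, monR (Rf s) (Cf s) (revPerm (s - s / 2))) +
        ∑ s ∈ Finset.Icc 1 (n - 1), monR (Rg n s) (Cg n s) (revPerm (s - s / 2))) := by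
  apply Good.mul
  · rw [fRNC]
    exact Good.prod _ _ _ (fun s hs => by
      have := Finset.mem_Icc.mp hs
      exact good_f n s this.1 this.2)
  · rw [gRNC, fRNC, map_prod]
    exact Good.prod _ _ _ (fun s hs => by
      have := Finset.mem_Icc.mp hs
      exact good_g n s this.1 this.2 hn)

lemma Mf_apply (s : ℕ) (hs : 1 ≤ s) (i j : ℕ) :
    monR (Rf s) (Cf s) (revPerm (s - s / 2)) ((i, j) : ℕ × ℕ)
      = if i + j = s + 1 ∧ j < i ∧ 1 ≤ j then 1 else 0 := by
  rw [monR_apply (fun a b hab => by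
    simp only [Rf] at hab
    exact Fin.ext (by omega))]
  refine if_congr ?_ rfl rfl
  constructor
  · rintro ⟨p, h1, h2, h3⟩
    have hp := p.isLt
    have hrev : ((revPerm (s - s / 2) p : Fin (s - s / 2)) : ℕ) = s - s / 2 - 1 - (p : ℕ) := rfl
    simp only [Rf, Cf, hrev] at h1 h2 h3
    omega
  · rintro ⟨h1, h2, h3⟩
    refine ⟨⟨i - s / 2 - 1, by omega⟩, ?_, ?_, ?_⟩
    · show s / 2 + 1 + (i - s / 2 - 1) = i
      omega
    · show (s - s / 2 - 1 - (i - s / 2 - 1)) + 1 = j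
      omega
    · show s / 2 + 1 + (i - s / 2 - 1) ≠ (s - s / 2 - 1 - (i - s / 2 - 1)) + 1
      omega

lemma Mg_apply (n s : ℕ) (hs : 1 ≤ s) (hsn : s ≤ n - 1) (hn : 2 ≤ n) (i j : ℕ) :
    monR (Rg n s) (Cg n s) (revPerm (s - s / 2)) ((i, j) : ℕ × ℕ)
      = if i + j = 2 * n + 1 - s ∧ j < i ∧ i ≤ n then 1 else 0 := by
  rw [monR_apply (fun a b hab => by
    simp only [Rg] at hab
    exact Fin.ext (by omega))]
  refine if_congr ?_ rfl rfl
  constructor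
  · rintro ⟨p, h1, h2, h3⟩
    have hp := p.isLt
    have hrev : ((revPerm (s - s / 2) p : Fin (s - s / 2)) : ℕ) = s - s / 2 - 1 - (p : ℕ) := rfl
    simp only [Rg, Cg, hrev] at h1 h2 h3
    omega
  · rintro ⟨h1, h2, h3⟩
    refine ⟨⟨i - (n - (s - s / 2) + 1), by omega⟩, ?_, ?_, ?_⟩
    · show n - (s - s / 2) + 1 + (i - (n - (s - s / 2) + 1)) = i
      omega
    · show n - s + 1 + (s - s / 2 - 1 - (i - (n - (s - s / 2) + 1))) = j
      omega
    · show n - (s - s / 2) + 1 + (i - (n - (s - s / 2) + 1))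
        ≠ n - s + 1 + (s - s / 2 - 1 - (i - (n - (s - s / 2) + 1)))
      omega

lemma Mtotal_apply (n : ℕ) (hn : 2 ≤ n) (i j : ℕ) :
    ((∑ s ∈ Finset.Icc 1 n, monR (Rf s) (Cf s) (revPerm (s - s / 2))) +
      ∑ s ∈ Finset.Icc 1 (n - 1), monR (Rg n s) (Cg n s) (revPerm (s - s / 2)))
      ((i, j) : ℕ × ℕ)
      = if 1 ≤ j ∧ j < i ∧ i ≤ n then 1 else 0 := by
  rw [Finsupp.add_apply, Finsupp.finset_sum_apply, Finsupp.finset_sum_apply]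
  rw [Finset.sum_congr rfl (fun s hs => Mf_apply s (Finset.mem_Icc.mp hs).1 i j),
    Finset.sum_congr rfl (fun s hs =>
      Mg_apply n s (Finset.mem_Icc.mp hs).1 (Finset.mem_Icc.mp hs).2 hn i j)]
  by_cases hbox : 1 ≤ j ∧ j < i ∧ i ≤ n
  · rw [if_pos hbox]
    by_cases hd : i + j ≤ n + 1
    · rw [Finset.sum_eq_single_of_mem (i + j - 1)
          (Finset.mem_Icc.mpr ⟨by omega, by omega⟩)
          (fun s _ hne => if_neg (by omega)), if_pos (by omega)]
      rw [Finset.sum_eq_zero (fun s hs => if_neg (by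
        have := Finset.mem_Icc.mp hs; omega))]
      omega
    · rw [Finset.sum_eq_zero (fun s hs => if_neg (by
        have := Finset.mem_Icc.mp hs; omega))]
      rw [Finset.sum_eq_single_of_mem (2 * n + 1 - (i + j))
          (Finset.mem_Icc.mpr ⟨by omega, by omega⟩)
          (fun s hs hne => if_neg (by have := Finset.mem_Icc.mp hs; omega)),
        if_pos (by omega)]
  · rw [if_neg hbox]
    rw [Finset.sum_eq_zero (fun s hs => if_neg (by
        have := Finset.mem_Icc.mp hs; omega)),
      Finset.sum_eq_zero (fun s hs => if_neg (by
        have := Finset.mem_Icc.mp hs; omega))]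
    omega

def rle : ℕ × ℕ → ℕ × ℕ → Prop := fun p q => vlt p q ∨ p = q

instance : DecidableRel rle := fun p q => by
  unfold rle vlt
  exact inferInstance

instance : IsTrans (ℕ × ℕ) rle :=
  ⟨fun a b c hab hbc => by
    rcases hab with h1 | rfl
    · rcases hbc with h2 | rfl
      · exact Or.inl (vlt_trans h1 h2)
      · exact Or.inl h1
    · exact hbc⟩

instance : IsAntisymm (ℕ × ℕ) rle :=
  ⟨fun a b hab hba => by
    rcases hab with h1 | rfl
    · rcases hba with h2 | rfl
      · exact absurd h2 (fun h => vlt_asymm h1 h)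
      · rfl
    · rfl⟩

instance : IsTotal (ℕ × ℕ) rle :=
  ⟨fun a b => by
    rcases eq_or_ne a b with rfl | h
    · exact Or.inl (Or.inr rfl)
    · rcases vlt_total h with h1 | h1
      · exact Or.inl (Or.inl h1)
      · exact Or.inr (Or.inl h1)⟩

def lBox (n : ℕ) : List (ℕ × ℕ) :=
  ((Finset.Icc 1 n ×ˢ Finset.Icc 1 n).filter fun p => p.2 < p.1).sort rle

lemma lBox_mem (n : ℕ) (p : ℕ × ℕ) : p ∈ lBox n ↔ 1 ≤ p.2 ∧ p.2 < p.1 ∧ p.1 ≤ n := by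
  rw [lBox, Finset.mem_sort, Finset.mem_filter, Finset.mem_product, Finset.mem_Icc,
    Finset.mem_Icc]
  omega

lemma lBox_nodup (n : ℕ) : (lBox n).Nodup := Finset.sort_nodup _ _

lemma lBox_pairwise (n : ℕ) : (lBox n).Pairwise vlt := by
  have h1 : (lBox n).Pairwise rle := Finset.pairwise_sort _ _
  have h2 : (lBox n).Pairwise (· ≠ ·) := lBox_nodup n
  exact (h1.and h2).imp (fun {a b} hab => by
    rcases hab.1 with h | h
    · exact h
    · exact absurd h hab.2)

end RNCproof

theorem stmt6 (k : Type*) [Field k] (n : ℕ) (hn : 2 ≤ n) :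
    ∃ l : List (ℕ × ℕ), l.Nodup ∧
      (∀ p : ℕ × ℕ, p ∈ l ↔ 1 ≤ p.2 ∧ p.2 < p.1 ∧ p.1 ≤ n) ∧
      IsRNC (fRNC k n * gRNC k n (n - 1)) l := by
  obtain ⟨h1, h2, h3⟩ := good_F (k := k) n hn
  have hind : ind (lBox n) =
      ((∑ s ∈ Finset.Icc 1 n, monR (Rf s) (Cf s) (revPerm (s - s / 2))) +
        ∑ s ∈ Finset.Icc 1 (n - 1), monR (Rg n s) (Cg n s) (revPerm (s - s / 2))) := by
    apply Finsupp.ext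
    rintro ⟨i, j⟩
    rw [Mtotal_apply n hn i j]
    by_cases h : 1 ≤ j ∧ j < i ∧ i ≤ n
    · rw [if_pos h, ind_apply_of_mem (lBox_nodup n) ((lBox_mem n (i, j)).mpr h)]
    · rw [if_neg h, ind_apply_of_not_mem (fun hc => h ((lBox_mem n (i, j)).mp hc))]
  refine ⟨lBox n, lBox_nodup n, fun p => lBox_mem n p, ?_⟩
  apply rnc_of_good (lBox n) _ (lBox_nodup n) (lBox_pairwise n)
  · rw [hind]
    exact h1
  · intro m hm hne
    rw [hind]
    exact h2 m hm (fun hc => hne (by rw [hind, ← hc]))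
  · intro m hm a ha
    exact (lBox_mem n a).mpr (h3 m hm a ha)
end

section
/- Let i, j ≥ 0 with i + j ≤ n, let g, h be n×n matrices over R, and let a = (a_1 < ⋯ < a_{i+j}) be an increasing sequence in {1,…,n}. Then det N_{i,j}(g,h;a) = Σ_{γ ∈ Sh_{i,j}} sgn(γ) · m(g; (a_{γ(1)},…,a_{γ(i)})) · m(h; (a_{γ(i+1)},…,a_{γ(i+j)})), where Sh_{i,j} is the set of (i,j)-shuffles, i.e. permutations γ of {1,…,i+j} with γ(1) < γ(2) < ⋯ < γ(i) and γ(i+1) < γ(i+2) < ⋯ < γ(i+j). -/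
open MvPolynomial

/-- The `(i+j) × (i+j)` matrix `N_{i,j}(g,h;a)` whose `(s,t)` entry is `g (a s) t`
for `t < i` (0-based) and `h (a s) (t - i)` for `i ≤ t < i + j`.  (Out-of-range
column indices, which never occur when `i + j ≤ n`, give junk value `0`.) -/
def Nmat {R : Type*} [CommRing R] {n : ℕ} (i j : ℕ)
    (g h : Matrix (Fin n) (Fin n) R) (a : Fin (i + j) → Fin n) :
    Matrix (Fin (i + j)) (Fin (i + j)) R :=
  Matrix.of fun s t =>
    if (t : ℕ) < i then
      (if hi : (t : ℕ) < n then g (a s) ⟨t, hi⟩ else 0)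
    else
      (if hj : (t : ℕ) - i < n then h (a s) ⟨(t : ℕ) - i, hj⟩ else 0)

/-- The minor `m(g;b)` of `g` with rows `b` and columns `1, …, s` (1-based), i.e.
columns `0, …, s-1` (0-based).  (Out-of-range column indices, which never occur
when `s ≤ n`, give junk value `0`.) -/
def minorM {R : Type*} [CommRing R] {n s : ℕ}
    (g : Matrix (Fin n) (Fin n) R) (b : Fin s → Fin n) : R :=
  (Matrix.of fun p q : Fin s =>
    if hq : (q : ℕ) < n then g (b p) ⟨q, hq⟩ else 0).det

namespace Stmt8Aux

open Equiv Equiv.Perm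

variable {i j : ℕ}

lemma natAdd_inj : Function.Injective (fun q : Fin j => Fin.natAdd i q) := by
  intro a b hab
  have : (i : ℕ) + a = i + b := congrArg Fin.val hab
  exact Fin.ext (Nat.add_left_cancel this)

/-- The block permutation `π ⊕ τ` of `Fin (i + j)`. -/
def phi (π : Perm (Fin i)) (τ : Perm (Fin j)) : Perm (Fin (i + j)) :=
  finSumFinEquiv.permCongr (π.sumCongr τ)

@[simp] lemma phi_castAdd (π : Perm (Fin i)) (τ : Perm (Fin j)) (p : Fin i) :
    phi π τ (Fin.castAdd j p) = Fin.castAdd j (π p) := by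
  simp [phi, Equiv.permCongr_apply, ← finSumFinEquiv_apply_left,
    finSumFinEquiv_symm_apply_castAdd]

@[simp] lemma phi_natAdd (π : Perm (Fin i)) (τ : Perm (Fin j)) (q : Fin j) :
    phi π τ (Fin.natAdd i q) = Fin.natAdd i (τ q) := by
  simp [phi, Equiv.permCongr_apply, ← finSumFinEquiv_apply_right,
    finSumFinEquiv_symm_apply_natAdd]

lemma phi_mul (π π' : Perm (Fin i)) (τ τ' : Perm (Fin j)) :
    phi π τ * phi π' τ' = phi (π * π') (τ * τ') := by
  ext x
  refine Fin.addCases (fun p => ?_) (fun q => ?_) x <;> simp [Equiv.Perm.mul_apply]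

lemma phi_inv (π : Perm (Fin i)) (τ : Perm (Fin j)) :
    (phi π τ)⁻¹ = phi π⁻¹ τ⁻¹ := by
  rw [inv_eq_iff_mul_eq_one, phi_mul]
  ext x
  refine Fin.addCases (fun p => ?_) (fun q => ?_) x <;> simp

lemma sign_phi (π : Perm (Fin i)) (τ : Perm (Fin j)) :
    sign (phi π τ) = sign π * sign τ := by
  classical
  rw [phi, Equiv.Perm.sign_permCongr, Equiv.Perm.sign_sumCongr]

/-- the `Fin i`-component of the shuffle decomposition of `σ` -/
noncomputable def piOf (σ : Perm (Fin (i + j))) : Perm (Fin i) :=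
  (Tuple.sort fun p : Fin i => σ (Fin.castAdd j p))⁻¹

/-- the `Fin j`-component of the shuffle decomposition of `σ` -/
noncomputable def tauOf (σ : Perm (Fin (i + j))) : Perm (Fin j) :=
  (Tuple.sort fun q : Fin j => σ (Fin.natAdd i q))⁻¹

/-- the shuffle component of the shuffle decomposition of `σ` -/
noncomputable def gammaOf (σ : Perm (Fin (i + j))) : Perm (Fin (i + j)) :=
  σ * (phi (piOf σ) (tauOf σ))⁻¹

lemma gammaOf_mul (σ : Perm (Fin (i + j))) :
    gammaOf σ * phi (piOf σ) (tauOf σ) = σ := by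
  rw [gammaOf, inv_mul_cancel_right]

lemma gammaOf_castAdd (σ : Perm (Fin (i + j))) (p : Fin i) :
    gammaOf σ (Fin.castAdd j p) =
      σ (Fin.castAdd j (Tuple.sort (fun p : Fin i => σ (Fin.castAdd j p)) p)) := by
  rw [gammaOf, phi_inv, Equiv.Perm.mul_apply, phi_castAdd, piOf, inv_inv]

lemma gammaOf_natAdd (σ : Perm (Fin (i + j))) (q : Fin j) :
    gammaOf σ (Fin.natAdd i q) =
      σ (Fin.natAdd i (Tuple.sort (fun q : Fin j => σ (Fin.natAdd i q)) q)) := by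
  rw [gammaOf, phi_inv, Equiv.Perm.mul_apply, phi_natAdd, tauOf, inv_inv]

lemma strictMono_gammaOf_castAdd (σ : Perm (Fin (i + j))) :
    StrictMono fun p : Fin i => gammaOf σ (Fin.castAdd j p) := by
  have hmono : Monotone ((fun p : Fin i => σ (Fin.castAdd j p)) ∘
      (Tuple.sort fun p : Fin i => σ (Fin.castAdd j p))) :=
    Tuple.monotone_sort _
  have hinj : Function.Injective ((fun p : Fin i => σ (Fin.castAdd j p)) ∘
      (Tuple.sort fun p : Fin i => σ (Fin.castAdd j p))) := by
    refine Function.Injective.comp (Function.Injective.comp σ.injective ?_)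
      (Equiv.injective _)
    exact Fin.castAdd_injective i j
  have := hmono.strictMono_of_injective hinj
  intro p q hpq
  simpa [gammaOf_castAdd] using this hpq

lemma strictMono_gammaOf_natAdd (σ : Perm (Fin (i + j))) :
    StrictMono fun q : Fin j => gammaOf σ (Fin.natAdd i q) := by
  have hmono : Monotone ((fun q : Fin j => σ (Fin.natAdd i q)) ∘
      (Tuple.sort fun q : Fin j => σ (Fin.natAdd i q))) :=
    Tuple.monotone_sort _
  have hinj : Function.Injective ((fun q : Fin j => σ (Fin.natAdd i q)) ∘
      (Tuple.sort fun q : Fin j => σ (Fin.natAdd i q))) := by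
    refine Function.Injective.comp (Function.Injective.comp σ.injective ?_)
      (Equiv.injective _)
    exact natAdd_inj
  have := hmono.strictMono_of_injective hinj
  intro p q hpq
  simpa [gammaOf_natAdd] using this hpq

/-- uniqueness of the shuffle decomposition -/
lemma gammaOf_eq (γ : Perm (Fin (i + j))) (π : Perm (Fin i)) (τ : Perm (Fin j))
    (h1 : StrictMono fun p : Fin i => γ (Fin.castAdd j p))
    (h2 : StrictMono fun q : Fin j => γ (Fin.natAdd i q)) :
    gammaOf (γ * phi π τ) = γ := by
  set σ := γ * phi π τ with hσ
  have hc : ∀ p : Fin i, σ (Fin.castAdd j p) = γ (Fin.castAdd j (π p)) := by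
    intro p; rw [hσ, Equiv.Perm.mul_apply, phi_castAdd]
  have hn : ∀ q : Fin j, σ (Fin.natAdd i q) = γ (Fin.natAdd i (τ q)) := by
    intro q; rw [hσ, Equiv.Perm.mul_apply, phi_natAdd]
  have hrange1 : Set.range (fun p : Fin i => gammaOf σ (Fin.castAdd j p)) =
      Set.range (fun p : Fin i => γ (Fin.castAdd j p)) := by
    have e1 : (fun p : Fin i => gammaOf σ (Fin.castAdd j p)) =
        (fun p : Fin i => σ (Fin.castAdd j p)) ∘
          (Tuple.sort fun p : Fin i => σ (Fin.castAdd j p)) := by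
      funext p; exact gammaOf_castAdd σ p
    have e2 : (fun p : Fin i => σ (Fin.castAdd j p)) =
        (fun p : Fin i => γ (Fin.castAdd j p)) ∘ π := by
      funext p; exact hc p
    rw [e1, Function.Surjective.range_comp (Equiv.surjective _), e2,
      Function.Surjective.range_comp (Equiv.surjective _)]
  have hrange2 : Set.range (fun q : Fin j => gammaOf σ (Fin.natAdd i q)) =
      Set.range (fun q : Fin j => γ (Fin.natAdd i q)) := by
    have e1 : (fun q : Fin j => gammaOf σ (Fin.natAdd i q)) =
        (fun q : Fin j => σ (Fin.natAdd i q)) ∘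
          (Tuple.sort fun q : Fin j => σ (Fin.natAdd i q)) := by
      funext q; exact gammaOf_natAdd σ q
    have e2 : (fun q : Fin j => σ (Fin.natAdd i q)) =
        (fun q : Fin j => γ (Fin.natAdd i q)) ∘ τ := by
      funext q; exact hn q
    rw [e1, Function.Surjective.range_comp (Equiv.surjective _), e2,
      Function.Surjective.range_comp (Equiv.surjective _)]
  haveI : WellFoundedLT (Fin i) := inferInstance
  haveI : WellFoundedLT (Fin j) := inferInstance
  have h1' := ((strictMono_gammaOf_castAdd σ).range_inj h1).1 hrange1
  have h2' := ((strictMono_gammaOf_natAdd σ).range_inj h2).1 hrange2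
  ext x
  refine Fin.addCases (fun p => ?_) (fun q => ?_) x
  · exact congrArg Fin.val (congrFun h1' p)
  · exact congrArg Fin.val (congrFun h2' q)

lemma piOf_tauOf_eq (γ : Perm (Fin (i + j))) (π : Perm (Fin i)) (τ : Perm (Fin j))
    (h1 : StrictMono fun p : Fin i => γ (Fin.castAdd j p))
    (h2 : StrictMono fun q : Fin j => γ (Fin.natAdd i q)) :
    piOf (γ * phi π τ) = π ∧ tauOf (γ * phi π τ) = τ := by
  have hγ := gammaOf_eq γ π τ h1 h2
  have := gammaOf_mul (γ * phi π τ)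
  rw [hγ] at this
  have hphi : phi (piOf (γ * phi π τ)) (tauOf (γ * phi π τ)) = phi π τ :=
    mul_left_cancel this
  constructor
  · ext p
    have h := congrArg (fun e : Perm (Fin (i + j)) => e (Fin.castAdd j p)) hphi
    simp only [phi_castAdd] at h
    exact congrArg Fin.val (Fin.castAdd_injective i j h)
  · ext q
    have h := congrArg (fun e : Perm (Fin (i + j)) => e (Fin.natAdd i q)) hphi
    simp only [phi_natAdd] at h
    exact congrArg Fin.val (natAdd_inj h)

end Stmt8Aux

open scoped Classical in
theorem stmt8 {R : Type*} [CommRing R] {n : ℕ} (hn : 1 ≤ n) (i j : ℕ) (hij : i + j ≤ n)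
    (g h : Matrix (Fin n) (Fin n) R)
    (a : Fin (i + j) → Fin n) (ha : StrictMono a) :
    (Nmat i j g h a).det =
      ∑ γ ∈ Finset.univ.filter (fun γ : Equiv.Perm (Fin (i + j)) =>
          StrictMono (fun p : Fin i => γ (Fin.castAdd j p)) ∧
          StrictMono (fun p : Fin j => γ (Fin.natAdd i p))),
        ((Equiv.Perm.sign γ : ℤ) : R) *
          minorM g (fun p : Fin i => a (γ (Fin.castAdd j p))) *
          minorM h (fun p : Fin j => a (γ (Fin.natAdd i p))) := by
  classical
  open Equiv Equiv.Perm Stmt8Aux in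
  have hi_le : i ≤ n := le_trans (Nat.le_add_right i j) hij
  have hj_le : j ≤ n := le_trans (Nat.le_add_left j i) hij
  set S := Finset.univ.filter (fun γ : Equiv.Perm (Fin (i + j)) =>
      StrictMono (fun p : Fin i => γ (Fin.castAdd j p)) ∧
      StrictMono (fun p : Fin j => γ (Fin.natAdd i p))) with hS
  -- auxiliary formulas for the minors
  have minor_g : ∀ b : Fin i → Fin n, minorM g b =
      ∑ π : Perm (Fin i), ((Equiv.Perm.sign π : ℤ) : R) *
        ∏ p : Fin i, g (b (π p)) (Fin.castLE hi_le p) := by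
    intro b
    rw [minorM, Matrix.det_apply']
    refine Finset.sum_congr rfl fun π _ => ?_
    congr 1
    refine Finset.prod_congr rfl fun p _ => ?_
    simp only [Matrix.of_apply, dif_pos (lt_of_lt_of_le p.2 hi_le)]
    rfl
  have minor_h : ∀ b : Fin j → Fin n, minorM h b =
      ∑ τ : Perm (Fin j), ((Equiv.Perm.sign τ : ℤ) : R) *
        ∏ q : Fin j, h (b (τ q)) (Fin.castLE hj_le q) := by
    intro b
    rw [minorM, Matrix.det_apply']
    refine Finset.sum_congr rfl fun τ _ => ?_
    congr 1
    refine Finset.prod_congr rfl fun q _ => ?_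
    simp only [Matrix.of_apply, dif_pos (lt_of_lt_of_le q.2 hj_le)]
    rfl
  -- the summand for the triple decomposition
  set G : Perm (Fin (i + j)) × Perm (Fin i) × Perm (Fin j) → R := fun x =>
    ((Equiv.Perm.sign (x.1 * phi x.2.1 x.2.2) : ℤ) : R) *
      ((∏ p : Fin i, g (a (x.1 (Fin.castAdd j (x.2.1 p)))) (Fin.castLE hi_le p)) *
       (∏ q : Fin j, h (a (x.1 (Fin.natAdd i (x.2.2 q)))) (Fin.castLE hj_le q))) with hG
  calc (Nmat i j g h a).det
      = ∑ σ : Perm (Fin (i + j)), ((Equiv.Perm.sign σ : ℤ) : R) *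
          ((∏ p : Fin i, g (a (σ (Fin.castAdd j p))) (Fin.castLE hi_le p)) *
           (∏ q : Fin j, h (a (σ (Fin.natAdd i q))) (Fin.castLE hj_le q))) := by
        rw [Matrix.det_apply']
        refine Finset.sum_congr rfl fun σ _ => ?_
        congr 1
        rw [Fin.prod_univ_add (f := fun t : Fin (i + j) => Nmat i j g h a (σ t) t)]
        congr 1
        · refine Finset.prod_congr rfl fun p _ => ?_
          have hp : ((Fin.castAdd j p : Fin (i + j)) : ℕ) = (p : ℕ) := rfl
          simp only [Nmat, Matrix.of_apply, hp, if_pos p.2,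
            dif_pos (lt_of_lt_of_le p.2 hi_le)]
          rfl
        · refine Finset.prod_congr rfl fun q _ => ?_
          have hq : ((Fin.natAdd i q : Fin (i + j)) : ℕ) = i + (q : ℕ) := rfl
          have hsub : i + (q : ℕ) - i = (q : ℕ) := Nat.add_sub_cancel_left i (q : ℕ)
          simp only [Nmat, Matrix.of_apply, hq, hsub]
          rw [if_neg (Nat.not_lt.2 (Nat.le_add_right i (q : ℕ))),
            dif_pos (lt_of_lt_of_le q.2 hj_le)]
          rfl
    _ = ∑ x ∈ S ×ˢ (Finset.univ ×ˢ Finset.univ), G x := by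
        refine Finset.sum_nbij' (fun σ => (gammaOf σ, piOf σ, tauOf σ))
          (fun x => x.1 * phi x.2.1 x.2.2) ?_ ?_ ?_ ?_ ?_
        · intro σ _
          simp only [Finset.mem_product, hS, Finset.mem_filter, Finset.mem_univ,
            true_and, and_true]
          exact ⟨strictMono_gammaOf_castAdd σ, strictMono_gammaOf_natAdd σ⟩
        · intro x _
          exact Finset.mem_univ _
        · intro σ _
          exact gammaOf_mul σ
        · intro x hx
          simp only [Finset.mem_product, hS, Finset.mem_filter, Finset.mem_univ,
            true_and, and_true] at hx
          have e1 := gammaOf_eq x.1 x.2.1 x.2.2 hx.1 hx.2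
          have e23 := piOf_tauOf_eq x.1 x.2.1 x.2.2 hx.1 hx.2
          exact Prod.ext e1 (Prod.ext e23.1 e23.2)
        · intro σ _
          rw [hG]
          have hfun := gammaOf_mul σ
          have hsgn : Equiv.Perm.sign σ =
              Equiv.Perm.sign (gammaOf σ * phi (piOf σ) (tauOf σ)) := by rw [hfun]
          have hc : ∀ p : Fin i,
              σ (Fin.castAdd j p) = gammaOf σ (Fin.castAdd j (piOf σ p)) := by
            intro p
            conv_lhs => rw [← hfun]
            rw [Equiv.Perm.mul_apply, phi_castAdd]
          have hd : ∀ q : Fin j,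
              σ (Fin.natAdd i q) = gammaOf σ (Fin.natAdd i (tauOf σ q)) := by
            intro q
            conv_lhs => rw [← hfun]
            rw [Equiv.Perm.mul_apply, phi_natAdd]
          have hB : (∏ p : Fin i, g (a (σ (Fin.castAdd j p))) (Fin.castLE hi_le p)) =
              ∏ p : Fin i, g (a (gammaOf σ (Fin.castAdd j (piOf σ p)))) (Fin.castLE hi_le p) :=
            Finset.prod_congr rfl fun p _ => by rw [hc p]
          have hC : (∏ q : Fin j, h (a (σ (Fin.natAdd i q))) (Fin.castLE hj_le q)) =
              ∏ q : Fin j, h (a (gammaOf σ (Fin.natAdd i (tauOf σ q)))) (Fin.castLE hj_le q) :=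
            Finset.prod_congr rfl fun q _ => by rw [hd q]
          simp only
          rw [hsgn, hB, hC]
    _ = ∑ γ ∈ S, ∑ y ∈ (Finset.univ ×ˢ Finset.univ :
          Finset (Perm (Fin i) × Perm (Fin j))), G (γ, y) :=
        Finset.sum_product ..
    _ = _ := by
        refine Finset.sum_congr rfl fun γ hγ => ?_
        rw [minor_g, minor_h, Finset.sum_product]
        rw [mul_assoc, Finset.sum_mul_sum, Finset.mul_sum]
        refine Finset.sum_congr rfl fun π _ => ?_
        rw [Finset.mul_sum]
        refine Finset.sum_congr rfl fun τ _ => ?_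
        rw [hG]
        simp only [map_mul, sign_phi, Units.val_mul, Int.cast_mul]
        ring
end

section
/- Let i, j ≥ 0 with i + j ≤ n and let a = (a_1 < ⋯ < a_{i+j}) be an increasing sequence in {1,…,n}. Then the determinant det N_{i,j}(g,h;a), computed for the generic matrices g and h over P, lies in the ideal power D^{min(i,j)}. -/
open MvPolynomial

lemma prod_mem_pow_card' {ι R : Type*} [CommRing R] (I : Ideal R) (s : Finset ι)
    (x : ι → R) (h : ∀ t ∈ s, x t ∈ I) : ∏ t ∈ s, x t ∈ I ^ s.card := by
  classical
  induction s using Finset.induction_on with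
  | empty => simp
  | insert _ _ hx ih =>
    rw [Finset.prod_insert hx, Finset.card_insert_of_notMem hx, pow_succ']
    exact Ideal.mul_mem_mul (h _ (Finset.mem_insert_self _ _))
      (ih fun t ht => h t (Finset.mem_insert_of_mem ht))

lemma det_mem_pow_card' {N : ℕ} {R : Type*} [CommRing R] (I : Ideal R)
    (M : Matrix (Fin N) (Fin N) R) (T : Finset (Fin N))
    (h : ∀ s t, t ∈ T → M s t ∈ I) : M.det ∈ I ^ T.card := by
  rw [Matrix.det_apply']
  refine Ideal.sum_mem _ fun σ _ => Ideal.mul_mem_left _ _ ?_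
  rw [← Finset.prod_mul_prod_compl T]
  exact Ideal.mul_mem_right _ _ (prod_mem_pow_card' I T _ fun t ht => h _ t ht)

theorem stmt9 (k : Type*) [Field k] (n : ℕ) (hn : 1 ≤ n) (i j : ℕ) (hij : i + j ≤ n)
    (a : Fin (i + j) → Fin n) (ha : StrictMono a) :
    (Nmat i j
        (Matrix.of fun s t : Fin n =>
          (X (Sum.inl (s, t)) : MvPolynomial ((Fin n × Fin n) ⊕ (Fin n × Fin n)) k))
        (Matrix.of fun s t : Fin n => X (Sum.inr (s, t))) a).det ∈
      (Ideal.span (Set.range fun p : Fin n × Fin n =>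
        (X (Sum.inl p) - X (Sum.inr p) :
          MvPolynomial ((Fin n × Fin n) ⊕ (Fin n × Fin n)) k))) ^ (min i j) := by
  classical
  set R := MvPolynomial ((Fin n × Fin n) ⊕ (Fin n × Fin n)) k with hR
  by_cases hm0 : min i j = 0
  · rw [hm0, pow_zero, Ideal.one_eq_top]; exact Submodule.mem_top
  set m := min i j with hm
  have hm1 : 1 ≤ m := Nat.one_le_iff_ne_zero.mpr hm0
  have hmi : m ≤ i := min_le_left i j
  have hmj : m ≤ j := min_le_right i j
  set g : Matrix (Fin n) (Fin n) R :=
    Matrix.of fun s t : Fin n => (X (Sum.inl (s, t)) : R) with hg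
  set h : Matrix (Fin n) (Fin n) R :=
    Matrix.of fun s t : Fin n => (X (Sum.inr (s, t)) : R) with hh
  set D : Ideal R := Ideal.span (Set.range fun p : Fin n × Fin n =>
      (X (Sum.inl p) - X (Sum.inr p) : R)) with hDdef
  -- the family of partially-modified matrices
  set Mr : ℕ → Matrix (Fin (i + j)) (Fin (i + j)) R := fun r =>
    Matrix.of fun s t =>
      if i ≤ (t : ℕ) ∧ (t : ℕ) < i + r then
        (X (Sum.inr (a s, ⟨(t : ℕ) - i, by have := t.isLt; omega⟩))
          - X (Sum.inl (a s, ⟨(t : ℕ) - i, by have := t.isLt; omega⟩)) : R)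
      else Nmat i j g h a s t with hMr
  have hMr0 : Mr 0 = Nmat i j g h a := by
    ext s t
    simp only [hMr, Matrix.of_apply]
    rw [if_neg (by omega)]
  have step : ∀ r, r < m → (Mr (r + 1)).det = (Mr r).det := by
    intro r hr
    have hrn : r < n := by omega
    set cr : Fin (i + j) := ⟨i + r, by omega⟩ with hcr
    set rr : Fin (i + j) := ⟨r, by omega⟩ with hrr
    have hcrv : (cr : ℕ) = i + r := rfl
    have hrrv : (rr : ℕ) = r := rfl
    have hne : rr ≠ cr := by
      intro he
      have : (rr : ℕ) = (cr : ℕ) := by rw [he]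
      omega
    set d : Fin (i + j) → R := fun s =>
      X (Sum.inr (a s, ⟨r, hrn⟩)) - X (Sum.inl (a s, ⟨r, hrn⟩)) with hd
    set gc : Fin (i + j) → R := fun s => (X (Sum.inl (a s, ⟨r, hrn⟩)) : R) with hgc
    have hsub : (cr : ℕ) - i = r := by omega
    have hcol : ∀ s, Mr r s cr = X (Sum.inr (a s, ⟨r, hrn⟩)) := by
      intro s
      simp only [hMr, Matrix.of_apply]
      rw [if_neg (by omega)]
      simp only [Nmat, Matrix.of_apply]
      rw [if_neg (by omega), dif_pos (by omega)]
      simp only [hh, Matrix.of_apply, hsub]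
    have h1 : Mr (r + 1) = (Mr r).updateCol cr d := by
      ext s t
      rw [Matrix.updateCol_apply]
      by_cases htc : t = cr
      · subst htc
        rw [if_pos rfl]
        simp only [hMr, Matrix.of_apply]
        rw [if_pos (by omega)]
        simp only [hd, hsub]
      · rw [if_neg htc]
        have htc' : (t : ℕ) ≠ i + r := fun he => htc (Fin.ext (by omega))
        simp only [hMr, Matrix.of_apply]
        by_cases hc : i ≤ (t : ℕ) ∧ (t : ℕ) < i + r
        · rw [if_pos (by omega), if_pos hc]
        · rw [if_neg (by omega), if_neg hc]
    have h2 : (Mr r).updateCol cr (d + gc) = Mr r := by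
      have hdg : d + gc = fun s => Mr r s cr := by
        funext s
        rw [hcol s]
        show d s + gc s = _
        simp [hd, hgc]
      rw [hdg]
      exact Matrix.updateCol_eq_self _ _
    have h3 : ((Mr r).updateCol cr gc).det = 0 := by
      refine Matrix.det_zero_of_column_eq (M := (Mr r).updateCol cr gc)
        (i := rr) (j := cr) hne (fun s => ?_)
      rw [Matrix.updateCol_apply, Matrix.updateCol_apply,
        if_pos rfl, if_neg hne]
      simp only [hMr, Matrix.of_apply]
      rw [if_neg (by omega)]
      simp only [Nmat, Matrix.of_apply]
      rw [if_pos (by omega), dif_pos (by omega)]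
      simp only [hg, hgc, Matrix.of_apply]
      rfl
    calc (Mr (r + 1)).det = ((Mr r).updateCol cr d).det := by rw [h1]
      _ = ((Mr r).updateCol cr (d + gc)).det
          - ((Mr r).updateCol cr gc).det := by
            rw [Matrix.det_updateCol_add]
            show _ = ((Mr r).updateCol cr d).det
              + ((Mr r).updateCol cr gc).det - _
            ring
      _ = (Mr r).det := by rw [h2, h3, sub_zero]
  have main : ∀ r, r ≤ m → (Mr r).det = (Nmat i j g h a).det := by
    intro r
    induction r with
    | zero => intro _; rw [hMr0]
    | succ r ih => intro hr; rw [step r (by omega), ih (by omega)]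
  rw [← main m le_rfl]
  -- the set of modified columns
  set T : Finset (Fin (i + j)) :=
    Finset.image (fun r : Fin m => (⟨i + r, by have := r.isLt; omega⟩ : Fin (i + j)))
      Finset.univ with hT
  have hTcard : T.card = m := by
    rw [hT, Finset.card_image_of_injective _ (fun x y hxy => by
      have : i + (x : ℕ) = i + (y : ℕ) := by
        have := congrArg (Fin.val) hxy; simpa using this
      exact Fin.ext (by omega)), Finset.card_univ, Fintype.card_fin]
  have := det_mem_pow_card' D (Mr m) T (fun s t ht => by
    rw [hT, Finset.mem_image] at ht
    obtain ⟨r, -, rfl⟩ := ht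
    simp only [hMr, Matrix.of_apply]
    rw [if_pos (by constructor <;> simp <;> omega)]
    rw [show ∀ x y : R, x - y = -(y - x) from fun x y => (neg_sub y x).symm]
    exact neg_mem (Ideal.subset_span ⟨_, rfl⟩))
  rwa [hTcard] at this
end

section
/- Let i, j ≥ 0 with i + j ≤ n, let h be an n×n matrix over R, and let a = (a_1 < ⋯ < a_{i+j}) be an increasing sequence in {1,…,n}. If a_s = s for all 1 ≤ s ≤ i, then det N_{i,j}(I_n, h; a) = m(h; (a_{i+1},…,a_{i+j})); otherwise det N_{i,j}(I_n, h; a) = 0. Here I_n denotes the n×n identity matrix. -/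
open MvPolynomial

/-- A strictly monotone map of `Fin`s grows at least as fast as the identity. -/
lemma strictMono_le_apply {m n : ℕ} {a : Fin m → Fin n} (ha : StrictMono a)
    (r : Fin m) : (r : ℕ) ≤ (a r : ℕ) := by
  have key : ∀ v (hv : v < m), v ≤ (a ⟨v, hv⟩ : ℕ) := by
    intro v
    induction v with
    | zero => intro hv; exact Nat.zero_le _
    | succ k ih =>
      intro hv
      have hk : k < m := Nat.lt_of_succ_lt hv
      have h1 := ih hk
      have h2 : a ⟨k, hk⟩ < a ⟨k + 1, hv⟩ := ha (by simp [Fin.lt_def])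
      rw [Fin.lt_def] at h2
      omega
  have := key r.val r.isLt
  simpa using this

theorem stmt10 {R : Type*} [CommRing R] {n : ℕ} (hn : 1 ≤ n) (i j : ℕ) (hij : i + j ≤ n)
    (h : Matrix (Fin n) (Fin n) R) (a : Fin (i + j) → Fin n) (ha : StrictMono a) :
    ((∀ s : Fin i, (a (Fin.castAdd j s) : ℕ) = (s : ℕ)) →
      (Nmat i j (1 : Matrix (Fin n) (Fin n) R) h a).det =
        minorM h (fun p : Fin j => a (Fin.natAdd i p))) ∧
    ((¬ ∀ s : Fin i, (a (Fin.castAdd j s) : ℕ) = (s : ℕ)) →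
      (Nmat i j (1 : Matrix (Fin n) (Fin n) R) h a).det = 0) := by
  constructor
  · -- Case 1: a s = s for s < i
    intro hall
    set N := Nmat i j (1 : Matrix (Fin n) (Fin n) R) h a with hN
    set B : Matrix (Fin i) (Fin j) R := fun s q =>
      if hq : (q : ℕ) < n then h (a (Fin.castAdd j s)) ⟨q, hq⟩ else 0 with hB
    set D : Matrix (Fin j) (Fin j) R := Matrix.of fun p q : Fin j =>
      if hq : (q : ℕ) < n then h (a (Fin.natAdd i p)) ⟨q, hq⟩ else 0 with hD
    have hsub : N.submatrix finSumFinEquiv finSumFinEquiv =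
        Matrix.fromBlocks (1 : Matrix (Fin i) (Fin i) R) B 0 D := by
      ext r c
      cases r with
      | inl s =>
        cases c with
        | inl t =>
          have ht : (t : ℕ) < i := t.isLt
          have htn : (t : ℕ) < n := lt_of_lt_of_le ht (le_trans (Nat.le_add_right i j) hij)
          simp only [Matrix.submatrix_apply, finSumFinEquiv_apply_left,
            finSumFinEquiv_apply_right, hN, Nmat, Matrix.of_apply,
            Matrix.fromBlocks_apply₁₁]
          rw [if_pos (by simpa using ht), dif_pos (by simpa using htn)]
          rw [Matrix.one_apply, Matrix.one_apply]
          congr 1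
          simp only [eq_iff_iff, Fin.ext_iff, hall s, Fin.coe_castAdd]
        | inr q =>
          have hq : (q : ℕ) < j := q.isLt
          have hqn : (q : ℕ) < n := by omega
          simp only [Matrix.submatrix_apply, finSumFinEquiv_apply_left,
            finSumFinEquiv_apply_right, hN, Nmat, Matrix.of_apply,
            Matrix.fromBlocks_apply₁₂, hB]
          rw [if_neg (by simp)]
          have hcv : ((Fin.natAdd i q : Fin (i + j)) : ℕ) - i = (q : ℕ) := by
            simp
          simp only [hcv]
          rfl
      | inr p =>
        cases c with
        | inl t =>
          have ht : (t : ℕ) < i := t.isLt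
          have htn : (t : ℕ) < n := lt_of_lt_of_le ht (le_trans (Nat.le_add_right i j) hij)
          simp only [Matrix.submatrix_apply, finSumFinEquiv_apply_left,
            finSumFinEquiv_apply_right, hN, Nmat, Matrix.of_apply,
            Matrix.fromBlocks_apply₂₁, Matrix.zero_apply]
          rw [if_pos (by simpa using ht), dif_pos (by simpa using htn)]
          rw [Matrix.one_apply]
          rw [if_neg]
          intro hcontra
          have hge : (i : ℕ) + p ≤ (a (Fin.natAdd i p) : ℕ) := by
            have := strictMono_le_apply ha (Fin.natAdd i p)
            simpa using this
          rw [hcontra] at hge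
          simp at hge
          omega
        | inr q =>
          have hq : (q : ℕ) < j := q.isLt
          have hqn : (q : ℕ) < n := by omega
          simp only [Matrix.submatrix_apply, finSumFinEquiv_apply_left,
            finSumFinEquiv_apply_right, hN, Nmat, Matrix.of_apply,
            Matrix.fromBlocks_apply₂₂, hD]
          rw [if_neg (by simp)]
          have hcv : ((Fin.natAdd i q : Fin (i + j)) : ℕ) - i = (q : ℕ) := by
            simp
          simp only [hcv]
    have := Matrix.det_submatrix_equiv_self finSumFinEquiv N
    rw [hsub] at this
    rw [← this, Matrix.det_fromBlocks_zero₂₁, Matrix.det_one, one_mul]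
    rfl
  · -- Case 2: some a s ≠ s for s < i
    intro hne
    push_neg at hne
    obtain ⟨s, hs⟩ := hne
    have hP : ∃ k, ∃ hk : k < i, (a (Fin.castAdd j ⟨k, hk⟩) : ℕ) ≠ k :=
      ⟨s, s.isLt, by simpa using hs⟩
    classical
    let s0 := Nat.find hP
    obtain ⟨hs0i, hs0⟩ := Nat.find_spec hP
    have hs0min : ∀ k < s0, ∀ hk : k < i, (a (Fin.castAdd j ⟨k, hk⟩) : ℕ) = k := by
      intro k hk hki
      by_contra hcon
      exact hk.not_ge (Nat.find_le ⟨hki, hcon⟩)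
    have hs0n : s0 < n := lt_of_lt_of_le hs0i (le_trans (Nat.le_add_right i j) hij)
    have hs0ij : s0 < i + j := lt_of_lt_of_le hs0i (Nat.le_add_right i j)
    -- the column with index s0 is zero
    apply Matrix.det_eq_zero_of_column_eq_zero ⟨s0, hs0ij⟩
    intro r
    have hrne : (a r : ℕ) ≠ s0 := by
      rcases lt_or_ge (r : ℕ) s0 with hlt | hge
      · have hri : (r : ℕ) < i := lt_trans hlt hs0i
        have := hs0min r hlt hri
        have hreq : Fin.castAdd j ⟨(r : ℕ), hri⟩ = r := by
          apply Fin.ext; simp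
        rw [hreq] at this
        omega
      · -- a r ≥ a r0 > s0
        have hr0 : (⟨s0, hs0ij⟩ : Fin (i + j)) ≤ r := by
          rw [Fin.le_def]; exact hge
        have hmono : a ⟨s0, hs0ij⟩ ≤ a r := ha.monotone hr0
        rw [Fin.le_def] at hmono
        have hge0 : s0 ≤ (a ⟨s0, hs0ij⟩ : ℕ) := by
          simpa using strictMono_le_apply ha ⟨s0, hs0ij⟩
        have hne0 : (a ⟨s0, hs0ij⟩ : ℕ) ≠ s0 := by
          have hreq : Fin.castAdd j ⟨s0, hs0i⟩ = (⟨s0, hs0ij⟩ : Fin (i + j)) := by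
            apply Fin.ext; simp
          rw [hreq] at hs0
          exact hs0
        omega
    show Nmat i j (1 : Matrix (Fin n) (Fin n) R) h a r ⟨s0, hs0ij⟩ = 0
    simp only [Nmat, Matrix.of_apply]
    rw [if_pos (show ((⟨s0, hs0ij⟩ : Fin (i + j)) : ℕ) < i from hs0i), dif_pos (show ((⟨s0, hs0ij⟩ : Fin (i + j)) : ℕ) < n from hs0n)]
    rw [Matrix.one_apply, if_neg]
    intro hcon
    apply hrne
    rw [hcon]
end

section
/- Let 2 ≤ i ≤ n. There exists a nonzero constant c ∈ k such that for every lower unitriangular n×n matrix Z over k, the ⌈i/2⌉ × ⌈i/2⌉ minor of Z^{−1} with rows ⌊i/2⌋+1, ⌊i/2⌋+2, …, i and columns 1,…,⌈i/2⌉ equals c times the ⌊i/2⌋ × ⌊i/2⌋ minor of Z with rows ⌈i/2⌉+1, ⌈i/2⌉+2, …, i and columns 1,…,⌊i/2⌋. -/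
open Matrix

/-- Jacobi-type identity: det M times det of top-left block of M⁻¹ equals det of
bottom-right block of M. -/
lemma key_jacobi {R : Type*} [CommRing R] {α β : Type*} [Fintype α] [Fintype β]
    [DecidableEq α] [DecidableEq β] (M : Matrix (α ⊕ β) (α ⊕ β) R) (hM : IsUnit M.det) :
    M.det * (M⁻¹.toBlocks₁₁).det = (M.toBlocks₂₂).det := by
  have h1 : M * M⁻¹ = 1 := M.mul_nonsing_inv hM
  have hM' : M = fromBlocks M.toBlocks₁₁ M.toBlocks₁₂ M.toBlocks₂₁ M.toBlocks₂₂ :=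
    (fromBlocks_toBlocks M).symm
  have hI : M⁻¹ = fromBlocks M⁻¹.toBlocks₁₁ M⁻¹.toBlocks₁₂ M⁻¹.toBlocks₂₁ M⁻¹.toBlocks₂₂ :=
    (fromBlocks_toBlocks M⁻¹).symm
  have h1' : fromBlocks M.toBlocks₁₁ M.toBlocks₁₂ M.toBlocks₂₁ M.toBlocks₂₂ *
      fromBlocks M⁻¹.toBlocks₁₁ M⁻¹.toBlocks₁₂ M⁻¹.toBlocks₂₁ M⁻¹.toBlocks₂₂ =
      fromBlocks 1 0 0 1 := by
    rw [← hM', ← hI, h1, fromBlocks_one]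
  rw [fromBlocks_multiply] at h1'
  have e11 : M.toBlocks₁₁ * M⁻¹.toBlocks₁₁ + M.toBlocks₁₂ * M⁻¹.toBlocks₂₁ = 1 := by
    have := congrArg Matrix.toBlocks₁₁ h1'
    simp only [Matrix.toBlocks_fromBlocks₁₁] at this
    rw [this]
  have e21 : M.toBlocks₂₁ * M⁻¹.toBlocks₁₁ + M.toBlocks₂₂ * M⁻¹.toBlocks₂₁ = 0 := by
    have := congrArg Matrix.toBlocks₂₁ h1'
    simp only [Matrix.toBlocks_fromBlocks₂₁] at this
    rw [this]
  have key : M * fromBlocks M⁻¹.toBlocks₁₁ 0 M⁻¹.toBlocks₂₁ 1 =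
      fromBlocks 1 M.toBlocks₁₂ 0 M.toBlocks₂₂ := by
    have : fromBlocks M.toBlocks₁₁ M.toBlocks₁₂ M.toBlocks₂₁ M.toBlocks₂₂ *
        fromBlocks M⁻¹.toBlocks₁₁ 0 M⁻¹.toBlocks₂₁ 1 =
        fromBlocks 1 M.toBlocks₁₂ 0 M.toBlocks₂₂ := by
      rw [fromBlocks_multiply, e11, e21]
      simp
    rwa [← hM'] at this
  have := congrArg Matrix.det key
  rw [det_mul, det_fromBlocks_zero₁₂, det_fromBlocks_zero₂₁] at this
  simpa using this

/-- The column map: `inl p ↦ l + p`, `inr q ↦ q` if `q < l`, else `m + q`. -/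
def fCaux (l m n : ℕ) (h : l + m ≤ n) : Fin m ⊕ Fin (n - m) → Fin n :=
  Sum.elim (fun p => ⟨l + p, by omega⟩)
    (fun q => if h' : (q : ℕ) < l then ⟨q, by omega⟩ else ⟨m + q, by omega⟩)

noncomputable def eCaux (l m n : ℕ) (h : l + m ≤ n) : Fin m ⊕ Fin (n - m) ≃ Fin n :=
  Equiv.ofBijective (fCaux l m n h) (by
    rw [Fintype.bijective_iff_injective_and_card]
    refine ⟨?_, by simp; omega⟩
    rintro (p | p) (q | q) hpq <;>
      simp only [fCaux, Sum.elim_inl, Sum.elim_inr] at hpq <;>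
      (try split_ifs at hpq) <;>
      simp_all only [Fin.mk.injEq, Sum.inl.injEq, Sum.inr.injEq, Fin.ext_iff] <;>
      omega)

lemma eCaux_inl (l m n : ℕ) (h : l + m ≤ n) (p : Fin m) :
    ((eCaux l m n h) (Sum.inl p) : ℕ) = l + p := rfl

lemma eCaux_inr (l m n : ℕ) (h : l + m ≤ n) (q : Fin (n - m)) :
    ((eCaux l m n h) (Sum.inr q) : ℕ) = if (q : ℕ) < l then (q : ℕ) else m + q := by
  show ((fCaux l m n h) (Sum.inr q) : ℕ) = _
  simp only [fCaux, Sum.elim_inr]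
  split_ifs <;> rfl

noncomputable def eRaux (m n : ℕ) (h : m + (n - m) = n) : Fin m ⊕ Fin (n - m) ≃ Fin n :=
  finSumFinEquiv.trans (finCongr h)

lemma eRaux_inl (m n : ℕ) (h : m + (n - m) = n) (p : Fin m) :
    ((eRaux m n h) (Sum.inl p) : ℕ) = p := by simp [eRaux]

lemma eRaux_inr (m n : ℕ) (h : m + (n - m) = n) (p : Fin (n - m)) :
    ((eRaux m n h) (Sum.inr p) : ℕ) = m + p := by simp [eRaux]

noncomputable def piaux (l m n : ℕ) (h1 : m + (n - m) = n) (h2 : l + m ≤ n) :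
    Equiv.Perm (Fin m ⊕ Fin (n - m)) :=
  (eRaux m n h1).trans (eCaux l m n h2).symm

theorem stmt11 (k : Type*) [Field k] (n i : ℕ) (h2 : 2 ≤ i) (hin : i ≤ n) :
    ∃ c : k, c ≠ 0 ∧ ∀ Z : Matrix (Fin n) (Fin n) k,
      (∀ p : Fin n, Z p p = 1) →
      (∀ p q : Fin n, (p : ℕ) < (q : ℕ) → Z p q = 0) →
      (Matrix.of fun p q : Fin (i - i / 2) =>
          Z⁻¹ ⟨i / 2 + (p : ℕ), by have := p.isLt; omega⟩
              ⟨(q : ℕ), by have := q.isLt; omega⟩).det =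
        c * (Matrix.of fun p q : Fin (i / 2) =>
          Z ⟨(i - i / 2) + (p : ℕ), by have := p.isLt; omega⟩
            ⟨(q : ℕ), by have := q.isLt; omega⟩).det := by
  have hmn : (i - i / 2) + (n - (i - i / 2)) = n := by omega
  have hlm : i / 2 + (i - i / 2) ≤ n := by omega
  set eR := eRaux (i - i / 2) n hmn with heR
  set eC := eCaux (i / 2) (i - i / 2) n hlm with heC
  set π := piaux (i / 2) (i - i / 2) n hmn hlm with hπ
  have hπ2 : π = eR.trans eC.symm := rfl
  refine ⟨((Equiv.Perm.sign π : ℤ) : k), ?_, ?_⟩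
  · rcases Int.units_eq_one_or (Equiv.Perm.sign π) with hs | hs <;> rw [hs] <;> simp
  intro Z h1 h0
  have hZlt : Z.BlockTriangular OrderDual.toDual := by
    intro p q hpq
    exact h0 p q hpq
  have hdetZ : Z.det = 1 := by
    rw [Matrix.det_of_lowerTriangular Z hZlt]
    simp [h1]
  have hZu : IsUnit Z.det := by rw [hdetZ]; exact isUnit_one
  have hZinv : Z * Z⁻¹ = 1 := Z.mul_nonsing_inv hZu
  set M := Z.submatrix eR eC with hM
  have hMdet : M.det = ((Equiv.Perm.sign π : ℤ) : k) := by
    have hre : M = (Z.submatrix eC eC).submatrix π id := by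
      ext p q
      simp [hM, hπ2, Matrix.submatrix_apply]
    rw [hre, Matrix.det_permute, Matrix.det_submatrix_equiv_self, hdetZ, mul_one]
  have hMinv : M⁻¹ = Z⁻¹.submatrix eC eR := by
    apply Matrix.inv_eq_right_inv
    rw [hM, Matrix.submatrix_mul_equiv, hZinv, Matrix.submatrix_one_equiv]
  have hMu : IsUnit M.det := by
    rw [hMdet]
    rcases Int.units_eq_one_or (Equiv.Perm.sign π) with hs | hs <;> rw [hs] <;> simp
  have hkey := key_jacobi M hMu
  -- identify the top-left block of M⁻¹ with the LHS matrix
  have hX : M⁻¹.toBlocks₁₁ = (Matrix.of fun p q : Fin (i - i / 2) =>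
      Z⁻¹ ⟨i / 2 + (p : ℕ), by have := p.isLt; omega⟩
          ⟨(q : ℕ), by have := q.isLt; omega⟩) := by
    rw [hMinv]
    ext p q
    simp only [Matrix.toBlocks₁₁, Matrix.of_apply, Matrix.submatrix_apply]
    have hc : eC (Sum.inl p) = (⟨i / 2 + (p : ℕ), by have := p.isLt; omega⟩ : Fin n) :=
      Fin.ext (by rw [heC]; exact eCaux_inl _ _ _ _ p)
    have hr : eR (Sum.inl q) = (⟨(q : ℕ), by have := q.isLt; omega⟩ : Fin n) :=
      Fin.ext (by rw [heR]; exact eRaux_inl _ _ _ q)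
    rw [hc, hr]
  -- decompose the bottom-right block of M
  have hD : (M.toBlocks₂₂).det = (Matrix.of fun p q : Fin (i / 2) =>
      Z ⟨(i - i / 2) + (p : ℕ), by have := p.isLt; omega⟩
        ⟨(q : ℕ), by have := q.isLt; omega⟩).det := by
    have hli : i / 2 + (n - i) = n - (i - i / 2) := by omega
    set e2 : Fin (i / 2) ⊕ Fin (n - i) ≃ Fin (n - (i - i / 2)) :=
      finSumFinEquiv.trans (finCongr hli) with he2
    rw [← Matrix.det_submatrix_equiv_self e2 (M.toBlocks₂₂)]
    set D' := (M.toBlocks₂₂).submatrix e2 e2 with hD'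
    have hval : ∀ (a b : Fin (n - (i - i / 2))),
        M.toBlocks₂₂ a b = Z ⟨(i - i / 2) + a, by omega⟩
          ⟨if (b : ℕ) < i / 2 then (b : ℕ) else (i - i / 2) + b, by split <;> omega⟩ := by
      intro a b
      show M (Sum.inr a) (Sum.inr b) = _
      rw [hM]
      simp only [Matrix.submatrix_apply]
      have hr : eR (Sum.inr a) = (⟨(i - i / 2) + (a : ℕ), by omega⟩ : Fin n) :=
        Fin.ext (by rw [heR]; exact eRaux_inr _ _ _ a)
      have hc : eC (Sum.inr b) = (⟨if (b : ℕ) < i / 2 then (b : ℕ) else (i - i / 2) + b,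
          by split <;> omega⟩ : Fin n) :=
        Fin.ext (by rw [heC]; exact eCaux_inr _ _ _ _ b)
      rw [hr, hc]
    have he2l : ∀ p : Fin (i / 2), ((e2 (Sum.inl p)) : ℕ) = (p : ℕ) := by
      intro p; simp [he2]
    have he2r : ∀ p : Fin (n - i), ((e2 (Sum.inr p)) : ℕ) = i / 2 + (p : ℕ) := by
      intro p; simp [he2]
    have h12 : D'.toBlocks₁₂ = 0 := by
      ext p q
      show M.toBlocks₂₂ (e2 (Sum.inl p)) (e2 (Sum.inr q)) = 0
      rw [hval]
      refine (h0 _ _ ?_).trans rfl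
      simp only [he2l, he2r]
      have := p.isLt
      have := q.isLt
      split <;> omega
    have hdet1 : (D'.toBlocks₂₂).det = 1 := by
      have hbt : (D'.toBlocks₂₂).BlockTriangular OrderDual.toDual := by
        intro p q hpq
        show M.toBlocks₂₂ (e2 (Sum.inr p)) (e2 (Sum.inr q)) = 0
        rw [hval]
        refine (h0 _ _ ?_).trans rfl
        simp only [he2l, he2r]
        have hpq' : (p : ℕ) < (q : ℕ) := hpq
        split <;> omega
      rw [Matrix.det_of_lowerTriangular _ hbt]
      apply Finset.prod_eq_one
      intro p _
      show M.toBlocks₂₂ (e2 (Sum.inr p)) (e2 (Sum.inr p)) = 1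
      rw [hval]
      have hv1 := he2r p
      have hpl := p.isLt
      have heq : (⟨if ((e2 (Sum.inr p)) : ℕ) < i / 2 then ((e2 (Sum.inr p)) : ℕ)
            else (i - i / 2) + (e2 (Sum.inr p) : ℕ), by split <;> omega⟩ : Fin n) =
          ⟨(i - i / 2) + (e2 (Sum.inr p) : ℕ), by omega⟩ := by
        apply Fin.ext
        simp only
        rw [if_neg (by omega)]
      rw [heq, h1]
    have h11 : D'.toBlocks₁₁ = (Matrix.of fun p q : Fin (i / 2) =>
        Z ⟨(i - i / 2) + (p : ℕ), by have := p.isLt; omega⟩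
          ⟨(q : ℕ), by have := q.isLt; omega⟩) := by
      ext p q
      show M.toBlocks₂₂ (e2 (Sum.inl p)) (e2 (Sum.inl q)) = _
      rw [hval]
      have hv1 := he2l p
      have hv2 := he2l q
      have hq := q.isLt
      simp only [Matrix.of_apply]
      have ha : (⟨(i - i / 2) + ((e2 (Sum.inl p)) : ℕ), by omega⟩ : Fin n) =
          ⟨(i - i / 2) + (p : ℕ), by have := p.isLt; omega⟩ := Fin.ext (by simp only [hv1])
      have hb : (⟨if ((e2 (Sum.inl q)) : ℕ) < i / 2 then ((e2 (Sum.inl q)) : ℕ)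
            else (i - i / 2) + ((e2 (Sum.inl q)) : ℕ), by split <;> omega⟩ : Fin n) =
          ⟨(q : ℕ), by have := q.isLt; omega⟩ := by
        apply Fin.ext
        simp only
        rw [hv2, if_pos hq]
      rw [ha, hb]
    rw [← Matrix.fromBlocks_toBlocks D', h12, Matrix.det_fromBlocks_zero₁₂, hdet1, mul_one, h11]
  rw [hMdet, hX, hD] at hkey
  rcases Int.units_eq_one_or (Equiv.Perm.sign π) with hs | hs <;> rw [hs] at hkey ⊢
  · simpa using hkey
  · push_cast at hkey ⊢
    linear_combination -hkey
end

section
/- Let n = 2m and let S = k[z_{i,j} : 1 ≤ j < i ≤ n, i+j ≤ n+1] be a polynomial ring. Let φ : k[Z_{i,j} : 1 ≤ j < i ≤ n] → S be any k-algebra homomorphism satisfying φ(Z_{i,j}) = z_{i,j} whenever i + j ≤ n + 1. Then for each 1 ≤ r ≤ n, the polynomial φ(𝔣_r) is a residual normal crossing relative to the subset {z_{i,j} : 1 ≤ j < i ≤ n, i + j ≤ r + 1} of the variables of S, equipped with the order: z_{i,j} ≤ z_{i',j'} iff i+j < i'+j', or i+j = i'+j' and i ≤ i'. -/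
open MvPolynomial

/-- The index set of the variables `z_{i,j}`, `1 ≤ j < i ≤ n`, `i + j ≤ n + 1`,
of the polynomial ring `S`. -/
abbrev SubP (n : ℕ) : ℕ × ℕ → Prop :=
  fun p => 1 ≤ p.2 ∧ p.2 < p.1 ∧ p.1 ≤ n ∧ p.1 + p.2 ≤ n + 1

section General
variable {σ : Type*} [DecidableEq σ] {k : Type*} [Field k]

/-- Setting a list of variables to zero. -/
noncomputable def SZ (l : List σ) : MvPolynomial σ k →ₐ[k] MvPolynomial σ k :=
  aeval (fun i => if i ∈ l then 0 else X i)

lemma SZ_nil (g : MvPolynomial σ k) : SZ [] g = g := by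
  have : (SZ ([] : List σ) : MvPolynomial σ k →ₐ[k] MvPolynomial σ k) = AlgHom.id k _ := by
    apply algHom_ext; intro i; simp [SZ]
  rw [this]; rfl

lemma SZ_cons (j : σ) (l : List σ) (g : MvPolynomial σ k) :
    SZ (j :: l) g = SZ l (setZero j g) := by
  have : (SZ (j :: l) : MvPolynomial σ k →ₐ[k] MvPolynomial σ k)
      = (SZ l).comp (setZero j) := by
    apply algHom_ext; intro i
    simp only [SZ, setZero, AlgHom.comp_apply, aeval_X]
    by_cases h : i = j
    · by_cases h2 : i ∈ l <;> simp [h, h2]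
    · by_cases h2 : i ∈ l <;> simp [h, h2, aeval_X]
  rw [this]; rfl

lemma SZ_X_mem {z : σ} {l : List σ} (h : z ∈ l) : SZ l (X z) = (0 : MvPolynomial σ k) := by
  simp [SZ, aeval_X, h]

lemma SZ_X_not_mem {z : σ} {l : List σ} (h : z ∉ l) : SZ l (X z) = (X z : MvPolynomial σ k) := by
  simp [SZ, aeval_X, h]

lemma setZero_C (j : σ) (c : k) : setZero j (C c) = (C c : MvPolynomial σ k) := by
  simp [setZero, algHom_C]

lemma setZero_X_ne {j i : σ} (h : i ≠ j) : setZero j (X i) = (X i : MvPolynomial σ k) := by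
  simp [setZero, aeval_X, h]

lemma isRNC_C_mul {c : k} (hc : c ≠ 0) :
    ∀ (l : List σ) (w : MvPolynomial σ k), IsRNC w l → IsRNC (C c * w) l
  | [], w, ⟨e, he, hw⟩ => ⟨c * e, mul_ne_zero hc he, by rw [hw, map_mul]⟩
  | j :: l, w, ⟨h, hw, hrec⟩ => by
    refine ⟨C c * h, by rw [hw]; ring, ?_⟩
    rw [map_mul, setZero_C]
    exact isRNC_C_mul hc l _ hrec

lemma isRNC_prod {c : k} (hc : c ≠ 0) :
    ∀ (l : List σ), l.Nodup → IsRNC (C c * (l.map X).prod : MvPolynomial σ k) l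
  | [], _ => ⟨c, hc, by simp⟩
  | j :: l, hnd => by
    refine ⟨C c * (l.map X).prod, by simp [List.prod_cons]; ring, ?_⟩
    have hj : j ∉ l := (List.nodup_cons.mp hnd).1
    have : setZero j (C c * (l.map X).prod) = C c * (l.map X).prod := by
      rw [map_mul, setZero_C, map_list_prod]
      congr 1
      rw [List.map_map]
      congr 1
      apply List.map_congr_left
      intro i hi
      exact setZero_X_ne (fun h => hj (h ▸ hi))
    rw [this]
    exact isRNC_prod hc l (List.nodup_cons.mp hnd).2

lemma isRNC_mul :
    ∀ (l : List σ) (g : MvPolynomial σ k), IsRNC g l →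
      ∀ (l' : List σ) (w : MvPolynomial σ k), IsRNC (SZ l w) l' → IsRNC (g * w) (l ++ l')
  | [], g, ⟨c, hc, hg⟩, l', w, hw => by
    rw [SZ_nil] at hw
    rw [List.nil_append, hg]
    exact isRNC_C_mul hc l' w hw
  | j :: l, g, ⟨h, hg, hrec⟩, l', w, hw => by
    rw [SZ_cons] at hw
    refine ⟨h * w, by rw [hg]; ring, ?_⟩
    rw [map_mul]
    exact isRNC_mul l (setZero j h) hrec l' (setZero j w) hw

end General
open MvPolynomial

section Lists

lemma dEnt_mem (n d t : ℕ) (h3 : 3 ≤ d) (hd : d ≤ n + 1) (ht : t < d - 1 - d / 2) :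
    SubP n (d / 2 + 1 + t, d - (d / 2 + 1 + t)) := by
  refine ⟨by omega, by omega, by omega, by omega⟩

/-- The canonical sorted list of staircase variables on the antidiagonal `i+j = d`. -/
def diagList (n d : ℕ) (h : 3 ≤ d ∧ d ≤ n + 1) : List (Subtype (SubP n)) :=
  List.ofFn (fun p : Fin (d - 1 - d / 2) =>
    ⟨(d / 2 + 1 + (p : ℕ), d - (d / 2 + 1 + (p : ℕ))), dEnt_mem n d p h.1 h.2 p.2⟩)

lemma mem_diagList {n d : ℕ} (h : 3 ≤ d ∧ d ≤ n + 1) (z : Subtype (SubP n)) :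
    z ∈ diagList n d h ↔ z.val.1 + z.val.2 = d := by
  constructor
  · intro hz
    rw [diagList, List.mem_ofFn] at hz
    obtain ⟨p, hp⟩ := hz
    rw [← hp]
    simp only
    omega
  · intro hz
    rw [diagList, List.mem_ofFn]
    obtain ⟨⟨i, j⟩, hij⟩ := z
    obtain ⟨h1, h2, h3', h4⟩ := hij
    simp only at hz
    refine ⟨⟨i - (d / 2 + 1), by omega⟩, ?_⟩
    apply Subtype.ext
    have : d / 2 + 1 + (i - (d / 2 + 1)) = i := by omega
    rw [Prod.ext_iff]
    constructor <;> simp only <;> omega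

lemma sorted_diagList {n d : ℕ} (h : 3 ≤ d ∧ d ≤ n + 1) :
    (diagList n d h).Pairwise (fun p q => zord p.val q.val) := by
  rw [diagList, List.pairwise_ofFn]
  intro p q hpq
  right
  constructor <;> simp only <;> [skip; skip] <;>
    · have hp := p.2; have hq := q.2; have := Fin.lt_iff_val_lt_val.mp hpq; omega

lemma nodup_diagList {n d : ℕ} (h : 3 ≤ d ∧ d ≤ n + 1) : (diagList n d h).Nodup := by
  rw [diagList, List.nodup_ofFn]
  intro p q hpq
  have hp := p.2; have hq := q.2
  have : (d / 2 + 1 + (p : ℕ)) = (d / 2 + 1 + (q : ℕ)) := congrArg (fun z => z.val.1) hpq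
  exact Fin.ext (by omega)

/-- Decomposition of a sorted list along a downward-closed predicate. -/
lemma sorted_decomp {α : Type*} {r : α → α → Prop} (P : α → Prop) [DecidablePred P]
    (hP : ∀ a b, r a b → P b → P a) :
    ∀ (l : List α), l.Pairwise r → l = l.filter (fun a => decide (P a)) ++
      l.filter (fun a => !decide (P a))
  | [], _ => rfl
  | a :: t, hs => by
    have ht : t.Pairwise r := hs.of_cons
    have hat : ∀ b ∈ t, r a b := fun b hb => List.rel_of_pairwise_cons hs hb
    by_cases hPa : P a
    · have e1 : (a :: t).filter (fun a => decide (P a))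
          = a :: t.filter (fun a => decide (P a)) := by
        rw [List.filter_cons, if_pos (by simpa using hPa)]
      have e2 : (a :: t).filter (fun a => !decide (P a)) = t.filter (fun a => !decide (P a)) := by
        rw [List.filter_cons, if_neg (by simpa using hPa)]
      rw [e1, e2, List.cons_append]
      exact congrArg (a :: ·) (sorted_decomp P hP t ht)
    · have hall : ∀ b ∈ t, ¬ P b := fun b hb hPb => hPa (hP a b (hat b hb) hPb)
      have h1 : t.filter (fun a => decide (P a)) = [] := by
        rw [List.filter_eq_nil_iff]; intro b hb; simpa using hall b hb
      have h2 : (a :: t).filter (fun a => !decide (P a)) = a :: t := by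
        rw [List.filter_eq_self]; intro b hb
        rcases List.mem_cons.mp hb with h | h
        · simp [h, hPa]
        · simp [hall b h]
      rw [h2, List.filter_cons, if_neg (by simpa using hPa), h1, List.nil_append]

lemma zord_antisymm {n : ℕ} :
    ∀ (a b : Subtype (SubP n)), zord a.val b.val → zord b.val a.val → a = b := by
  intro a b hab hba
  exfalso
  rcases hab with h | ⟨h1, h2⟩ <;> rcases hba with h' | ⟨h1', h2'⟩ <;> omega

end Lists

lemma det_antiTriangular {R : Type*} [CommRing R] {P : ℕ} (N : Matrix (Fin P) (Fin P) R)
    (h : ∀ p q : Fin P, (p : ℕ) + (q : ℕ) < P - 1 → N p q = 0) :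
    ∃ ε : ℤˣ, N.det = ((ε : ℤ) : R) * ∏ p : Fin P, N p (Fin.rev p) := by
  refine ⟨Equiv.Perm.sign (Fin.revPerm : Equiv.Perm (Fin P)), ?_⟩
  have h2 : (N.submatrix id Fin.revPerm).det
      = Equiv.Perm.sign (Fin.revPerm : Equiv.Perm (Fin P)) * N.det :=
    Matrix.det_permute' _ N
  have h3 : (N.submatrix id Fin.revPerm).det = ∏ p : Fin P, N p (Fin.rev p) := by
    rw [Matrix.det_of_lowerTriangular]
    · rfl
    · intro i j hij
      have hij' : (i : ℕ) < (j : ℕ) := hij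
      apply h
      have := j.isLt
      simp only [id_eq, Fin.revPerm_apply, Fin.val_rev]
      omega
  have h4 : ∏ p : Fin P, N p (Fin.rev p)
      = ((Equiv.Perm.sign (Fin.revPerm : Equiv.Perm (Fin P)) : ℤ) : R) * N.det := by
    rw [← h3, h2]
  rw [h4, ← mul_assoc, ← Int.cast_mul]
  rcases Int.units_eq_one_or (Equiv.Perm.sign (Fin.revPerm : Equiv.Perm (Fin P))) with hu | hu <;>
    rw [hu] <;> simp


section Key
variable {k : Type*} [Field k] {n : ℕ}

lemma key_det (φ : MvPolynomial (ℕ × ℕ) k →ₐ[k] MvPolynomial (Subtype (SubP n)) k)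
    (hφ : ∀ (p : ℕ × ℕ) (hp : SubP n p), φ (X p) = X ⟨p, hp⟩)
    (s : ℕ) (hs2 : 2 ≤ s) (hsn : s ≤ n)
    (l₁ : List (Subtype (SubP n)))
    (hmem₁ : ∀ z : Subtype (SubP n), z ∈ l₁ ↔ z.val.1 + z.val.2 ≤ s)
    (h : 3 ≤ s + 1 ∧ s + 1 ≤ n + 1) :
    ∃ c : k, c ≠ 0 ∧
      SZ l₁ (φ (vminor k (fun p : Fin (s - s / 2) => s / 2 + 1 + (p : ℕ))))
        = C c * (((diagList n (s + 1) h).map X).prod) := by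
  set ψ : MvPolynomial (ℕ × ℕ) k →+* MvPolynomial (Subtype (SubP n)) k :=
    ((SZ l₁ : MvPolynomial (Subtype (SubP n)) k →ₐ[k] MvPolynomial (Subtype (SubP n)) k).toRingHom).comp φ.toRingHom with hψdef
  have hψapp : ∀ g, ψ g = SZ l₁ (φ g) := fun g => rfl
  set N : Matrix (Fin (s - s / 2)) (Fin (s - s / 2)) (MvPolynomial (Subtype (SubP n)) k) :=
    (Matrix.of fun p q : Fin (s - s / 2) =>
      Zent k (s / 2 + 1 + (p : ℕ)) ((q : ℕ) + 1)).map ψ with hN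
  have hdet : SZ l₁ (φ (vminor k (fun p : Fin (s - s / 2) => s / 2 + 1 + (p : ℕ)))) = N.det := by
    rw [vminor]
    show ψ (Matrix.of fun p q : Fin (s - s / 2) =>
      Zent k (s / 2 + 1 + (p : ℕ)) ((q : ℕ) + 1)).det = _
    rw [RingHom.map_det, RingHom.mapMatrix_apply]
  have hψ0 : ∀ i j : ℕ, 1 ≤ j → j < i → i + j ≤ s → ψ (X (i, j)) = 0 := by
    intro i j h1 h2 h3
    have hp : SubP n (i, j) := ⟨h1, h2, by omega, by omega⟩
    rw [hψapp, hφ _ hp, SZ_X_mem ((hmem₁ ⟨(i, j), hp⟩).mpr h3)]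
  have hψ1 : ∀ i j : ℕ, ∀ (h1 : 1 ≤ j) (h2 : j < i) (h3 : i + j = s + 1),
      ψ (X (i, j)) = X (⟨(i, j), ⟨h1, h2, by omega, by omega⟩⟩ : Subtype (SubP n)) := by
    intro i j h1 h2 h3
    have hp : SubP n (i, j) := ⟨h1, h2, by omega, by omega⟩
    rw [hψapp, hφ _ hp, SZ_X_not_mem (fun hc => by
      have h5 : i + j ≤ s := (hmem₁ ⟨(i, j), hp⟩).mp hc; omega)]
  have htri : ∀ p q : Fin (s - s / 2), (p : ℕ) + (q : ℕ) < (s - s / 2) - 1 → N p q = 0 := by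
    intro p q hpq
    have hp := p.isLt; have hq := q.isLt
    have hZ : Zent k (s / 2 + 1 + (p : ℕ)) ((q : ℕ) + 1)
        = X (s / 2 + 1 + (p : ℕ), (q : ℕ) + 1) := by
      rw [Zent, if_neg (by omega), if_pos (by omega)]
    show ψ (Zent k (s / 2 + 1 + (p : ℕ)) ((q : ℕ) + 1)) = 0
    rw [hZ]
    exact hψ0 _ _ (by omega) (by omega) (by omega)
  have hPmem : ∀ t : ℕ, t < s - s / 2 → s ≤ 2 * (s / 2) + 2 * t →
      SubP n (s / 2 + 1 + t, s - s / 2 - t) :=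
    fun t ht hpar => ⟨by omega, by omega, by omega, by omega⟩
  have hanti : ∀ (p : Fin (s - s / 2)) (hpar : s ≤ 2 * (s / 2) + 2 * (p : ℕ)),
      N p (Fin.rev p) = X (⟨_, hPmem p p.isLt hpar⟩ : Subtype (SubP n)) := by
    intro p hpar
    have hp := p.isLt
    have hj : ((Fin.rev p : Fin (s - s / 2)) : ℕ) + 1 = s - s / 2 - (p : ℕ) := by
      simp only [Fin.val_rev]; omega
    show ψ (Zent k (s / 2 + 1 + (p : ℕ)) (((Fin.rev p : Fin (s - s / 2)) : ℕ) + 1)) = _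
    rw [hj]
    have hZ : Zent k (s / 2 + 1 + (p : ℕ)) (s - s / 2 - (p : ℕ))
        = X (s / 2 + 1 + (p : ℕ), s - s / 2 - (p : ℕ)) := by
      rw [Zent, if_neg (by omega), if_pos (by omega)]
    rw [hZ, hψ1 _ _ (by omega) (by omega) (by omega)]
  have hone : ∀ p : Fin (s - s / 2), (p : ℕ) = 0 → s % 2 = 1 → N p (Fin.rev p) = 1 := by
    intro p hp0 hodd
    have hp := p.isLt
    have hj : ((Fin.rev p : Fin (s - s / 2)) : ℕ) + 1 = s / 2 + 1 + (p : ℕ) := by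
      simp only [Fin.val_rev]; omega
    show ψ (Zent k (s / 2 + 1 + (p : ℕ)) (((Fin.rev p : Fin (s - s / 2)) : ℕ) + 1)) = 1
    rw [hj, Zent, if_pos rfl]
    exact map_one ψ
  obtain ⟨ε, hNdet⟩ := det_antiTriangular N htri
  have hprod : (∏ p : Fin (s - s / 2), N p (Fin.rev p))
      = ((diagList n (s + 1) h).map X).prod := by
    rw [diagList, List.map_ofFn, List.prod_ofFn]
    rcases Nat.even_or_odd s with he | ho
    · have hmod : s % 2 = 0 := Nat.even_iff.mp he
      have hLP : (s + 1) - 1 - (s + 1) / 2 = s - s / 2 := by omega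
      rw [← Fin.prod_congr' (fun p : Fin (s - s / 2) => N p (Fin.rev p)) hLP]
      apply Finset.prod_congr rfl
      intro i _
      have hi := i.isLt
      rw [hanti _ (by simp only [Fin.coe_cast]; omega)]
      apply congrArg
      apply Subtype.ext
      apply Prod.ext <;> simp only [Fin.coe_cast, Function.comp_apply] <;> omega
    · have hmod : s % 2 = 1 := Nat.odd_iff.mp ho
      have hLP : ((s + 1) - 1 - (s + 1) / 2) + 1 = s - s / 2 := by omega
      rw [← Fin.prod_congr' (fun p : Fin (s - s / 2) => N p (Fin.rev p)) hLP,
        Fin.prod_univ_succ]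
      rw [hone _ (by simp) hmod, one_mul]
      apply Finset.prod_congr rfl
      intro i _
      have hi := i.isLt
      rw [hanti _ (by simp only [Fin.coe_cast, Fin.val_succ]; omega)]
      apply congrArg
      apply Subtype.ext
      apply Prod.ext <;>
        simp only [Fin.coe_cast, Fin.val_succ, Function.comp_apply] <;> omega
  refine ⟨((ε : ℤ) : k), ?_, ?_⟩
  · rcases Int.units_eq_one_or ε with hu | hu <;> simp [hu]
  · rw [hdet, hNdet, hprod,
      ← map_intCast (C : k →+* MvPolynomial (Subtype (SubP n)) k) (ε : ℤ)]

end Key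


theorem stmt13 (k : Type*) [Field k] (m : ℕ) (hm : 1 ≤ m)
    (φ : MvPolynomial (ℕ × ℕ) k →ₐ[k] MvPolynomial (Subtype (SubP (2 * m))) k)
    (hφ : ∀ (p : ℕ × ℕ) (hp : SubP (2 * m) p), φ (X p) = X ⟨p, hp⟩)
    (r : ℕ) (hr1 : 1 ≤ r) (hrn : r ≤ 2 * m)
    (l : List (Subtype (SubP (2 * m))))
    (hmem : ∀ p : Subtype (SubP (2 * m)), p ∈ l ↔ p.val.1 + p.val.2 ≤ r + 1)
    (hsort : l.Pairwise (fun p q => zord p.val q.val)) :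
    IsRNC (φ (fRNC k r)) l := by
  haveI : IsAntisymm (Subtype (SubP (2 * m))) (fun p q => zord p.val q.val) :=
    ⟨fun a b => zord_antisymm a b⟩
  revert hrn l
  induction r, hr1 using Nat.le_induction with
  | base =>
    intro hrn l hmem hsort
    have hl : l = [] := by
      rw [List.eq_nil_iff_forall_not_mem]
      intro z hz
      have h1 := (hmem z).mp hz
      have h2 := z.2
      omega
    subst hl
    have hf : fRNC k 1 = 1 := by
      rw [fRNC, Finset.Icc_self, Finset.prod_singleton]
      show (Matrix.of fun p q : Fin 1 =>
        Zent k (1 / 2 + 1 + (p : ℕ)) ((q : ℕ) + 1)).det = 1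
      rw [Matrix.det_fin_one, Matrix.of_apply]
      show Zent k 1 1 = 1
      rw [Zent, if_pos rfl]
    rw [hf, map_one]
    exact ⟨1, one_ne_zero, (map_one C).symm⟩
  | succ r hr IH =>
    intro hrn l hmem hsort
    have hdec := sorted_decomp (r := fun p q : Subtype (SubP (2 * m)) => zord p.val q.val)
      (fun z : Subtype (SubP (2 * m)) => z.val.1 + z.val.2 ≤ r + 1)
      (fun a b hab hPb => by
        simp only [zord] at hab
        rcases hab with h | ⟨h1, h2⟩ <;> omega) l hsort
    set l₁ := l.filter (fun z => decide (z.val.1 + z.val.2 ≤ r + 1)) with hl₁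
    set l₂ := l.filter (fun z => !decide (z.val.1 + z.val.2 ≤ r + 1)) with hl₂
    have hmem₁ : ∀ z : Subtype (SubP (2 * m)), z ∈ l₁ ↔ z.val.1 + z.val.2 ≤ r + 1 := by
      intro z
      rw [hl₁, List.mem_filter]
      constructor
      · rintro ⟨_, h2⟩; exact of_decide_eq_true h2
      · intro hz; exact ⟨(hmem z).mpr (by omega), decide_eq_true hz⟩
    have hsort₁ : l₁.Pairwise (fun p q => zord p.val q.val) := hsort.filter _
    have hsort₂ : l₂.Pairwise (fun p q => zord p.val q.val) := hsort.filter _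
    have h32 : 3 ≤ r + 2 ∧ r + 2 ≤ 2 * m + 1 := ⟨by omega, by omega⟩
    have hmem₂ : ∀ z : Subtype (SubP (2 * m)), z ∈ l₂ ↔ z.val.1 + z.val.2 = r + 2 := by
      intro z
      rw [hl₂, List.mem_filter]
      constructor
      · rintro ⟨h1, h2⟩
        have h3 := (hmem z).mp h1
        have h4 : ¬ (z.val.1 + z.val.2 ≤ r + 1) := by simpa using h2
        omega
      · intro hz
        exact ⟨(hmem z).mpr (by omega), by simp; omega⟩
    have hnd₂ : l₂.Nodup := by
      apply List.Pairwise.imp ?_ hsort₂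
      intro a b hab heq
      subst heq
      simp only [zord] at hab
      omega
    have hl2eq : l₂ = diagList (2 * m) (r + 2) h32 := by
      apply List.Perm.eq_of_pairwise' hsort₂ (sorted_diagList h32) ?_
      rw [List.perm_ext_iff_of_nodup hnd₂ (nodup_diagList h32)]
      intro z
      rw [hmem₂, mem_diagList]
    have hfs : fRNC k (r + 1) = fRNC k r *
        vminor k (fun p : Fin ((r + 1) - (r + 1) / 2) => (r + 1) / 2 + 1 + (p : ℕ)) := by
      rw [fRNC, fRNC, Finset.prod_Icc_succ_top (by omega : 1 ≤ r + 1)]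
    rw [hfs, map_mul, hdec]
    apply isRNC_mul l₁ _ (IH (by omega) l₁ hmem₁ hsort₁) l₂
    obtain ⟨c, hc, hkey⟩ := key_det φ hφ (r + 1) (by omega) (by omega) l₁ hmem₁
      ⟨by omega, by omega⟩
    rw [hkey]
    have hdl : diagList (2 * m) (r + 1 + 1) ⟨by omega, by omega⟩
        = diagList (2 * m) (r + 2) h32 := rfl
    rw [hdl, hl2eq]
    exact isRNC_prod hc (diagList (2 * m) (r + 2) h32) (nodup_diagList h32)
end
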